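/- arXiv:1709.00779 — 9 statements merged into one kernel-verified Lean document; each statement's English description precedes it below -/
import Mathlib

section
/- Let α_L > 0, α_N > 2, and C_L, C_N, R_c, W, Γ, P, λ > 0, and let M be a positive integer. Define the dual-slope path loss function l(r) = C_L r^{α_L} for 0 ≤ r < R_c and l(r) = C_N r^{α_N} for r ≥ R_c. Then the series ∑_{j=0}^{∞} ( ∫_0^∞ (1 − exp(−WΓ l(r)/(PM)))^j · (2λπ r/M) · exp(−λπ r²/M) dr )^M diverges, i.e., its value in [0,∞] is +∞. -/
open MeasureTheory
open scoped ENNReal Real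

set_option maxHeartbeats 1000000 in
/-- Theorem 3: in the noise-limited network with dual-slope path loss and NLOS exponent
`αN > 2`, the series giving the mean number of IA cycles to succeed in cell search diverges,
for every finite number of beams `M` and BS intensity `lam`. -/
theorem stmt3 (αL αN CL CN Rc W gam P lam : ℝ) (M : ℕ)
    (hαL : 0 < αL) (hαN : 2 < αN) (hCL : 0 < CL) (hCN : 0 < CN) (hRc : 0 < Rc)
    (hW : 0 < W) (hgam : 0 < gam) (hP : 0 < P) (hlam : 0 < lam) (hM : 0 < M)
    (l : ℝ → ℝ)
    (hl1 : ∀ r, 0 ≤ r → r < Rc → l r = CL * r ^ αL)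
    (hl2 : ∀ r, Rc ≤ r → l r = CN * r ^ αN) :
    ∑' j : ℕ,
      (∫⁻ r in Set.Ioi (0:ℝ),
        ENNReal.ofReal ((1 - Real.exp (-(W * gam * l r / (P * M)))) ^ j *
          (2 * lam * π * r / M) * Real.exp (-(lam * π * r ^ 2 / M)))) ^ M = ⊤ := by
  have hMR : (0:ℝ) < M := Nat.cast_pos.mpr hM
  have hαN0 : (0:ℝ) < αN := by linarith
  have hπ : (0:ℝ) < π := Real.pi_pos
  set I : ℕ → ℝ≥0∞ := fun j =>
    ∫⁻ r in Set.Ioi (0:ℝ),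
        ENNReal.ofReal ((1 - Real.exp (-(W * gam * l r / (P * M)))) ^ j *
          (2 * lam * π * r / M) * Real.exp (-(lam * π * r ^ 2 / M))) with hI_def
  set D : ℝ := W * gam * CN / (P * M) with hD_def
  have hD : 0 < D := by positivity
  set β : ℝ := 2 / αN with hβ_def
  have hβ0 : 0 < β := by positivity
  have hβ1 : β < 1 := by rw [hβ_def, div_lt_one hαN0]; linarith
  set v : ℕ → ℝ := fun j => (Real.log (2 * j) / D) ^ (1/αN : ℝ) with hv_def
  have hv0 : ∀ j : ℕ, 1 ≤ j → 0 ≤ v j := by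
    intro j hj
    apply Real.rpow_nonneg
    apply div_nonneg _ hD.le
    apply Real.log_nonneg
    have : (1:ℝ) ≤ (j:ℝ) := by exact_mod_cast hj
    linarith
  set a : ℕ → ℝ := fun j => max Rc (v j) with ha_def
  have haRc : ∀ j, Rc ≤ a j := fun j => le_max_left _ _
  have ha0 : ∀ j, 0 < a j := fun j => lt_of_lt_of_le hRc (haRc j)
  set q : ℕ → ℝ := fun j => lam * π * (a j + 1) ^ 2 with hq_def
  have hq0 : ∀ j, 0 < q j := by
    intro j; have := ha0 j; positivity
  set b : ℕ → ℝ := fun j => lam * π * a j / M * Real.exp (-(q j / M)) with hb_def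
  have hb0 : ∀ j, 0 < b j := by
    intro j; have := ha0 j; positivity
  set K : ℝ := (lam * π * Rc / M) ^ M with hK_def
  have hK : 0 < K := by positivity
  -- Step 1: pointwise bound on the integrand
  have step1 : ∀ j : ℕ, 1 ≤ j → ∀ r ∈ Set.Ioo (a j) (a j + 1),
      b j ≤ (1 - Real.exp (-(W * gam * l r / (P * M)))) ^ j *
          (2 * lam * π * r / M) * Real.exp (-(lam * π * r ^ 2 / M)) := by
    intro j hj r hr
    obtain ⟨hr1, hr2⟩ := hr
    have hrRc : Rc ≤ r := le_trans (haRc j) hr1.le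
    have hr0 : 0 < r := lt_of_lt_of_le hRc hrRc
    have hjR : (1:ℝ) ≤ (j:ℝ) := by exact_mod_cast hj
    have h2j : (0:ℝ) < 2 * j := by linarith
    have hlr : l r = CN * r ^ (αN:ℝ) := hl2 r hrRc
    have harg : W * gam * l r / (P * M) = D * r ^ (αN:ℝ) := by
      rw [hlr, hD_def]; field_simp
    -- log (2j) ≤ D * r ^ αN
    have hlog : Real.log (2 * j) ≤ D * r ^ (αN:ℝ) := by
      have hbase : 0 ≤ Real.log (2 * j) / D := by
        apply div_nonneg _ hD.le
        apply Real.log_nonneg; linarith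
      have h1 : (Real.log (2 * j) / D) = (v j) ^ (αN:ℝ) := by
        rw [hv_def, ← Real.rpow_mul hbase, one_div_mul_cancel (ne_of_gt hαN0),
          Real.rpow_one]
      have h2 : v j ≤ r := le_trans (le_max_right Rc (v j)) hr1.le
      have h3 : (v j) ^ (αN:ℝ) ≤ r ^ (αN:ℝ) :=
        Real.rpow_le_rpow (Real.rpow_nonneg hbase _) h2 hαN0.le
      calc Real.log (2 * j) = D * (Real.log (2 * j) / D) := by field_simp
        _ ≤ D * r ^ (αN:ℝ) := by
            rw [h1]; exact mul_le_mul_of_nonneg_left h3 hD.le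
    have hexp : Real.exp (-(W * gam * l r / (P * M))) ≤ 1 / (2 * j) := by
      rw [harg]
      calc Real.exp (-(D * r ^ (αN:ℝ))) ≤ Real.exp (-Real.log (2 * j)) := by
            apply Real.exp_le_exp.2; linarith
        _ = 1 / (2 * j) := by
            rw [Real.exp_neg, Real.exp_log h2j, one_div]
    have h2jhalf : (1:ℝ) / (2 * j) ≤ 1 / 2 :=
      one_div_le_one_div_of_le two_pos (by linarith)
    have hXnn : 0 ≤ 1 - Real.exp (-(W * gam * l r / (P * M))) := by linarith
    have hhalf : (1/2 : ℝ) ≤ (1 - Real.exp (-(W * gam * l r / (P * M)))) ^ j := by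
      have hb1 : (1/2 : ℝ) = 1 + (j:ℝ) * (-(1/(2*j))) := by field_simp; ring
      have hb2 : (1:ℝ) + (j:ℝ) * (-(1/(2*j))) ≤ (1 + (-(1/(2*j)))) ^ j := by
        apply one_add_mul_le_pow
        linarith
      have hb3 : ((1:ℝ) + (-(1/(2*j)))) ^ j ≤
          (1 - Real.exp (-(W * gam * l r / (P * M)))) ^ j := by
        apply pow_le_pow_left₀ (by linarith) (by linarith)
      calc (1/2 : ℝ) = 1 + (j:ℝ) * (-(1/(2*j))) := hb1
        _ ≤ (1 + (-(1/(2*j)))) ^ j := hb2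
        _ ≤ _ := hb3
    have hdens : 2 * lam * π * a j / M ≤ 2 * lam * π * r / M := by
      have := ha0 j
      gcongr
    have hexp2 : Real.exp (-(q j / M)) ≤ Real.exp (-(lam * π * r ^ 2 / M)) := by
      apply Real.exp_le_exp.2
      have hsq : r ^ 2 ≤ (a j + 1) ^ 2 := by
        apply pow_le_pow_left₀ hr0.le hr2.le
      rw [hq_def]
      have h' : lam * π * r ^ 2 ≤ lam * π * (a j + 1) ^ 2 :=
        mul_le_mul_of_nonneg_left hsq (by positivity)
      have := ha0 j
      apply neg_le_neg
      exact div_le_div_of_nonneg_right h' hMR.le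
    have hbj : b j = (1/2) * (2 * lam * π * a j / M) * Real.exp (-(q j / M)) := by
      rw [hb_def]; ring
    rw [hbj]
    have h1 : (1/2 : ℝ) * (2 * lam * π * a j / M) ≤
        (1 - Real.exp (-(W * gam * l r / (P * M)))) ^ j * (2 * lam * π * r / M) := by
      exact mul_le_mul hhalf hdens (by have := ha0 j; positivity) (pow_nonneg hXnn j)
    apply mul_le_mul h1 hexp2 (Real.exp_pos _).le
    have := ha0 j
    positivity
  -- Step 2: lower bound the integral
  have step2 : ∀ j : ℕ, 1 ≤ j → ENNReal.ofReal (b j) ≤ I j := by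
    intro j hj
    have hsub : Set.Ioo (a j) (a j + 1) ⊆ Set.Ioi (0:ℝ) := by
      intro x hx
      exact lt_trans (ha0 j) hx.1
    calc ENNReal.ofReal (b j)
        = ENNReal.ofReal (b j) * volume (Set.Ioo (a j) (a j + 1)) := by
          rw [Real.volume_Ioo]
          norm_num
      _ = ∫⁻ _ in Set.Ioo (a j) (a j + 1), ENNReal.ofReal (b j) :=
          (setLIntegral_const _ _).symm
      _ ≤ ∫⁻ r in Set.Ioo (a j) (a j + 1),
            ENNReal.ofReal ((1 - Real.exp (-(W * gam * l r / (P * M)))) ^ j *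
              (2 * lam * π * r / M) * Real.exp (-(lam * π * r ^ 2 / M))) := by
          apply setLIntegral_mono' measurableSet_Ioo
          intro r hr
          exact ENNReal.ofReal_le_ofReal (step1 j hj r hr)
      _ ≤ I j := lintegral_mono_set hsub
  -- Step 3: lower bound the M-th power
  have step3 : ∀ j : ℕ, 1 ≤ j →
      ENNReal.ofReal (K * Real.exp (-(q j))) ≤ I j ^ M := by
    intro j hj
    have hbpow : K * Real.exp (-(q j)) ≤ b j ^ M := by
      have h1 : b j ^ M = (lam * π * a j / M) ^ M * Real.exp (-(q j / M)) ^ M := by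
        rw [hb_def]; rw [mul_pow]
      have h2 : Real.exp (-(q j / M)) ^ M = Real.exp (-(q j)) := by
        rw [← Real.exp_nat_mul]
        congr 1
        field_simp
      have h3 : K ≤ (lam * π * a j / M) ^ M := by
        rw [hK_def]
        apply pow_le_pow_left₀ (by positivity)
        gcongr
        exact haRc j
      rw [h1, h2]
      exact mul_le_mul_of_nonneg_right h3 (Real.exp_pos _).le
    calc ENNReal.ofReal (K * Real.exp (-(q j)))
        ≤ ENNReal.ofReal (b j ^ M) := ENNReal.ofReal_le_ofReal hbpow
      _ = ENNReal.ofReal (b j) ^ M := ENNReal.ofReal_pow (hb0 j).le M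
      _ ≤ I j ^ M := by gcongr; exact step2 j hj
  -- Step 4: eventually K * exp (-(q j)) ≥ 1 / j
  have step4 : ∀ᶠ j : ℕ in Filter.atTop, (1:ℝ) / j ≤ K * Real.exp (-(q j)) := by
    set E : ℝ := Rc + 1 with hE_def
    set A : ℝ := 2 * lam * π * E ^ 2 - Real.log K with hA_def
    set B : ℝ := 4 * lam * π / D ^ β with hB_def
    have hB : 0 < B := by positivity
    -- eventually in ℝ : A + B * t ^ β ≤ t
    have hreal : ∀ᶠ t : ℝ in Filter.atTop, A + B * t ^ β ≤ t := by
      have h1 : Filter.Tendsto (fun t : ℝ => A / t) Filter.atTop (nhds 0) :=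
        tendsto_const_nhds.div_atTop Filter.tendsto_id
      have h2 : Filter.Tendsto (fun t : ℝ => B * t ^ (-(1 - β))) Filter.atTop (nhds 0) := by
        have := (tendsto_rpow_neg_atTop (by linarith : (0:ℝ) < 1 - β)).const_mul B
        simpa using this
      have h3 : Filter.Tendsto (fun t : ℝ => A / t + B * t ^ (-(1 - β)))
          Filter.atTop (nhds 0) := by simpa using h1.add h2
      filter_upwards [h3.eventually_lt_const one_pos, Filter.eventually_gt_atTop (0:ℝ)]
        with t ht ht0
      have ht' : t ^ β = t * t ^ (-(1 - β)) := by
        rw [show t * t ^ (-(1 - β)) = t ^ (1:ℝ) * t ^ (-(1 - β)) by rw [Real.rpow_one],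
          ← Real.rpow_add ht0]
        congr 1
        ring
      have key : A + B * t ^ β = t * (A / t + B * t ^ (-(1 - β))) := by
        rw [ht', mul_add]
        congr 1
        · field_simp
        · ring
      rw [key]
      calc t * (A / t + B * t ^ (-(1 - β))) ≤ t * 1 :=
            mul_le_mul_of_nonneg_left ht.le ht0.le
        _ = t := mul_one t
    have hlogt : Filter.Tendsto (fun j : ℕ => Real.log j) Filter.atTop Filter.atTop :=
      Real.tendsto_log_atTop.comp tendsto_natCast_atTop_atTop
    filter_upwards [hlogt.eventually hreal, Filter.eventually_ge_atTop 2] with j hA2 hj2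
    have hj1 : 1 ≤ j := le_trans one_le_two hj2
    have hjR : (2:ℝ) ≤ (j:ℝ) := by exact_mod_cast hj2
    have hj0 : (0:ℝ) < j := by linarith
    -- q j - log K ≤ A + B * (log j) ^ β
    have hqbound : q j - Real.log K ≤ A + B * (Real.log j) ^ β := by
      have hlognn : 0 ≤ Real.log (2 * j) / D := by
        apply div_nonneg _ hD.le
        apply Real.log_nonneg; linarith
      have hvsq : (v j) ^ (2:ℕ) = (Real.log (2 * j) / D) ^ β := by
        rw [hv_def, ← Real.rpow_natCast ((Real.log (2 * j) / D) ^ (1/αN : ℝ)) 2,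
          ← Real.rpow_mul hlognn]
        congr 1
        rw [hβ_def]
        push_cast
        field_simp
      have haj : a j ≤ Rc + v j := by
        apply max_le
        · have := hv0 j hj1; linarith
        · have := hRc; linarith
      have hsq : (a j + 1) ^ 2 ≤ 2 * E ^ 2 + 2 * (v j) ^ 2 := by
        have h1 : a j + 1 ≤ E + v j := by rw [hE_def]; linarith
        have h2 : (a j + 1) ^ 2 ≤ (E + v j) ^ 2 := by
          apply pow_le_pow_left₀ (by have := ha0 j; linarith) h1
        nlinarith [sq_nonneg (E - v j)]
      have hvv : (v j) ^ (2:ℕ) ≤ 2 * (Real.log j) ^ β / D ^ β := by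
        rw [hvsq]
        have hlog2j : Real.log (2 * j) ≤ 2 * Real.log j := by
          rw [Real.log_mul (by norm_num) (by positivity)]
          have : Real.log 2 ≤ Real.log j := Real.log_le_log (by norm_num) hjR
          linarith
        have hlogjnn : 0 ≤ Real.log j := Real.log_nonneg (by linarith)
        have h1 : (Real.log (2 * j) / D) ^ β ≤ (2 * Real.log j / D) ^ β := by
          apply Real.rpow_le_rpow hlognn _ hβ0.le
          gcongr
        have h2 : (2 * Real.log j / D) ^ β = (2:ℝ) ^ β * (Real.log j) ^ β / D ^ β := by
          rw [Real.div_rpow (by positivity) hD.le, Real.mul_rpow (by norm_num) hlogjnn]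
        have h3 : (2:ℝ) ^ β ≤ 2 := by
          calc (2:ℝ) ^ β ≤ (2:ℝ) ^ (1:ℝ) :=
                Real.rpow_le_rpow_of_exponent_le one_le_two hβ1.le
            _ = 2 := Real.rpow_one 2
        calc (Real.log (2 * j) / D) ^ β ≤ (2:ℝ) ^ β * (Real.log j) ^ β / D ^ β := by
              rw [← h2]; exact h1
          _ ≤ 2 * (Real.log j) ^ β / D ^ β := by
              gcongr
      have : q j ≤ 2 * lam * π * E ^ 2 + B * (Real.log j) ^ β := by
        rw [hq_def, hB_def]
        calc lam * π * (a j + 1) ^ 2 ≤ lam * π * (2 * E ^ 2 + 2 * (v j) ^ 2) := by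
              apply mul_le_mul_of_nonneg_left hsq (by positivity)
          _ ≤ lam * π * (2 * E ^ 2 + 2 * (2 * (Real.log j) ^ β / D ^ β)) := by
              apply mul_le_mul_of_nonneg_left _ (by positivity)
              have := hvv
              push_cast at this ⊢
              linarith
          _ = 2 * lam * π * E ^ 2 + 4 * lam * π / D ^ β * (Real.log j) ^ β := by
              field_simp
              ring
      rw [hA_def]
      linarith
    -- conclude
    have hfin : q j - Real.log K ≤ Real.log j := le_trans hqbound hA2
    have h1 : (1:ℝ) / j = Real.exp (-Real.log j) := by
      rw [Real.exp_neg, Real.exp_log hj0, one_div]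
    have h2 : K * Real.exp (-(q j)) = Real.exp (Real.log K - q j) := by
      rw [Real.exp_sub, Real.exp_log hK]
      rw [Real.exp_neg]
      field_simp
    rw [h1, h2]
    apply Real.exp_le_exp.2
    linarith
  -- Step 5: conclude divergence
  obtain ⟨N₀, hN₀⟩ := Filter.eventually_atTop.1 step4
  set N : ℕ := max N₀ 1 with hN_def
  have hfull : ∀ j : ℕ, N ≤ j → ENNReal.ofReal (1 / (j:ℝ)) ≤ I j ^ M := by
    intro j hj
    have hj1 : 1 ≤ j := le_trans (le_max_right N₀ 1) hj
    have hjN₀ : N₀ ≤ j := le_trans (le_max_left N₀ 1) hj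
    exact le_trans (ENNReal.ofReal_le_ofReal (hN₀ j hjN₀)) (step3 j hj1)
  have htop : ∑' i : ℕ, ENNReal.ofReal (1 / ((i + N : ℕ):ℝ)) = ⊤ := by
    by_contra h
    have hs : Summable fun i : ℕ => (ENNReal.ofReal (1 / ((i + N : ℕ):ℝ))).toReal :=
      ENNReal.summable_toReal h
    have hs2 : Summable fun i : ℕ => 1 / ((i + N : ℕ):ℝ) := by
      apply hs.congr
      intro i
      rw [ENNReal.toReal_ofReal (by positivity)]
    exact Real.not_summable_one_div_natCast ((summable_nat_add_iff N).1 hs2)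
  refine top_unique ?_
  calc (⊤:ℝ≥0∞) = ∑' i : ℕ, ENNReal.ofReal (1 / ((i + N : ℕ):ℝ)) := htop.symm
    _ ≤ ∑' i : ℕ, I (i + N) ^ M :=
        ENNReal.tsum_le_tsum fun i => hfull (i + N) (Nat.le_add_left N i)
    _ ≤ ∑' j : ℕ, I j ^ M :=
        ENNReal.summable.tsum_le_tsum_of_inj (· + N) (add_left_injective N) (fun _ _ => zero_le)
          (fun i => le_rfl) ENNReal.summable
end

section
/- Let l : [0,∞) → [0,∞) be a nondecreasing measurable function, let W, Γ, P > 0, and let M be a positive integer. For λ > 0 define S(λ) = ∑_{j=0}^{∞} ( ∫_0^∞ (1 − exp(−WΓ l(r)/(PM)))^j · (2λπ r/M) · exp(−λπ r²/M) dr )^M, valued in [0,∞]. Then S is nonincreasing in λ: for all 0 < λ₁ ≤ λ₂ one has S(λ₂) ≤ S(λ₁). -/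
open MeasureTheory
open scoped ENNReal Real

/-- Change of variables `r = c * s` on `(0, ∞)` for the Lebesgue integral. -/
lemma lintegral_Ioi_comp_mul_left (c : ℝ) (hc : 0 < c) (h : ℝ → ℝ≥0∞)
    (hm : Measurable h) :
    ∫⁻ s in Set.Ioi (0:ℝ), h (c * s) = ENNReal.ofReal c⁻¹ * ∫⁻ r in Set.Ioi (0:ℝ), h r := by
  have hg : Measurable (fun s : ℝ => c * s) := measurable_const_mul c
  have hpre : (fun s : ℝ => c * s) ⁻¹' Set.Ioi 0 = Set.Ioi 0 := by
    ext x
    simp only [Set.mem_preimage, Set.mem_Ioi]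
    constructor
    · intro hx
      nlinarith
    · intro hx
      exact mul_pos hc hx
  have hmap : Measure.map (fun s : ℝ => c * s) (volume.restrict (Set.Ioi 0))
      = ENNReal.ofReal c⁻¹ • volume.restrict (Set.Ioi 0) := by
    have := Measure.restrict_map hg (measurableSet_Ioi (a := (0:ℝ)))
      (μ := (volume : Measure ℝ))
    rw [hpre] at this
    rw [← this, Real.map_volume_mul_left hc.ne', Measure.restrict_smul,
      abs_of_pos (inv_pos.mpr hc)]
  calc ∫⁻ s in Set.Ioi (0:ℝ), h (c * s)
      = ∫⁻ x, h x ∂(Measure.map (fun s : ℝ => c * s) (volume.restrict (Set.Ioi 0))) :=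
        (lintegral_map hm hg).symm
    _ = ENNReal.ofReal c⁻¹ * ∫⁻ r in Set.Ioi (0:ℝ), h r := by
        rw [hmap, lintegral_smul_measure, smul_eq_mul]

/-- Network densification helps: for a nondecreasing nonnegative measurable path loss
function `l`, the series `S(λ)` giving the mean number of IA cycles in the noise-limited
network is nonincreasing in the BS intensity `λ`. -/
theorem stmt4 (W gam P : ℝ) (M : ℕ)
    (hW : 0 < W) (hgam : 0 < gam) (hP : 0 < P) (hM : 0 < M)
    (l : ℝ → ℝ) (hlmeas : Measurable l) (hlmono : MonotoneOn l (Set.Ici (0:ℝ)))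
    (hlnonneg : ∀ r, 0 ≤ r → 0 ≤ l r)
    (lam₁ lam₂ : ℝ) (hlam₁ : 0 < lam₁) (hlam₁₂ : lam₁ ≤ lam₂) :
    ∑' j : ℕ,
      (∫⁻ r in Set.Ioi (0:ℝ),
        ENNReal.ofReal ((1 - Real.exp (-(W * gam * l r / (P * M)))) ^ j *
          (2 * lam₂ * π * r / M) * Real.exp (-(lam₂ * π * r ^ 2 / M)))) ^ M
    ≤ ∑' j : ℕ,
      (∫⁻ r in Set.Ioi (0:ℝ),
        ENNReal.ofReal ((1 - Real.exp (-(W * gam * l r / (P * M)))) ^ j *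
          (2 * lam₁ * π * r / M) * Real.exp (-(lam₁ * π * r ^ 2 / M)))) ^ M := by
  have hlam₂ : 0 < lam₂ := lt_of_lt_of_le hlam₁ hlam₁₂
  have hMR : (0:ℝ) < M := Nat.cast_pos.mpr hM
  set c : ℝ := Real.sqrt (lam₁ / lam₂) with hcdef
  have hc : 0 < c := Real.sqrt_pos.mpr (div_pos hlam₁ hlam₂)
  have hc1 : c ≤ 1 := by
    rw [hcdef, show (1:ℝ) = Real.sqrt 1 by simp]
    exact Real.sqrt_le_sqrt (by rw [div_le_one hlam₂]; exact hlam₁₂)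
  have hcsq : lam₂ * c ^ 2 = lam₁ := by
    rw [hcdef, Real.sq_sqrt (le_of_lt (div_pos hlam₁ hlam₂))]
    field_simp
  refine ENNReal.tsum_le_tsum fun j => ?_
  refine pow_le_pow_left' ?_ M
  -- per-term integral monotonicity
  set f : ℝ → ℝ := fun r => 1 - Real.exp (-(W * gam * l r / (P * M))) with hfdef
  have hfm : Measurable f := by
    apply measurable_const.sub
    exact Real.measurable_exp.comp (((measurable_const.mul hlmeas).div_const _).neg)
  have hfnonneg : ∀ r, 0 ≤ r → 0 ≤ f r := by
    intro r hr
    have h0 : 0 ≤ W * gam * l r / (P * M) :=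
      div_nonneg (mul_nonneg (mul_nonneg hW.le hgam.le) (hlnonneg r hr))
        (mul_nonneg hP.le hMR.le)
    have : Real.exp (-(W * gam * l r / (P * M))) ≤ 1 :=
      Real.exp_le_one_iff.mpr (by linarith)
    simp only [hfdef]; linarith
  have hfmono : ∀ r s, 0 ≤ r → r ≤ s → f r ≤ f s := by
    intro r s hr hrs
    have hls : l r ≤ l s := hlmono hr (le_trans hr hrs) hrs
    have : W * gam * l r / (P * M) ≤ W * gam * l s / (P * M) := by
      have hnum : W * gam * l r ≤ W * gam * l s := mul_le_mul_of_nonneg_left hls (by positivity)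
      exact div_le_div_of_nonneg_right hnum (mul_nonneg hP.le hMR.le)
    simp only [hfdef]
    have := Real.exp_le_exp.mpr (neg_le_neg this)
    linarith
  set h₂ : ℝ → ℝ≥0∞ := fun r =>
    ENNReal.ofReal (f r ^ j * (2 * lam₂ * π * r / M) * Real.exp (-(lam₂ * π * r ^ 2 / M)))
    with hh₂def
  have hh₂m : Measurable h₂ := by
    apply ENNReal.measurable_ofReal.comp
    apply Measurable.mul
    · exact (hfm.pow_const j).mul ((measurable_const.mul measurable_id').div_const _)
    · exact Real.measurable_exp.comp
        ((((measurable_const.mul (measurable_id'.pow_const 2))).div_const _).neg)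
  have key :
      (∫⁻ r in Set.Ioi (0:ℝ), h₂ r)
        ≤ ∫⁻ r in Set.Ioi (0:ℝ),
            ENNReal.ofReal (f r ^ j * (2 * lam₁ * π * r / M) *
              Real.exp (-(lam₁ * π * r ^ 2 / M))) := by
    have cov := lintegral_Ioi_comp_mul_left c hc h₂ hh₂m
    have hI : (∫⁻ r in Set.Ioi (0:ℝ), h₂ r)
        = ∫⁻ s in Set.Ioi (0:ℝ), ENNReal.ofReal c * h₂ (c * s) := by
      rw [lintegral_const_mul' _ _ ENNReal.ofReal_ne_top, cov, ← mul_assoc,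
        ← ENNReal.ofReal_mul hc.le, mul_inv_cancel₀ hc.ne', ENNReal.ofReal_one, one_mul]
    rw [hI]
    refine lintegral_mono_ae ?_
    filter_upwards [ae_restrict_mem measurableSet_Ioi] with s hs
    have hs0 : 0 < s := hs
    have hcs : 0 < c * s := mul_pos hc hs0
    have heq : c * (f (c * s) ^ j * (2 * lam₂ * π * (c * s) / M) *
        Real.exp (-(lam₂ * π * (c * s) ^ 2 / M)))
        = f (c * s) ^ j * (2 * lam₁ * π * s / M) * Real.exp (-(lam₁ * π * s ^ 2 / M)) := by
      have h1 : lam₂ * π * (c * s) ^ 2 / M = lam₁ * π * s ^ 2 / M := by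
        rw [mul_pow]; rw [← hcsq]; ring
      rw [h1]; rw [← hcsq]; ring
    calc ENNReal.ofReal c * h₂ (c * s)
        = ENNReal.ofReal (c * (f (c * s) ^ j * (2 * lam₂ * π * (c * s) / M) *
            Real.exp (-(lam₂ * π * (c * s) ^ 2 / M)))) := by
          rw [hh₂def, ← ENNReal.ofReal_mul hc.le]
      _ = ENNReal.ofReal (f (c * s) ^ j * (2 * lam₁ * π * s / M) *
            Real.exp (-(lam₁ * π * s ^ 2 / M))) := by rw [heq]
      _ ≤ ENNReal.ofReal (f s ^ j * (2 * lam₁ * π * s / M) *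
            Real.exp (-(lam₁ * π * s ^ 2 / M))) := by
          apply ENNReal.ofReal_le_ofReal
          have hfle : f (c * s) ^ j ≤ f s ^ j := by
            apply pow_le_pow_left₀ (hfnonneg _ hcs.le)
            exact hfmono _ _ hcs.le (by nlinarith)
          have hpos : 0 ≤ 2 * lam₁ * π * s / M * Real.exp (-(lam₁ * π * s ^ 2 / M)) := by
            apply mul_nonneg _ (Real.exp_nonneg _)
            positivity
          calc f (c * s) ^ j * (2 * lam₁ * π * s / M) * Real.exp (-(lam₁ * π * s ^ 2 / M))
              = f (c * s) ^ j * (2 * lam₁ * π * s / M * Real.exp (-(lam₁ * π * s ^ 2 / M))) := by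
                ring
            _ ≤ f s ^ j * (2 * lam₁ * π * s / M * Real.exp (-(lam₁ * π * s ^ 2 / M))) :=
                mul_le_mul_of_nonneg_right hfle hpos
            _ = f s ^ j * (2 * lam₁ * π * s / M) * Real.exp (-(lam₁ * π * s ^ 2 / M)) := by
                ring
  exact key
end

section
/- Let α_L > 0 and α_N = 2, let C_L, C_N, R_c, W, Γ, P, λ > 0, and let M be a positive integer, and define l(r) = C_L r^{α_L} for 0 ≤ r < R_c and l(r) = C_N r^{α_N} for r ≥ R_c. If λM < Γ C_N W/(Pπ), then the series ∑_{j=0}^{∞} ( ∫_0^∞ (1 − exp(−WΓ l(r)/(PM)))^j · (2λπ r/M) · exp(−λπ r²/M) dr )^M diverges, i.e., its value in [0,∞] is +∞. -/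
open MeasureTheory
open scoped ENNReal Real

lemma gauss_tail (b c : ℝ) (hb : 0 < b) (hc : 0 ≤ c) :
    ∫⁻ r in Set.Ioi c, ENNReal.ofReal (2 * b * r * Real.exp (-(b * r ^ 2))) =
      ENNReal.ofReal (Real.exp (-(b * c ^ 2))) := by
  set G : ℝ → ℝ := fun r => -Real.exp (-(b * r ^ 2)) with hG
  have hderiv : ∀ x ∈ Set.Ici c, HasDerivAt G (2 * b * x * Real.exp (-(b * x ^ 2))) x := by
    intro x _
    have h1 : HasDerivAt (fun r : ℝ => -(b * r ^ 2)) (-(b * (2 * x))) x := by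
      simpa using (((hasDerivAt_pow 2 x).const_mul b).fun_neg)
    have h2 : HasDerivAt G (-(Real.exp (-(b * x ^ 2)) * -(b * (2 * x)))) x := (h1.exp).fun_neg
    convert h2 using 1
    ring
  have hpos : ∀ x ∈ Set.Ioi c, 0 ≤ 2 * b * x * Real.exp (-(b * x ^ 2)) := by
    intro x hx
    have hx0 : 0 ≤ x := hc.trans (le_of_lt hx)
    positivity
  have htend : Filter.Tendsto G Filter.atTop (nhds 0) := by
    have h1 : Filter.Tendsto (fun r : ℝ => b * r ^ 2) Filter.atTop Filter.atTop :=
      Filter.tendsto_const_mul_pow_atTop two_ne_zero hb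
    have h2 : Filter.Tendsto (fun r : ℝ => -(b * r ^ 2)) Filter.atTop Filter.atBot :=
      Filter.tendsto_neg_atBot_iff.mpr h1
    have h3 := (Real.tendsto_exp_atBot.comp h2).neg
    simpa using h3
  have hint := integrableOn_Ioi_deriv_of_nonneg' hderiv hpos htend
  have heq := integral_Ioi_of_hasDerivAt_of_nonneg' hderiv hpos htend
  rw [← ofReal_integral_eq_lintegral_ofReal hint ?nn]
  · rw [heq]; simp [hG]
  · exact (ae_restrict_iff' measurableSet_Ioi).2 (Filter.Eventually.of_forall hpos)

/-- Divergence half of Theorem 4: with NLOS path loss exponent `αN = 2`, if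
`λ M < Γ C_N W / (P π)`, the series giving the mean number of IA cycles diverges. -/
theorem stmt5 (αL αN CL CN Rc W gam P lam : ℝ) (M : ℕ)
    (hαL : 0 < αL) (hαN : αN = 2) (hCL : 0 < CL) (hCN : 0 < CN) (hRc : 0 < Rc)
    (hW : 0 < W) (hgam : 0 < gam) (hP : 0 < P) (hlam : 0 < lam) (hM : 0 < M)
    (l : ℝ → ℝ)
    (hl1 : ∀ r, 0 ≤ r → r < Rc → l r = CL * r ^ αL)
    (hl2 : ∀ r, Rc ≤ r → l r = CN * r ^ αN)
    (hthr : lam * M < gam * CN * W / (P * π)) :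
    ∑' j : ℕ,
      (∫⁻ r in Set.Ioi (0:ℝ),
        ENNReal.ofReal ((1 - Real.exp (-(W * gam * l r / (P * M)))) ^ j *
          (2 * lam * π * r / M) * Real.exp (-(lam * π * r ^ 2 / M)))) ^ M = ⊤ := by
  have hMpos : (0:ℝ) < M := by exact_mod_cast hM
  have hpi : (0:ℝ) < π := Real.pi_pos
  set a : ℝ := W * gam * CN / (P * M) with ha_def
  set b : ℝ := lam * π / M with hb_def
  have ha : 0 < a := by positivity
  have hb : 0 < b := by positivity
  -- threshold condition
  have hba : (M:ℝ) * b < a := by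
    have h1 : lam * M * (P * π) < gam * CN * W := (lt_div_iff₀ (by positivity)).mp hthr
    have h2 : (M:ℝ) * b = lam * π := by rw [hb_def]; field_simp
    rw [h2, ha_def, lt_div_iff₀ (by positivity)]
    nlinarith
  set A : ℕ → ℝ≥0∞ := fun j =>
      (∫⁻ r in Set.Ioi (0:ℝ),
        ENNReal.ofReal ((1 - Real.exp (-(W * gam * l r / (P * M)))) ^ j *
          (2 * lam * π * r / M) * Real.exp (-(lam * π * r ^ 2 / M)))) ^ M with hA_def
  set N0 : ℕ := ⌈Real.exp (a * Rc ^ 2)⌉₊ + 1 with hN0_def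
  -- main lower bound
  have key : ∀ j : ℕ, N0 ≤ j →
      ENNReal.ofReal ((1/2 : ℝ) ^ M * (1 / (2 * (j:ℝ)))) ≤ A j := by
    intro j hj
    have hj1 : 1 ≤ j := le_trans (by omega) hj
    have hjR : (1:ℝ) ≤ (j:ℝ) := by exact_mod_cast hj1
    have h2j : (0:ℝ) < 2 * j := by linarith
    have hlog0 : (0:ℝ) ≤ Real.log (2 * j) := Real.log_nonneg (by linarith)
    set u : ℝ := Real.log (2 * (j:ℝ)) / a with hu_def
    have hu : 0 ≤ u := by positivity
    set c : ℝ := Real.sqrt u with hc_def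
    have hc0 : 0 ≤ c := Real.sqrt_nonneg _
    have hc2 : c ^ 2 = u := Real.sq_sqrt hu
    -- c ≥ Rc
    have hcRc : Rc ≤ c := by
      have hexpj : Real.exp (a * Rc ^ 2) ≤ (j:ℝ) := by
        have h1 : Real.exp (a * Rc ^ 2) ≤ (N0:ℝ) := by
          rw [hN0_def]
          push_cast
          have := Nat.le_ceil (Real.exp (a * Rc ^ 2))
          linarith
        have h2 : (N0:ℝ) ≤ (j:ℝ) := by exact_mod_cast hj
        linarith
      have hlog1 : a * Rc ^ 2 ≤ Real.log (2 * j) := by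
        calc a * Rc ^ 2 = Real.log (Real.exp (a * Rc ^ 2)) := (Real.log_exp _).symm
          _ ≤ Real.log (2 * j) := Real.log_le_log (Real.exp_pos _) (by linarith)
      have hRc2u : Rc ^ 2 ≤ u := by
        rw [hu_def, le_div_iff₀ ha]
        linarith [mul_comm a (Rc ^ 2)]
      calc Rc = Real.sqrt (Rc ^ 2) := (Real.sqrt_sq hRc.le).symm
        _ ≤ Real.sqrt u := Real.sqrt_le_sqrt hRc2u
    -- pointwise bound on Ioi c
    have hpt : ∀ r ∈ Set.Ioi c,
        ENNReal.ofReal ((1/2 : ℝ) * (2 * b * r * Real.exp (-(b * r ^ 2)))) ≤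
        ENNReal.ofReal ((1 - Real.exp (-(W * gam * l r / (P * M)))) ^ j *
          (2 * lam * π * r / M) * Real.exp (-(lam * π * r ^ 2 / M))) := by
      intro r hr
      have hrc : c < r := hr
      have hr0 : 0 < r := lt_of_le_of_lt hc0 hrc
      apply ENNReal.ofReal_le_ofReal
      have hlr : l r = CN * r ^ 2 := by
        rw [hl2 r (le_trans hcRc hrc.le), hαN,
          show (2:ℝ) = ((2:ℕ):ℝ) by norm_num, Real.rpow_natCast]
      have harg : W * gam * l r / (P * M) = a * r ^ 2 := by
        rw [hlr, ha_def]; ring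
      have hd1 : 2 * lam * π * r / M = 2 * b * r := by rw [hb_def]; ring
      have hd2 : lam * π * r ^ 2 / M = b * r ^ 2 := by rw [hb_def]; ring
      rw [harg, hd1, hd2]
      -- exp bound
      have hr2 : c ^ 2 ≤ r ^ 2 := by nlinarith
      have hexp_le : Real.exp (-(a * r ^ 2)) ≤ 1 / (2 * j) := by
        have h1 : Real.log (2 * j) ≤ a * r ^ 2 := by
          have : a * u ≤ a * r ^ 2 := by
            apply mul_le_mul_of_nonneg_left _ ha.le
            rw [← hc2]; exact hr2
          have hau : a * u = Real.log (2 * j) := by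
            rw [hu_def]; field_simp
          linarith
        calc Real.exp (-(a * r ^ 2)) ≤ Real.exp (-Real.log (2 * j)) :=
              Real.exp_le_exp.mpr (by linarith)
          _ = 1 / (2 * j) := by rw [Real.exp_neg, Real.exp_log h2j, one_div]
      have hhalf : 1 / (2 * (j:ℝ)) ≤ 1/2 := by
        rw [div_le_div_iff₀ h2j (by norm_num)]
        linarith
      have hbase0 : (0:ℝ) ≤ 1 - 1 / (2 * j) := by linarith
      have hbase : 1 - 1 / (2 * (j:ℝ)) ≤ 1 - Real.exp (-(a * r ^ 2)) := by linarith
      have hpow : (1/2 : ℝ) ≤ (1 - 1 / (2 * (j:ℝ))) ^ j := by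
        have hB := one_add_mul_le_pow (a := -(1 / (2 * (j:ℝ)))) (by linarith) j
        have hjne : (j:ℝ) ≠ 0 := by positivity
        have : 1 + (j:ℝ) * -(1 / (2 * (j:ℝ))) = 1/2 := by field_simp; ring
        rw [this] at hB
        simpa [sub_eq_add_neg] using hB
      have h12 : (1/2 : ℝ) ≤ (1 - Real.exp (-(a * r ^ 2))) ^ j :=
        le_trans hpow (pow_le_pow_left₀ hbase0 hbase j)
      have hX : (0:ℝ) ≤ 2 * b * r * Real.exp (-(b * r ^ 2)) := by positivity
      calc (1/2 : ℝ) * (2 * b * r * Real.exp (-(b * r ^ 2)))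
          ≤ (1 - Real.exp (-(a * r ^ 2))) ^ j * (2 * b * r * Real.exp (-(b * r ^ 2))) :=
            mul_le_mul_of_nonneg_right h12 hX
        _ = (1 - Real.exp (-(a * r ^ 2))) ^ j * (2 * b * r) * Real.exp (-(b * r ^ 2)) := by ring
    -- integral lower bound
    have hIlow : ENNReal.ofReal ((1/2 : ℝ) * Real.exp (-(b * c ^ 2))) ≤
        ∫⁻ r in Set.Ioi (0:ℝ),
          ENNReal.ofReal ((1 - Real.exp (-(W * gam * l r / (P * M)))) ^ j *
            (2 * lam * π * r / M) * Real.exp (-(lam * π * r ^ 2 / M))) := by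
      have h1 : (∫⁻ r in Set.Ioi c,
          ENNReal.ofReal ((1/2 : ℝ) * (2 * b * r * Real.exp (-(b * r ^ 2))))) =
          ENNReal.ofReal ((1/2 : ℝ) * Real.exp (-(b * c ^ 2))) := by
        have hmul : ∀ r : ℝ, ENNReal.ofReal ((1/2 : ℝ) * (2 * b * r * Real.exp (-(b * r ^ 2)))) =
            ENNReal.ofReal (1/2 : ℝ) * ENNReal.ofReal (2 * b * r * Real.exp (-(b * r ^ 2))) := by
          intro r; rw [ENNReal.ofReal_mul (by norm_num)]
        simp_rw [hmul]
        rw [lintegral_const_mul' _ _ ENNReal.ofReal_ne_top, gauss_tail b c hb hc0,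
          ← ENNReal.ofReal_mul (by norm_num)]
      calc ENNReal.ofReal ((1/2 : ℝ) * Real.exp (-(b * c ^ 2)))
          = ∫⁻ r in Set.Ioi c,
              ENNReal.ofReal ((1/2 : ℝ) * (2 * b * r * Real.exp (-(b * r ^ 2)))) := h1.symm
        _ ≤ ∫⁻ r in Set.Ioi c,
              ENNReal.ofReal ((1 - Real.exp (-(W * gam * l r / (P * M)))) ^ j *
                (2 * lam * π * r / M) * Real.exp (-(lam * π * r ^ 2 / M))) :=
            setLIntegral_mono' measurableSet_Ioi hpt
        _ ≤ _ := lintegral_mono_set (Set.Ioi_subset_Ioi hc0)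
    -- raise to power M
    have hApow : ENNReal.ofReal (((1/2 : ℝ) * Real.exp (-(b * c ^ 2))) ^ M) ≤ A j :=
      calc ENNReal.ofReal (((1/2 : ℝ) * Real.exp (-(b * c ^ 2))) ^ M)
          = ENNReal.ofReal ((1/2 : ℝ) * Real.exp (-(b * c ^ 2))) ^ M :=
            ENNReal.ofReal_pow (by positivity) M
        _ ≤ A j := pow_le_pow_left₀ (by positivity) hIlow M
    refine le_trans (ENNReal.ofReal_le_ofReal ?_) hApow
    -- real estimate
    have h2j1 : (1:ℝ) ≤ 2 * j := by linarith
    have hMba : (M:ℝ) * b / a ≤ 1 := by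
      rw [div_le_one ha]; linarith
    have hepow : ((1/2 : ℝ) * Real.exp (-(b * c ^ 2))) ^ M =
        (1/2 : ℝ) ^ M * (2 * (j:ℝ)) ^ (-(((M:ℝ) * b) / a)) := by
      rw [mul_pow, ← Real.exp_nat_mul, hc2, hu_def,
        Real.rpow_def_of_pos (by linarith : (0:ℝ) < 2 * j)]
      congr 1
      ring
    rw [hepow]
    have hrp : (1 / (2 * (j:ℝ))) ≤ (2 * (j:ℝ)) ^ (-(((M:ℝ) * b) / a)) := by
      have := Real.rpow_le_rpow_of_exponent_le h2j1
        (by linarith : (-1 : ℝ) ≤ -(((M:ℝ) * b) / a))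
      calc (1 / (2 * (j:ℝ))) = (2 * (j:ℝ)) ^ (-1 : ℝ) := by
            rw [Real.rpow_neg_one, one_div]
        _ ≤ _ := this
    exact mul_le_mul_of_nonneg_left hrp (by positivity)
  -- sum the lower bounds
  rw [← top_le_iff]
  have hshift : (∑' j : ℕ, A (j + N0)) ≤ ∑' j : ℕ, A j :=
    ENNReal.tsum_comp_le_tsum_of_injective (add_left_injective N0) A
  refine le_trans ?_ hshift
  have hlow : ∀ j : ℕ,
      ENNReal.ofReal ((1/2 : ℝ) ^ M * (1 / (2 * ((j:ℝ) + N0)))) ≤ A (j + N0) := by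
    intro j
    have := key (j + N0) (Nat.le_add_left N0 j)
    have hc : ((j + N0 : ℕ):ℝ) = (j:ℝ) + N0 := by push_cast; ring
    rwa [hc] at this
  refine le_trans ?_ (ENNReal.tsum_le_tsum hlow)
  -- the harmonic-type series diverges
  rw [top_le_iff]
  by_contra h
  have hsummable := ENNReal.summable_toReal h
  have hN0pos : (0:ℝ) < N0 := by
    have : 0 < N0 := by omega
    exact_mod_cast this
  have hg : Summable (fun j : ℕ => (1/2 : ℝ) ^ M * (1 / (2 * ((j:ℝ) + N0)))) := by
    have heq : ∀ j : ℕ, ((ENNReal.ofReal ((1/2 : ℝ) ^ M * (1 / (2 * ((j:ℝ) + N0))))).toReal)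
        = (1/2 : ℝ) ^ M * (1 / (2 * ((j:ℝ) + N0))) := by
      intro j
      rw [ENNReal.toReal_ofReal]
      positivity
    exact hsummable.congr heq
  have hg2 : Summable (fun j : ℕ => 1 / ((j:ℝ) + N0)) := by
    have := hg.mul_left ((2 : ℝ) / ((1/2 : ℝ) ^ M))
    have hne : ((1/2 : ℝ) ^ M) ≠ 0 := by positivity
    exact this.congr fun j => by field_simp
  have hg3 : Summable (fun n : ℕ => 1 / (n:ℝ)) := by
    rw [← summable_nat_add_iff N0]
    exact hg2.congr fun n => by push_cast; ring
  exact Real.not_summable_one_div_natCast hg3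
end

section
/- Let α_L > 0 and α_N = 2, let C_L, C_N, R_c, W, Γ, P, λ > 0, and let M be a positive integer, and define l(r) = C_L r^{α_L} for 0 ≤ r < R_c and l(r) = C_N r^{α_N} for r ≥ R_c. If λM > Γ C_N W/(Pπ), then the series ∑_{j=0}^{∞} ( ∫_0^∞ (1 − exp(−WΓ l(r)/(PM)))^j · (2λπ r/M) · exp(−λπ r²/M) dr )^M converges to a finite value. -/
open MeasureTheory
open scoped ENNReal Real

private lemma aux_pow_exp (β t : ℝ) (hβ : 0 < β) (ht : 0 < t) :
    t ^ β * Real.exp (-t) ≤ β ^ β * Real.exp (-β) := by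
  have hlog : Real.log (t / β) ≤ t / β - 1 := Real.log_le_sub_one_of_pos (by positivity)
  have hlogdiv : Real.log (t / β) = Real.log t - Real.log β := Real.log_div ht.ne' hβ.ne'
  have h1 : Real.log t * β + -t ≤ Real.log β * β + -β := by
    have := mul_le_mul_of_nonneg_right hlog hβ.le
    rw [hlogdiv] at this
    have hdb : (t / β - 1) * β = t - β := by field_simp
    nlinarith
  calc t ^ β * Real.exp (-t) = Real.exp (Real.log t * β) * Real.exp (-t) := by
        rw [Real.rpow_def_of_pos ht]
    _ = Real.exp (Real.log t * β + -t) := by rw [Real.exp_add]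
    _ ≤ Real.exp (Real.log β * β + -β) := Real.exp_le_exp.mpr h1
    _ = Real.exp (Real.log β * β) * Real.exp (-β) := by rw [Real.exp_add]
    _ = β ^ β * Real.exp (-β) := by rw [Real.rpow_def_of_pos hβ]

private lemma aux_key (β : ℝ) (hβ : 0 < β) (j : ℕ) (hj : 1 ≤ j) (u : ℝ)
    (hu0 : 0 < u) (hu1 : u ≤ 1) :
    (1 - u) ^ j * u ^ β ≤ β ^ β * Real.exp (-β) * (j : ℝ) ^ (-β) := by
  have hjR : (0:ℝ) < j := by exact_mod_cast hj
  have h1 : (1 - u) ^ j ≤ Real.exp (-((j:ℝ) * u)) := by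
    calc (1 - u) ^ j ≤ Real.exp (-u) ^ j := by
          apply pow_le_pow_left₀ (by linarith)
          linarith [Real.add_one_le_exp (-u)]
      _ = Real.exp (-u) ^ ((j:ℕ):ℝ) := by rw [Real.rpow_natCast]
      _ = Real.exp (-u * j) := by rw [← Real.exp_mul]
      _ = Real.exp (-((j:ℝ) * u)) := by ring_nf
  have h2 : (1 - u) ^ j * u ^ β ≤ Real.exp (-((j:ℝ) * u)) * u ^ β :=
    mul_le_mul_of_nonneg_right h1 (Real.rpow_nonneg hu0.le β)
  set t : ℝ := (j : ℝ) * u with ht_def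
  have ht : 0 < t := by positivity
  have hu_eq : u = t / j := by rw [ht_def]; field_simp
  have h3 : u ^ β = t ^ β * (j:ℝ) ^ (-β) := by
    rw [hu_eq, Real.div_rpow ht.le (le_of_lt hjR), Real.rpow_neg (le_of_lt hjR),
      div_eq_mul_inv]
  have h4 : Real.exp (-t) * (t ^ β * (j:ℝ) ^ (-β)) ≤ β ^ β * Real.exp (-β) * (j:ℝ) ^ (-β) := by
    have := mul_le_mul_of_nonneg_right (aux_pow_exp β t hβ ht)
      (Real.rpow_nonneg (le_of_lt hjR) (-β))
    nlinarith [this]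
  calc (1 - u) ^ j * u ^ β ≤ Real.exp (-t) * u ^ β := h2
    _ = Real.exp (-t) * (t ^ β * (j:ℝ) ^ (-β)) := by rw [h3]
    _ ≤ β ^ β * Real.exp (-β) * (j:ℝ) ^ (-β) := h4

private lemma aux_fin (c b : ℝ) (hb : 0 < b) :
    ∫⁻ r in Set.Ioi (0:ℝ), ENNReal.ofReal (c * r * Real.exp (-(b * r ^ 2))) < ⊤ := by
  have h0 : Integrable (fun x : ℝ => x ^ (1:ℝ) * Real.exp (-b * x ^ 2)) :=
    integrable_rpow_mul_exp_neg_mul_sq hb (by norm_num)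
  have h1 : Integrable (fun x : ℝ => c * x * Real.exp (-(b * x ^ 2))) := by
    have := h0.const_mul c
    simpa [Real.rpow_one, neg_mul, mul_assoc] using this
  exact (h1.integrableOn).lintegral_lt_top

set_option maxHeartbeats 1000000 in
/-- Convergence half of Theorem 4: with NLOS path loss exponent `αN = 2`, if
`λ M > Γ C_N W / (P π)`, the series giving the mean number of IA cycles is finite. -/
theorem stmt6 (αL αN CL CN Rc W gam P lam : ℝ) (M : ℕ)
    (hαL : 0 < αL) (hαN : αN = 2) (hCL : 0 < CL) (hCN : 0 < CN) (hRc : 0 < Rc)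
    (hW : 0 < W) (hgam : 0 < gam) (hP : 0 < P) (hlam : 0 < lam) (hM : 0 < M)
    (l : ℝ → ℝ)
    (hl1 : ∀ r, 0 ≤ r → r < Rc → l r = CL * r ^ αL)
    (hl2 : ∀ r, Rc ≤ r → l r = CN * r ^ αN)
    (hthr : gam * CN * W / (P * π) < lam * M) :
    ∑' j : ℕ,
      (∫⁻ r in Set.Ioi (0:ℝ),
        ENNReal.ofReal ((1 - Real.exp (-(W * gam * l r / (P * M)))) ^ j *
          (2 * lam * π * r / M) * Real.exp (-(lam * π * r ^ 2 / M)))) ^ M < ⊤ := by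
  have hMR : (0:ℝ) < M := by exact_mod_cast hM
  have hπ : (0:ℝ) < π := Real.pi_pos
  set a : ℝ := W * gam / (P * M) with ha_def
  have ha : 0 < a := by positivity
  set q : ℝ := 1 - Real.exp (-(a * (CL * Rc ^ αL))) with hq_def
  have hq0 : 0 < q := by
    have h1 : 0 < a * (CL * Rc ^ αL) := by positivity
    have : Real.exp (-(a * (CL * Rc ^ αL))) < 1 := by
      rw [Real.exp_lt_one_iff]; linarith
    simp only [hq_def]; linarith
  have hq1 : q < 1 := by
    have := Real.exp_pos (-(a * (CL * Rc ^ αL)))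
    simp only [hq_def]; linarith
  set B : ℝ := lam * π * P / (W * gam * CN) with hB_def
  have hB0 : 0 < B := by rw [hB_def]; positivity
  have hBM : 1 < B * M := by
    rw [div_lt_iff₀ (by positivity)] at hthr
    rw [hB_def, div_mul_eq_mul_div, lt_div_iff₀ (by positivity)]
    nlinarith
  set β : ℝ := ((M:ℝ)⁻¹ + B) / 2 with hβ_def
  have hMB : (M:ℝ)⁻¹ < B := by
    rw [show (M:ℝ)⁻¹ = 1 / M by ring, div_lt_iff₀ hMR]; linarith
  have hβ : 0 < β := by rw [hβ_def]; positivity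
  have hβB : β < B := by rw [hβ_def]; linarith
  have hβM : 1 < β * M := by
    have hinv : (M:ℝ)⁻¹ * M = 1 := inv_mul_cancel₀ hMR.ne'
    rw [hβ_def]; nlinarith
  set b' : ℝ := lam * π / M - β * (a * CN) with hb'_def
  have hBkey : B * (a * CN) = lam * π / M := by
    rw [hB_def, ha_def]; field_simp
  have hb' : 0 < b' := by
    have h1 : β * (a * CN) < B * (a * CN) :=
      mul_lt_mul_of_pos_right hβB (by positivity)
    rw [hb'_def]; linarith [hBkey ▸ h1]
  have hsum : β * (a * CN) + b' = lam * π / M := by rw [hb'_def]; ring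
  set Cst : ℝ := β ^ β * Real.exp (-β) with hCst_def
  have hCst0 : 0 ≤ Cst := by rw [hCst_def]; positivity
  -- the two comparison kernels
  set G : ℝ → ℝ≥0∞ := fun r => ENNReal.ofReal
    (2 * lam * π * r / M * Real.exp (-(lam * π * r ^ 2 / M))) with hG_def
  set H : ℝ → ℝ≥0∞ := fun r => ENNReal.ofReal
    (2 * lam * π * r / M * Real.exp (-(b' * r ^ 2))) with hH_def
  have hGm : Measurable G := by
    apply Measurable.ennreal_ofReal; fun_prop
  have hHm : Measurable H := by
    apply Measurable.ennreal_ofReal; fun_prop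
  set K0 : ℝ≥0∞ := ∫⁻ r in Set.Ioi (0:ℝ), G r with hK0_def
  set K1 : ℝ≥0∞ := ∫⁻ r in Set.Ioi (0:ℝ), H r with hK1_def
  have hK0 : K0 < ⊤ := by
    refine lt_of_le_of_lt (le_of_eq ?_) (aux_fin (2 * lam * π / M) (lam * π / M)
      (by positivity))
    apply lintegral_congr; intro r
    simp only [hG_def]
    have he : -(lam * π * r ^ 2 / (M:ℝ)) = -(lam * π / M * r ^ 2) := by ring
    rw [he]; congr 1; ring
  have hK1 : K1 < ⊤ := by
    refine lt_of_le_of_lt (le_of_eq ?_) (aux_fin (2 * lam * π / M) b' hb')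
    apply lintegral_congr; intro r
    simp only [hH_def]; congr 1; ring
  -- the main per-term bound
  have hIb : ∀ j : ℕ,
      (∫⁻ r in Set.Ioi (0:ℝ),
        ENNReal.ofReal ((1 - Real.exp (-(W * gam * l r / (P * M)))) ^ j *
          (2 * lam * π * r / M) * Real.exp (-(lam * π * r ^ 2 / M)))) ≤
      (ENNReal.ofReal q) ^ j * K0 +
        (ENNReal.ofReal Cst * ENNReal.ofReal ((j:ℝ) ^ (-β))) * K1 := by
    intro j
    have hmeas : Measurable (fun r : ℝ => (ENNReal.ofReal q) ^ j * G r +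
        (ENNReal.ofReal Cst * ENNReal.ofReal ((j:ℝ) ^ (-β))) * H r) :=
      (measurable_const.mul hGm).add (measurable_const.mul hHm)
    have hptw : ∀ r ∈ Set.Ioi (0:ℝ),
        ENNReal.ofReal ((1 - Real.exp (-(W * gam * l r / (P * M)))) ^ j *
          (2 * lam * π * r / M) * Real.exp (-(lam * π * r ^ 2 / M))) ≤
        (ENNReal.ofReal q) ^ j * G r +
          (ENNReal.ofReal Cst * ENNReal.ofReal ((j:ℝ) ^ (-β))) * H r := by
      intro r hr
      have hr0 : 0 < r := hr
      by_cases hrR : r < Rc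
      · -- head: r < Rc
        have hlr : l r = CL * r ^ αL := hl1 r hr0.le hrR
        have hl0 : 0 < l r := by rw [hlr]; positivity
        have hexp1 : Real.exp (-(W * gam * l r / (P * M))) ≤ 1 := by
          rw [Real.exp_le_one_iff]
          have : 0 < W * gam * l r / (P * M) := by positivity
          linarith
        have hbase0 : 0 ≤ 1 - Real.exp (-(W * gam * l r / (P * M))) := by linarith
        have hbaseq : 1 - Real.exp (-(W * gam * l r / (P * M))) ≤ q := by
          have hrp : r ^ αL ≤ Rc ^ αL := Real.rpow_le_rpow hr0.le hrR.le hαL.le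
          have harg : a * (CL * r ^ αL) ≤ a * (CL * Rc ^ αL) := by
            apply mul_le_mul_of_nonneg_left _ ha.le
            nlinarith
          have heq : W * gam * l r / (P * M) = a * (CL * r ^ αL) := by
            rw [hlr, ha_def]; ring
          rw [hq_def, heq]
          have := Real.exp_le_exp.mpr (neg_le_neg harg)
          linarith
        refine le_trans ?_ le_self_add
        rw [← ENNReal.ofReal_pow hq0.le, hG_def,
          ← ENNReal.ofReal_mul (pow_nonneg hq0.le j)]
        apply ENNReal.ofReal_le_ofReal
        have hg0 : 0 ≤ 2 * lam * π * r / M * Real.exp (-(lam * π * r ^ 2 / M)) := by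
          positivity
        calc (1 - Real.exp (-(W * gam * l r / (P * M)))) ^ j *
              (2 * lam * π * r / M) * Real.exp (-(lam * π * r ^ 2 / M))
            = (1 - Real.exp (-(W * gam * l r / (P * M)))) ^ j *
              (2 * lam * π * r / M * Real.exp (-(lam * π * r ^ 2 / M))) := by ring
          _ ≤ q ^ j * (2 * lam * π * r / M * Real.exp (-(lam * π * r ^ 2 / M))) :=
              mul_le_mul_of_nonneg_right (pow_le_pow_left₀ hbase0 hbaseq j) hg0
      · -- tail: Rc ≤ r
        push_neg at hrR
        rcases Nat.eq_zero_or_pos j with hj0 | hj1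
        · subst hj0
          refine le_trans (le_of_eq ?_) le_self_add
          simp only [pow_zero, one_mul, hG_def]
        · have hlr : l r = CN * r ^ (2:ℕ) := by
            rw [hl2 r hrR, hαN, show ((2:ℝ)) = ((2:ℕ):ℝ) by norm_num,
              Real.rpow_natCast]
          have hexp_arg : W * gam * l r / (P * M) = a * CN * r ^ 2 := by
            rw [hlr, ha_def]; push_cast; ring
          set u : ℝ := Real.exp (-(a * CN * r ^ 2)) with hu_def
          have hu0 : 0 < u := Real.exp_pos _
          have hu1 : u ≤ 1 := by
            rw [hu_def, Real.exp_le_one_iff]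
            have : 0 < a * CN * r ^ 2 := by positivity
            linarith
          have hdecomp : Real.exp (-(lam * π * r ^ 2 / M)) =
              u ^ β * Real.exp (-(b' * r ^ 2)) := by
            rw [hu_def, ← Real.exp_mul, ← Real.exp_add]
            congr 1
            linear_combination (-(r ^ 2)) * hsum
          have hkey := aux_key β hβ j hj1 u hu0 hu1
          have hreal : (1 - Real.exp (-(W * gam * l r / (P * M)))) ^ j *
              (2 * lam * π * r / M) * Real.exp (-(lam * π * r ^ 2 / M)) ≤
              Cst * (j:ℝ) ^ (-β) *
                (2 * lam * π * r / M * Real.exp (-(b' * r ^ 2))) := by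
            rw [hexp_arg, hdecomp]
            have hg0 : 0 ≤ 2 * lam * π * r / M * Real.exp (-(b' * r ^ 2)) := by
              positivity
            calc (1 - u) ^ j * (2 * lam * π * r / M) *
                  (u ^ β * Real.exp (-(b' * r ^ 2)))
                = ((1 - u) ^ j * u ^ β) *
                  (2 * lam * π * r / M * Real.exp (-(b' * r ^ 2))) := by ring
              _ ≤ (β ^ β * Real.exp (-β) * (j:ℝ) ^ (-β)) *
                  (2 * lam * π * r / M * Real.exp (-(b' * r ^ 2))) :=
                  mul_le_mul_of_nonneg_right hkey hg0
              _ = Cst * (j:ℝ) ^ (-β) *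
                  (2 * lam * π * r / M * Real.exp (-(b' * r ^ 2))) := by
                  rw [hCst_def]
          refine le_trans ?_ (self_le_add_left _ _)
          rw [hH_def, ← ENNReal.ofReal_mul hCst0,
            ← ENNReal.ofReal_mul (by positivity)]
          exact ENNReal.ofReal_le_ofReal hreal
    calc (∫⁻ r in Set.Ioi (0:ℝ),
          ENNReal.ofReal ((1 - Real.exp (-(W * gam * l r / (P * M)))) ^ j *
            (2 * lam * π * r / M) * Real.exp (-(lam * π * r ^ 2 / M))))
        ≤ ∫⁻ r in Set.Ioi (0:ℝ), ((ENNReal.ofReal q) ^ j * G r +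
            (ENNReal.ofReal Cst * ENNReal.ofReal ((j:ℝ) ^ (-β))) * H r) :=
          setLIntegral_mono hmeas hptw
      _ = (ENNReal.ofReal q) ^ j * K0 +
            (ENNReal.ofReal Cst * ENNReal.ofReal ((j:ℝ) ^ (-β))) * K1 := by
          rw [lintegral_add_left (hGm.const_mul _),
            lintegral_const_mul _ hGm, lintegral_const_mul _ hHm]
  -- now sum up
  have hpow2 : ∀ x y : ℝ≥0∞, (x + y) ^ M ≤ 2 ^ M * (x ^ M + y ^ M) := by
    intro x y
    rcases le_total x y with h | h
    · calc (x + y) ^ M ≤ (2 * y) ^ M := by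
            apply pow_le_pow_left₀ (zero_le)
            rw [two_mul]; exact add_le_add h (le_refl y)
        _ = 2 ^ M * y ^ M := mul_pow 2 y M
        _ ≤ 2 ^ M * (x ^ M + y ^ M) :=
            mul_le_mul_right (le_add_self) _
    · calc (x + y) ^ M ≤ (2 * x) ^ M := by
            apply pow_le_pow_left₀ (zero_le)
            rw [two_mul]; exact add_le_add (le_refl x) h
        _ = 2 ^ M * x ^ M := mul_pow 2 x M
        _ ≤ 2 ^ M * (x ^ M + y ^ M) :=
            mul_le_mul_right (le_add_right (le_refl _)) _
  have hgeom : ∑' j : ℕ, ((ENNReal.ofReal q) ^ j * K0) ^ M < ⊤ := by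
    have hq_lt : (ENNReal.ofReal q) ^ M < 1 :=
      pow_lt_one₀ (zero_le) (ENNReal.ofReal_lt_one.mpr hq1) hM.ne'
    have hrw : ∀ j : ℕ, ((ENNReal.ofReal q) ^ j * K0) ^ M =
        ((ENNReal.ofReal q) ^ M) ^ j * K0 ^ M := by
      intro j; rw [mul_pow, pow_right_comm]
    calc ∑' j : ℕ, ((ENNReal.ofReal q) ^ j * K0) ^ M
        = ∑' j : ℕ, ((ENNReal.ofReal q) ^ M) ^ j * K0 ^ M := tsum_congr hrw
      _ = (∑' j : ℕ, ((ENNReal.ofReal q) ^ M) ^ j) * K0 ^ M :=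
          ENNReal.tsum_mul_right
      _ = (1 - (ENNReal.ofReal q) ^ M)⁻¹ * K0 ^ M := by
          rw [ENNReal.tsum_geometric]
      _ < ⊤ := by
          apply ENNReal.mul_lt_top
          · exact ENNReal.inv_lt_top.mpr (tsub_pos_iff_lt.mpr hq_lt)
          · exact ENNReal.pow_lt_top hK0
  have hrpow : ∀ j : ℕ, (ENNReal.ofReal ((j:ℝ) ^ (-β))) ^ M =
      ENNReal.ofReal ((j:ℝ) ^ (-(β * M))) := by
    intro j
    rw [← ENNReal.ofReal_pow (Real.rpow_nonneg (Nat.cast_nonneg j) _)]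
    congr 1
    rw [← Real.rpow_natCast ((j:ℝ) ^ (-β)) M, ← Real.rpow_mul (Nat.cast_nonneg j)]
    congr 1; ring
  have hsummable : Summable (fun j : ℕ => (j:ℝ) ^ (-(β * M))) :=
    Real.summable_nat_rpow.mpr (by linarith)
  have htail : ∑' j : ℕ, ((ENNReal.ofReal Cst * ENNReal.ofReal ((j:ℝ) ^ (-β))) * K1) ^ M
      < ⊤ := by
    have hrw : ∀ j : ℕ,
        ((ENNReal.ofReal Cst * ENNReal.ofReal ((j:ℝ) ^ (-β))) * K1) ^ M =
        ((ENNReal.ofReal Cst) ^ M * K1 ^ M) * ENNReal.ofReal ((j:ℝ) ^ (-(β * M))) := by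
      intro j
      rw [mul_pow, mul_pow, hrpow j]; ring
    calc ∑' j : ℕ, ((ENNReal.ofReal Cst * ENNReal.ofReal ((j:ℝ) ^ (-β))) * K1) ^ M
        = ∑' j : ℕ, ((ENNReal.ofReal Cst) ^ M * K1 ^ M) *
            ENNReal.ofReal ((j:ℝ) ^ (-(β * M))) := tsum_congr hrw
      _ = ((ENNReal.ofReal Cst) ^ M * K1 ^ M) *
            ∑' j : ℕ, ENNReal.ofReal ((j:ℝ) ^ (-(β * M))) := ENNReal.tsum_mul_left
      _ < ⊤ := by
          apply ENNReal.mul_lt_top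
          · exact ENNReal.mul_lt_top (ENNReal.pow_lt_top ENNReal.ofReal_lt_top)
              (ENNReal.pow_lt_top hK1)
          · rw [← ENNReal.ofReal_tsum_of_nonneg
              (fun n => Real.rpow_nonneg (Nat.cast_nonneg n) _) hsummable]
            exact ENNReal.ofReal_lt_top
  calc ∑' j : ℕ,
      (∫⁻ r in Set.Ioi (0:ℝ),
        ENNReal.ofReal ((1 - Real.exp (-(W * gam * l r / (P * M)))) ^ j *
          (2 * lam * π * r / M) * Real.exp (-(lam * π * r ^ 2 / M)))) ^ M
      ≤ ∑' j : ℕ, ((ENNReal.ofReal q) ^ j * K0 +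
          (ENNReal.ofReal Cst * ENNReal.ofReal ((j:ℝ) ^ (-β))) * K1) ^ M :=
        ENNReal.tsum_le_tsum (fun j => pow_le_pow_left₀ (zero_le) (hIb j) M)
    _ ≤ ∑' j : ℕ, 2 ^ M * (((ENNReal.ofReal q) ^ j * K0) ^ M +
          ((ENNReal.ofReal Cst * ENNReal.ofReal ((j:ℝ) ^ (-β))) * K1) ^ M) :=
        ENNReal.tsum_le_tsum (fun j => hpow2 _ _)
    _ = 2 ^ M * ((∑' j : ℕ, ((ENNReal.ofReal q) ^ j * K0) ^ M) +
          ∑' j : ℕ, ((ENNReal.ofReal Cst * ENNReal.ofReal ((j:ℝ) ^ (-β))) * K1) ^ M) := by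
        rw [ENNReal.tsum_mul_left, ENNReal.tsum_add]
    _ < ⊤ := by
        apply ENNReal.mul_lt_top
        · exact ENNReal.pow_lt_top (by norm_num)
        · exact ENNReal.add_lt_top.mpr ⟨hgeom, htail⟩
end

section
/- Let λ > 0, Γ > 0, α > 2, let M be a positive integer, and let j ≥ 0 be an integer. Then ∫_0^∞ [ ∑_{k=0}^{j} (−1)^k binom(j,k) exp( −(2πλ/M) ∫_{r₁}^{∞} (1 − (1 + Γ r₁^α/r^α)^{−k}) r dr ) ] · (2λπ r₁/M) · exp(−λπ r₁²/M) dr₁ = ∑_{k=0}^{j} (−1)^k binom(j,k) / (1 + 2 H(k, α, Γ)), where H(k, α, Γ) = ∫_1^∞ (1 − (1 + Γ/r^α)^{−k}) r dr. In particular, the left-hand side does not depend on λ or M. -/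
open MeasureTheory Set
open scoped Real


lemma aux_inv_le_one {x : ℝ} (hx : 0 ≤ x) (k : ℕ) : ((1 + x) ^ k)⁻¹ ≤ 1 := by
  have : (1:ℝ) ≤ (1 + x) ^ k := one_le_pow₀ (by linarith)
  exact inv_le_one_of_one_le₀ this

lemma aux_bound {x : ℝ} (hx : 0 ≤ x) (k : ℕ) :
    1 - ((1 + x) ^ k)⁻¹ ≤ k * x := by
  have h1 : (0:ℝ) < 1 + x := by linarith
  set t : ℝ := (1 + x)⁻¹ with ht
  have ht0 : 0 < t := inv_pos.mpr h1
  have ht1 : t ≤ 1 := by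
    rw [ht]; exact inv_le_one_of_one_le₀ (by linarith)
  have htx : t * (1 + x) = 1 := inv_mul_cancel₀ h1.ne'
  have hB : 1 + (k:ℝ) * (t - 1) ≤ (1 + (t - 1)) ^ k :=
    one_add_mul_le_pow (by linarith) k
  have hpow : (1 + (t - 1)) ^ k = ((1 + x) ^ k)⁻¹ := by
    rw [ht]; ring_nf
  rw [hpow] at hB
  have hk0 : (0:ℝ) ≤ k := Nat.cast_nonneg k
  nlinarith [mul_nonneg hk0 (mul_nonneg hx (sub_nonneg.mpr ht1))]


lemma aux_nonneg {x : ℝ} (hx : 0 ≤ x) (k : ℕ) : 0 ≤ 1 - ((1 + x) ^ k)⁻¹ := by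
  have : ((1 + x) ^ k)⁻¹ ≤ 1 := inv_le_one_of_one_le₀ (one_le_pow₀ (by linarith))
  linarith

lemma H_integrableOn {c α : ℝ} (hc : 0 < c) (hα : 2 < α) (k : ℕ) :
    IntegrableOn (fun r : ℝ => (1 - ((1 + c / r ^ α) ^ k)⁻¹) * r) (Ioi 1) := by
  have hcont : ContinuousOn (fun r : ℝ => (1 - ((1 + c / r ^ α) ^ k)⁻¹) * r) (Ioi 1) := by
    apply ContinuousOn.mul _ continuousOn_id
    apply ContinuousOn.sub continuousOn_const
    apply ContinuousOn.inv₀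
    · exact (continuousOn_const.add (continuousOn_const.div
        (continuousOn_id.rpow_const (fun x hx => Or.inr (by linarith)))
        (fun x hx => (Real.rpow_pos_of_pos (lt_trans one_pos hx) α).ne'))).pow k
    · intro x hx
      have hx0 : (0:ℝ) < x := lt_trans one_pos hx
      have h1 : (0:ℝ) < 1 + c / x ^ α := by positivity
      exact (pow_pos h1 k).ne'
  have hg : IntegrableOn (fun r : ℝ => (k * c) * r ^ (1 - α)) (Ioi 1) :=
    (integrableOn_Ioi_rpow_of_lt (by linarith) one_pos).const_mul _
  refine Integrable.mono hg (hcont.aestronglyMeasurable measurableSet_Ioi) ?_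
  filter_upwards [self_mem_ae_restrict (measurableSet_Ioi : MeasurableSet (Ioi (1:ℝ)))] with r hr
  have hr0 : (0:ℝ) < r := lt_trans one_pos hr
  have hrα : (0:ℝ) < r ^ α := Real.rpow_pos_of_pos hr0 α
  have hx : (0:ℝ) ≤ c / r ^ α := by positivity
  have hb := aux_bound hx k
  have hnn := aux_nonneg hx k
  have heq : (((k:ℝ) * (c / r ^ α)) * r) = (k * c) * r ^ (1 - α) := by
    rw [Real.rpow_sub hr0, Real.rpow_one]
    field_simp
  rw [Real.norm_eq_abs, Real.norm_eq_abs, abs_of_nonneg (mul_nonneg hnn hr0.le),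
    abs_of_nonneg (by positivity : (0:ℝ) ≤ (k * c) * r ^ (1 - α))]
  calc (1 - ((1 + c / r ^ α) ^ k)⁻¹) * r ≤ ((k:ℝ) * (c / r ^ α)) * r :=
        mul_le_mul_of_nonneg_right hb hr0.le
    _ = (k * c) * r ^ (1 - α) := heq

lemma H_nonneg {c α : ℝ} (hc : 0 < c) (hα : 2 < α) (k : ℕ) :
    0 ≤ ∫ r in Ioi (1:ℝ), (1 - ((1 + c / r ^ α) ^ k)⁻¹) * r := by
  refine setIntegral_nonneg measurableSet_Ioi fun r hr => ?_
  have hr0 : (0:ℝ) < r := lt_trans one_pos hr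
  have hx : (0:ℝ) ≤ c / r ^ α := by positivity
  exact mul_nonneg (aux_nonneg hx k) hr0.le



lemma gauss_int {b : ℝ} (hb : 0 < b) :
    ∫ r in Ioi (0:ℝ), r * Real.exp (-b * r ^ 2) = (2 * b)⁻¹ := by
  have A : ∀ x : ℝ, HasDerivAt (fun y : ℝ => -(2 * b)⁻¹ * Real.exp (-b * y ^ 2))
      (x * Real.exp (-b * x ^ 2)) x := by
    intro x
    convert ((hasDerivAt_pow 2 x).const_mul (-b)).exp.const_mul (-(2 * b)⁻¹) using 1
    case e'_9 =>
      field_simp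
      ring
    all_goals rfl
  have B : Filter.Tendsto (fun y : ℝ => -(2 * b)⁻¹ * Real.exp (-b * y ^ 2))
      Filter.atTop (nhds (-(2 * b)⁻¹ * 0)) := by
    refine Filter.Tendsto.const_mul _ ?_
    exact Real.tendsto_exp_atBot.comp
      ((Filter.tendsto_pow_atTop two_ne_zero).const_mul_atTop_of_neg (neg_lt_zero.2 hb))
  have := integral_Ioi_of_hasDerivAt_of_tendsto' (a := 0)
    (fun x _ => A x) (integrable_mul_exp_neg_mul_sq hb).integrableOn B
  rw [this]
  simp [Real.exp_zero]

lemma scaling {c α : ℝ} (hc : 0 < c) (hα : 2 < α) (k : ℕ) {r₁ : ℝ} (hr₁ : 0 < r₁) :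
    (∫ r in Ioi r₁, (1 - ((1 + c * r₁ ^ α / r ^ α) ^ k)⁻¹) * r)
      = r₁ ^ 2 * ∫ r in Ioi (1:ℝ), (1 - ((1 + c / r ^ α) ^ k)⁻¹) * r := by
  have h := integral_comp_mul_left_Ioi
    (fun x : ℝ => (1 - ((1 + c * r₁ ^ α / x ^ α) ^ k)⁻¹) * x) 1 hr₁
  rw [mul_one] at h
  have h2 : (∫ x in Ioi (1:ℝ), (1 - ((1 + c * r₁ ^ α / (r₁ * x) ^ α) ^ k)⁻¹) * (r₁ * x))
      = r₁ * ∫ x in Ioi (1:ℝ), (1 - ((1 + c / x ^ α) ^ k)⁻¹) * x := by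
    rw [← integral_const_mul]
    refine setIntegral_congr_fun measurableSet_Ioi fun x hx => ?_
    have hx0 : (0:ℝ) < x := lt_trans one_pos hx
    have hrα : (0:ℝ) < r₁ ^ α := Real.rpow_pos_of_pos hr₁ α
    have hxα : (0:ℝ) < x ^ α := Real.rpow_pos_of_pos hx0 α
    have hmul : (r₁ * x) ^ α = r₁ ^ α * x ^ α := Real.mul_rpow hr₁.le hx0.le
    rw [hmul]
    have : c * r₁ ^ α / (r₁ ^ α * x ^ α) = c / x ^ α := by
      field_simp
    rw [this]
    ring
  rw [h2] at h
  have := h.symm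
  rw [smul_eq_mul] at this
  have h3 : (∫ r in Ioi r₁, (1 - ((1 + c * r₁ ^ α / r ^ α) ^ k)⁻¹) * r)
      = r₁ * (r₁ * ∫ x in Ioi (1:ℝ), (1 - ((1 + c / x ^ α) ^ k)⁻¹) * x) := by
    field_simp at this ⊢
    linarith [this]
  rw [h3]; ring


/-- Lemma 3 computation: the coefficient `A_j` of the interference-limited series equals a
λ- and M-independent alternating sum involving `H(k,α,Γ)`. -/
theorem stmt10 (lam gam α : ℝ) (M j : ℕ)
    (hlam : 0 < lam) (hgam : 0 < gam) (hα : 2 < α) (hM : 0 < M) :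
    ∫ r₁ in Set.Ioi (0:ℝ),
        (∑ k ∈ Finset.range (j + 1), (-1 : ℝ) ^ k * (j.choose k) *
          Real.exp (-(2 * π * lam / M) *
            ∫ r in Set.Ioi r₁, (1 - ((1 + gam * r₁ ^ α / r ^ α) ^ k)⁻¹) * r)) *
        ((2 * lam * π * r₁ / M) * Real.exp (-(lam * π * r₁ ^ 2 / M)))
      = ∑ k ∈ Finset.range (j + 1), (-1 : ℝ) ^ k * (j.choose k) /
          (1 + 2 * ∫ r in Set.Ioi (1:ℝ), (1 - ((1 + gam / r ^ α) ^ k)⁻¹) * r) := by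
  have hM0 : (0:ℝ) < (M:ℝ) := Nat.cast_pos.mpr hM
  set H : ℕ → ℝ := fun k => ∫ r in Ioi (1:ℝ), (1 - ((1 + gam / r ^ α) ^ k)⁻¹) * r with hH
  have hHnn : ∀ k, 0 ≤ H k := fun k => H_nonneg hgam hα k
  set b : ℕ → ℝ := fun k => lam * π * (1 + 2 * H k) / M with hb
  have hbpos : ∀ k, 0 < b k := by
    intro k
    have := hHnn k
    have hpi := Real.pi_pos
    apply div_pos _ hM0
    positivity
  set c : ℕ → ℝ := fun k => (-1 : ℝ) ^ k * (j.choose k) with hc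
  have step1 : (∫ r₁ in Set.Ioi (0:ℝ),
        (∑ k ∈ Finset.range (j + 1), c k *
          Real.exp (-(2 * π * lam / M) *
            ∫ r in Set.Ioi r₁, (1 - ((1 + gam * r₁ ^ α / r ^ α) ^ k)⁻¹) * r)) *
        ((2 * lam * π * r₁ / M) * Real.exp (-(lam * π * r₁ ^ 2 / M))))
      = ∫ r₁ in Set.Ioi (0:ℝ),
          ∑ k ∈ Finset.range (j + 1),
            c k * (2 * lam * π / M) * (r₁ * Real.exp (-(b k) * r₁ ^ 2)) := by
    refine setIntegral_congr_fun measurableSet_Ioi fun r₁ hr₁ => ?_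
    have hr₁0 : (0:ℝ) < r₁ := hr₁
    rw [Finset.sum_mul]
    refine Finset.sum_congr rfl fun k _ => ?_
    rw [scaling hgam hα k hr₁0]
    have key : Real.exp (-(2 * π * lam / M) * (r₁ ^ 2 * H k)) * Real.exp (-(lam * π * r₁ ^ 2 / M))
        = Real.exp (-(b k) * r₁ ^ 2) := by
      rw [← Real.exp_add]
      congr 1
      have hbk : b k = lam * π * (1 + 2 * H k) / M := rfl
      rw [hbk]
      field_simp
      ring
    rw [← key]
    ring
  rw [step1]
  rw [integral_finset_sum _ (fun k _ => ?_)]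
  · refine Finset.sum_congr rfl fun k _ => ?_
    rw [integral_const_mul, gauss_int (hbpos k)]
    show c k * (2 * lam * π / (M:ℝ)) * (2 * b k)⁻¹ = c k / (1 + 2 * H k)
    have hden : (0:ℝ) < 1 + 2 * H k := by have := hHnn k; linarith
    have hbk : b k = lam * π * (1 + 2 * H k) / M := rfl
    rw [hbk]
    generalize H k = h at hden ⊢
    field_simp
  · exact ((integrable_mul_exp_neg_mul_sq (hbpos k)).integrableOn).const_mul _
end

section
/- Let Γ > 0 and α > 2, and set H(k) = ∫_{1}^{∞} (1 − (1 + Γ/r^α)^{−k}) r dr for integers k ≥ 0. Then for every integer j ≥ 0, the alternating sum A_j = ∑_{k=0}^{j} (−1)^k binom(j,k) / (1 + 2 H(k)) satisfies 0 ≤ A_j ≤ 1. -/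
open MeasureTheory Set Finset Function

namespace Stmt11Aux

/-- backward-style difference `f k - f (k+1)`. -/
noncomputable def dd (f : ℕ → ℝ) : ℕ → ℝ := fun k => f k - f (k + 1)

lemma dd_iter_eq (f : ℕ → ℝ) (j : ℕ) :
    dd^[j] f = ((-1 : ℝ) ^ j) • ((fwdDiff 1)^[j] f) := by
  induction j with
  | zero => simp
  | succ n ih =>
      rw [Function.iterate_succ_apply', ih, Function.iterate_succ_apply']
      funext k
      simp only [dd, fwdDiff, Pi.smul_apply, smul_eq_mul, pow_succ]
      ring

lemma dd_iter_sum (f : ℕ → ℝ) (j k : ℕ) :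
    dd^[j] f k = ∑ i ∈ range (j + 1), (-1 : ℝ) ^ i * (j.choose i) * f (k + i) := by
  rw [dd_iter_eq, Pi.smul_apply, fwdDiff_iter_eq_sum_shift, smul_eq_mul, Finset.mul_sum]
  refine Finset.sum_congr rfl fun i hi => ?_
  have hij : i ≤ j := Nat.lt_succ_iff.mp (Finset.mem_range.mp hi)
  have h1 : ((((-1 : ℤ) ^ (j - i) * (j.choose i : ℤ)) : ℤ)) • f (k + i • 1)
      = ((-1 : ℝ) ^ (j - i) * (j.choose i)) * f (k + i) := by
    push_cast [smul_eq_mul]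
    norm_num
  have hpow : (-1 : ℝ) ^ j * (-1 : ℝ) ^ (j - i) = (-1 : ℝ) ^ i := by
    rw [← pow_add]
    have h2 : j + (j - i) = 2 * (j - i) + i := by omega
    rw [h2, pow_add, pow_mul]; norm_num
  rw [h1, ← hpow]
  ring

/-- A sequence is completely monotone if all iterated differences are nonnegative. -/
def CM (f : ℕ → ℝ) : Prop := ∀ j k, 0 ≤ dd^[j] f k

lemma dd_iter_succ_outer (f : ℕ → ℝ) (j k : ℕ) :
    dd^[j + 1] f k = dd^[j] f k - dd^[j] f (k + 1) := by
  rw [Function.iterate_succ_apply']; rfl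

lemma dd_iter_add (f g : ℕ → ℝ) (j : ℕ) (k : ℕ) :
    dd^[j] (fun m => f m + g m) k = dd^[j] f k + dd^[j] g k := by
  simp only [dd_iter_sum]
  rw [← Finset.sum_add_distrib]
  exact Finset.sum_congr rfl fun i _ => by ring

lemma dd_iter_smul (c : ℝ) (f : ℕ → ℝ) (j k : ℕ) :
    dd^[j] (fun m => c * f m) k = c * dd^[j] f k := by
  simp only [dd_iter_sum, Finset.mul_sum]
  exact Finset.sum_congr rfl fun i _ => by ring

lemma dd_iter_shift (f : ℕ → ℝ) (j k : ℕ) :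
    dd^[j] (fun m => f (m + 1)) k = dd^[j] f (k + 1) := by
  simp only [dd_iter_sum]
  refine Finset.sum_congr rfl fun i _ => ?_
  have : k + i + 1 = k + 1 + i := by omega
  rw [this]

lemma dd_iter_inner (f : ℕ → ℝ) (j k : ℕ) :
    dd^[j] (dd f) k = dd^[j + 1] f k := by
  rw [← Function.iterate_succ_apply]

lemma pascal_sum (n : ℕ) (T : ℕ → ℝ) :
    ∑ i ∈ range (n + 2), ((n + 1).choose i : ℝ) * T i
      = ∑ i ∈ range (n + 1), (n.choose i : ℝ) * T i
        + ∑ i ∈ range (n + 1), (n.choose i : ℝ) * T (i + 1) := by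
  rw [Finset.sum_range_succ' _ (n + 1), Finset.sum_range_succ' (fun i => (n.choose i : ℝ) * T i) n]
  have hsplit : ∀ i, (((n + 1).choose (i + 1) : ℝ)) * T (i + 1)
      = (n.choose i : ℝ) * T (i + 1) + (n.choose (i + 1) : ℝ) * T (i + 1) := by
    intro i
    rw [Nat.choose_succ_succ]
    push_cast
    ring
  simp only [hsplit]
  rw [Finset.sum_add_distrib]
  have hlast : ∑ i ∈ range (n + 1), (n.choose (i + 1) : ℝ) * T (i + 1)
      = ∑ i ∈ range n, (n.choose (i + 1) : ℝ) * T (i + 1) := by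
    rw [Finset.sum_range_succ, Nat.choose_succ_self]
    simp
  rw [hlast]
  simp [Nat.choose_zero_right]
  ring

/-- Leibniz rule for iterated differences. -/
lemma dd_iter_mul (n : ℕ) : ∀ (f g : ℕ → ℝ) (k : ℕ),
    dd^[n] (fun m => f m * g m) k
      = ∑ i ∈ range (n + 1), (n.choose i : ℝ) * (dd^[i] f k * dd^[n - i] g (k + i)) := by
  induction n with
  | zero => intro f g k; simp
  | succ n ih =>
      intro f g k
      have hdd : dd (fun m => f m * g m)
          = fun m => (f m * dd g m) + (dd f m * g (m + 1)) := by
        funext m; simp only [dd]; ring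
      rw [← dd_iter_inner, hdd, dd_iter_add, ih f (dd g) k, ih (dd f) (fun m => g (m + 1)) k]
      have e1 : ∀ i ∈ range (n + 1), (n.choose i : ℝ) * (dd^[i] f k * dd^[n - i] (dd g) (k + i))
          = (n.choose i : ℝ) * (dd^[i] f k * dd^[n + 1 - i] g (k + i)) := by
        intro i hi
        have hij : i ≤ n := Nat.lt_succ_iff.mp (Finset.mem_range.mp hi)
        rw [dd_iter_inner]
        have hni : n - i + 1 = n + 1 - i := by omega
        rw [hni]
      rw [Finset.sum_congr rfl e1]
      have e2 : ∀ i ∈ range (n + 1),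
          (n.choose i : ℝ) * (dd^[i] (dd f) k * dd^[n - i] (fun m => g (m + 1)) (k + i))
          = (n.choose i : ℝ) * (dd^[i + 1] f k * dd^[n + 1 - (i + 1)] g (k + (i + 1))) := by
        intro i hi
        rw [dd_iter_inner, dd_iter_shift]
        have h2 : n + 1 - (i + 1) = n - i := by omega
        have h3 : k + (i + 1) = k + i + 1 := by omega
        rw [h2, h3]
      rw [Finset.sum_congr rfl e2]
      exact (pascal_sum n (fun i => dd^[i] f k * dd^[n + 1 - i] g (k + i))).symm

lemma CM.mul {f g : ℕ → ℝ} (hf : CM f) (hg : CM g) : CM (fun m => f m * g m) := by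
  intro j k
  rw [dd_iter_mul]
  refine Finset.sum_nonneg fun i _ => ?_
  have := mul_nonneg (hf i k) (hg (j - i) (k + i))
  positivity

lemma CM.const {c : ℝ} (hc : 0 ≤ c) : CM (fun _ => c) := by
  intro j k
  induction j generalizing k with
  | zero => simpa using hc
  | succ n ih =>
      have : dd (fun _ => c) = fun _ => (0 : ℝ) := by funext m; simp [dd]
      rw [← dd_iter_inner, this]
      have h0 : (fun _ : ℕ => (0 : ℝ)) = fun m : ℕ => (0 : ℝ) * c := by funext m; ring
      rw [h0, dd_iter_smul]
      simp

lemma CM.add {f g : ℕ → ℝ} (hf : CM f) (hg : CM g) : CM (fun m => f m + g m) := by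
  intro j k; rw [dd_iter_add]; exact add_nonneg (hf j k) (hg j k)

lemma CM.smul {c : ℝ} (hc : 0 ≤ c) {f : ℕ → ℝ} (hf : CM f) : CM (fun m => c * f m) := by
  intro j k; rw [dd_iter_smul]; exact mul_nonneg hc (hf j k)

lemma CM.pow {f : ℕ → ℝ} (hf : CM f) (n : ℕ) : CM (fun m => f m ^ n) := by
  induction n with
  | zero => simpa using CM.const (zero_le_one)
  | succ n ih =>
      have h : (fun m => f m ^ (n + 1)) = fun m => f m ^ n * f m := by
        funext m; ring
      rw [h]; exact ih.mul hf

lemma CM.sum {ι : Type*} (s : Finset ι) (f : ι → ℕ → ℝ) (hf : ∀ i ∈ s, CM (f i)) :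
    CM (fun m => ∑ i ∈ s, f i m) := by
  classical
  induction s using Finset.induction with
  | empty => simpa using CM.const le_rfl
  | insert a s hx ih =>
      have : (fun m => ∑ i ∈ insert a s, f i m) = fun m => f a m + ∑ i ∈ s, f i m := by
        funext m; rw [Finset.sum_insert hx]
      rw [this]
      exact (hf a (Finset.mem_insert_self a s)).add (ih fun i hi => hf i (Finset.mem_insert_of_mem hi))

lemma CM.of_tendsto {F : ℕ → ℕ → ℝ} (hF : ∀ n, CM (F n)) {f : ℕ → ℝ}
    (hlim : ∀ k, Filter.Tendsto (fun n => F n k) Filter.atTop (nhds (f k))) : CM f := by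
  intro j k
  have h : Filter.Tendsto (fun n => dd^[j] (F n) k) Filter.atTop (nhds (dd^[j] f k)) := by
    simp only [dd_iter_sum]
    exact tendsto_finset_sum _ fun i _ => (hlim (k + i)).const_mul _
  exact ge_of_tendsto' h fun n => hF n j k

section Analysis

variable {gam α : ℝ} (hgam : 0 < gam) (hα : 2 < α)

lemma one_sub_pow_le {y : ℝ} (h0 : 0 ≤ y) (h1 : y ≤ 1) (k : ℕ) :
    1 - y ^ k ≤ k * (1 - y) := by
  induction k with
  | zero => simp
  | succ n ih =>
      have hyn : y ^ n ≤ 1 := pow_le_one₀ h0 h1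
      have : 1 - y ^ (n + 1) = (1 - y ^ n) + y ^ n * (1 - y) := by ring
      rw [this]
      have h2 : y ^ n * (1 - y) ≤ 1 * (1 - y) :=
        mul_le_mul_of_nonneg_right hyn (by linarith)
      push_cast
      nlinarith

lemma base_pos (hgam : 0 < gam) {r : ℝ} (hr : 0 < r) : 0 < 1 + gam / r ^ α := by
  have : 0 < r ^ α := Real.rpow_pos_of_pos hr α
  positivity

lemma base_ge_one (hgam : 0 < gam) {r : ℝ} (hr : 0 < r) : 1 ≤ 1 + gam / r ^ α := by
  have h1 : 0 < r ^ α := Real.rpow_pos_of_pos hr α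
  have : 0 ≤ gam / r ^ α := le_of_lt (div_pos hgam h1)
  linarith

lemma q_mem (hgam : 0 < gam) {r : ℝ} (hr : 0 < r) :
    0 < (1 + gam / r ^ α)⁻¹ ∧ (1 + gam / r ^ α)⁻¹ ≤ 1 := by
  constructor
  · exact inv_pos.2 (base_pos hgam hr)
  · rw [inv_le_one_iff₀]
    right; exact base_ge_one hgam hr

/-- the integrand of `H k`. -/
noncomputable def gInt (gam α : ℝ) (k : ℕ) : ℝ → ℝ :=
  fun r => (1 - ((1 + gam / r ^ α) ^ k)⁻¹) * r

lemma gInt_nonneg (hgam : 0 < gam) (k : ℕ) {r : ℝ} (hr : 0 < r) : 0 ≤ gInt gam α k r := by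
  have h := q_mem (α := α) hgam hr
  have h1 : ((1 + gam / r ^ α) ^ k)⁻¹ ≤ 1 := by
    rw [← inv_pow]
    exact pow_le_one₀ h.1.le h.2
  have : 0 ≤ 1 - ((1 + gam / r ^ α) ^ k)⁻¹ := by linarith
  exact mul_nonneg this hr.le

lemma gInt_le (hgam : 0 < gam) (k : ℕ) {r : ℝ} (hr : 1 < r) :
    gInt gam α k r ≤ (k * gam) * r ^ ((1 : ℝ) - α) := by
  have hr0 : 0 < r := lt_trans zero_lt_one hr
  have hpow : 0 < r ^ α := Real.rpow_pos_of_pos hr0 α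
  have h := q_mem (α := α) hgam hr0
  set y := (1 + gam / r ^ α)⁻¹ with hy
  have hxy : 1 - y ≤ gam / r ^ α := by
    rw [hy]
    have hb := base_pos (α := α) hgam hr0
    have hx : 0 < gam / r ^ α := div_pos hgam hpow
    have heq : 1 - (1 + gam / r ^ α)⁻¹ = (gam / r ^ α) / (1 + gam / r ^ α) := by
      field_simp
      ring
    rw [heq]
    exact div_le_self hx.le (by linarith)
  have hk : 1 - y ^ k ≤ k * (gam / r ^ α) := by
    calc 1 - y ^ k ≤ k * (1 - y) := one_sub_pow_le h.1.le h.2 k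
      _ ≤ k * (gam / r ^ α) := by
          apply mul_le_mul_of_nonneg_left hxy (by positivity)
  have hrw : gInt gam α k r = (1 - y ^ k) * r := by
    rw [gInt, hy, inv_pow]
  rw [hrw]
  have h2 : (1 - y ^ k) * r ≤ (k * (gam / r ^ α)) * r :=
    mul_le_mul_of_nonneg_right hk hr0.le
  refine h2.trans (le_of_eq ?_)
  rw [Real.rpow_sub hr0, Real.rpow_one]
  field_simp

lemma gInt_continuousOn (hgam : 0 < gam) (k : ℕ) {s : Set ℝ} (hs : ∀ r ∈ s, 0 < r) :
    ContinuousOn (gInt gam α k) s := by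
  have hrpow : ContinuousOn (fun r : ℝ => r ^ α) s := fun r hr =>
    (Real.continuousAt_rpow_const r α (Or.inl (hs r hr).ne')).continuousWithinAt
  have hbase : ContinuousOn (fun r : ℝ => 1 + gam / r ^ α) s :=
    continuousOn_const.add (continuousOn_const.div hrpow
      fun r hr => (Real.rpow_pos_of_pos (hs r hr) α).ne')
  have hp : ContinuousOn (fun r : ℝ => ((1 + gam / r ^ α) ^ k)) s := hbase.pow k
  have hpinv : ContinuousOn (fun r : ℝ => ((1 + gam / r ^ α) ^ k)⁻¹) s :=
    hp.inv₀ fun r hr => (pow_pos (base_pos hgam (hs r hr)) k).ne'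
  exact (continuousOn_const.sub hpinv).mul continuousOn_id

lemma gInt_integrableOn (hgam : 0 < gam) (hα : 2 < α) (k : ℕ) :
    IntegrableOn (gInt gam α k) (Ioi (1 : ℝ)) := by
  have hmaj : IntegrableOn (fun r : ℝ => (k * gam) * r ^ ((1:ℝ) - α)) (Ioi 1) :=
    (integrableOn_Ioi_rpow_of_lt (by linarith) zero_lt_one).const_mul _
  refine hmaj.mono' ((gInt_continuousOn hgam k fun r hr =>
    lt_trans zero_lt_one hr).aestronglyMeasurable measurableSet_Ioi) ?_
  refine (ae_restrict_iff' measurableSet_Ioi).2 (ae_of_all _ fun r hr => ?_)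
  have hr : 1 < r := hr
  rw [Real.norm_eq_abs, abs_of_nonneg (gInt_nonneg hgam k (lt_trans zero_lt_one hr))]
  exact gInt_le hgam k hr

end Analysis

lemma iUnion_Ioc_eq : (⋃ n : ℕ, Set.Ioc (1 : ℝ) (n : ℝ)) = Set.Ioi 1 := by
  ext r
  simp only [Set.mem_iUnion, Set.mem_Ioc, Set.mem_Ioi]
  constructor
  · rintro ⟨n, h1, _⟩; exact h1
  · intro h1
    obtain ⟨n, hn⟩ := exists_nat_ge r
    exact ⟨n, h1, hn⟩

lemma bounded_cont_integrableOn {f : ℝ → ℝ} {a b C : ℝ} (hf : ContinuousOn f (Ioc a b))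
    (hC : ∀ r ∈ Ioc a b, |f r| ≤ C) : IntegrableOn f (Ioc a b) := by
  refine Integrable.mono' (g := fun _ => C)
    (integrableOn_const measure_Ioc_lt_top.ne)
    (hf.aestronglyMeasurable measurableSet_Ioc) ?_
  exact (ae_restrict_iff' measurableSet_Ioc).2 (ae_of_all _ hC)

lemma binom_aux (y c : ℝ) (j k : ℕ) :
    ∑ i ∈ range (j + 1), (-1 : ℝ) ^ i * ((j.choose i : ℝ)) * (y ^ (k + i) * c)
      = y ^ k * (1 - y) ^ j * c := by
  have h : (1 - y) ^ j = ∑ i ∈ range (j + 1), (-1 : ℝ) ^ i * (j.choose i : ℝ) * y ^ i := by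
    have h2 := add_pow (-y) 1 j
    rw [show -y + 1 = 1 - y by ring] at h2
    rw [h2]
    refine Finset.sum_congr rfl fun i _ => ?_
    rw [neg_pow]
    ring
  rw [h, Finset.mul_sum, Finset.sum_mul]
  refine Finset.sum_congr rfl fun i _ => ?_
  rw [pow_add]
  ring

section Trunc

variable {gam α : ℝ}

/-- truncated moment integral. -/
noncomputable def Mfun (gam α t : ℝ) (n : ℕ) (k : ℕ) : ℝ :=
  ∫ r in Ioc (1 : ℝ) (n : ℝ), ((1 + gam / r ^ α) ^ k)⁻¹ * (2 * t * r)

lemma qk_contOn (hgam : 0 < gam) (t : ℝ) (k : ℕ) (n : ℕ) :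
    ContinuousOn (fun r : ℝ => ((1 + gam / r ^ α) ^ k)⁻¹ * (2 * t * r)) (Ioc 1 (n : ℝ)) := by
  have hs : ∀ r ∈ Ioc (1:ℝ) (n:ℝ), (0:ℝ) < r := fun r hr => lt_trans zero_lt_one hr.1
  have hrpow : ContinuousOn (fun r : ℝ => r ^ α) (Ioc 1 (n:ℝ)) := fun r hr =>
    (Real.continuousAt_rpow_const r α (Or.inl (hs r hr).ne')).continuousWithinAt
  have hbase : ContinuousOn (fun r : ℝ => 1 + gam / r ^ α) (Ioc 1 (n:ℝ)) :=
    continuousOn_const.add (continuousOn_const.div hrpow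
      fun r hr => (Real.rpow_pos_of_pos (hs r hr) α).ne')
  exact ((hbase.pow k).inv₀ fun r hr =>
    (pow_pos (base_pos hgam (hs r hr)) k).ne').mul
    ((continuousOn_const.mul continuousOn_id))

lemma qk_bound (hgam : 0 < gam) {t : ℝ} (ht : 0 ≤ t) (k : ℕ) (n : ℕ) :
    ∀ r ∈ Ioc (1:ℝ) (n:ℝ), |((1 + gam / r ^ α) ^ k)⁻¹ * (2 * t * r)| ≤ 2 * t * n := by
  intro r hr
  have hr0 : (0:ℝ) < r := lt_trans zero_lt_one hr.1
  have hq := q_mem (α := α) hgam hr0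
  have hqk : 0 < ((1 + gam / r ^ α) ^ k)⁻¹ := by
    rw [← inv_pow]; exact pow_pos hq.1 k
  have hqk1 : ((1 + gam / r ^ α) ^ k)⁻¹ ≤ 1 := by
    rw [← inv_pow]; exact pow_le_one₀ hq.1.le hq.2
  have h2 : 0 ≤ 2 * t * r := by positivity
  rw [abs_of_nonneg (mul_nonneg hqk.le h2)]
  calc ((1 + gam / r ^ α) ^ k)⁻¹ * (2 * t * r) ≤ 1 * (2 * t * r) :=
        mul_le_mul_of_nonneg_right hqk1 h2
    _ = 2 * t * r := one_mul _
    _ ≤ 2 * t * n := by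
        have := hr.2
        nlinarith

lemma qk_integrableOn (hgam : 0 < gam) {t : ℝ} (ht : 0 ≤ t) (k : ℕ) (n : ℕ) :
    IntegrableOn (fun r : ℝ => ((1 + gam / r ^ α) ^ k)⁻¹ * (2 * t * r)) (Ioc 1 (n:ℝ)) :=
  bounded_cont_integrableOn (qk_contOn hgam t k n) (qk_bound hgam ht k n)

lemma CM_Mfun (hgam : 0 < gam) {t : ℝ} (ht : 0 ≤ t) (n : ℕ) :
    CM (Mfun gam α t n) := by
  intro j k
  rw [dd_iter_sum]
  have hterm : ∀ i ∈ range (j + 1),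
      (-1:ℝ) ^ i * ((j.choose i : ℝ)) * Mfun gam α t n (k + i)
      = ∫ r in Ioc (1:ℝ) (n:ℝ),
          (-1:ℝ) ^ i * ((j.choose i : ℝ)) *
            (((1 + gam / r ^ α) ^ (k + i))⁻¹ * (2 * t * r)) := by
    intro i _
    rw [Mfun, ← integral_const_mul]
  rw [Finset.sum_congr rfl hterm, ← integral_finset_sum _
    (fun i _ => ((qk_integrableOn hgam ht (k + i) n).const_mul _))]
  refine setIntegral_nonneg measurableSet_Ioc fun r hr => ?_
  have hr0 : (0:ℝ) < r := lt_trans zero_lt_one hr.1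
  have hq := q_mem (α := α) hgam hr0
  have heq : ∀ i, ((1 + gam / r ^ α) ^ (k + i))⁻¹
      = ((1 + gam / r ^ α)⁻¹) ^ (k + i) := fun i => (inv_pow _ _).symm
  simp only [heq]
  rw [binom_aux ((1 + gam / r ^ α)⁻¹) (2 * t * r) j k]
  have h1 : (0:ℝ) ≤ (1 + gam / r ^ α)⁻¹ ^ k := pow_nonneg hq.1.le k
  have h2 : (0:ℝ) ≤ (1 - (1 + gam / r ^ α)⁻¹) ^ j := pow_nonneg (by linarith [hq.2]) j
  have h3 : (0:ℝ) ≤ 2 * t * r := by positivity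
  positivity

lemma CM_exp_Mfun (hgam : 0 < gam) {t : ℝ} (ht : 0 ≤ t) (n : ℕ) :
    CM (fun k => Real.exp (Mfun gam α t n k)) := by
  apply CM.of_tendsto
    (F := fun N k => ∑ m ∈ range N, (Mfun gam α t n k) ^ m / (m.factorial : ℝ))
  · intro N
    refine CM.sum (range N) _ fun m _ => ?_
    have hrw : (fun k => (Mfun gam α t n k) ^ m / (m.factorial : ℝ))
        = fun k => ((m.factorial : ℝ))⁻¹ * (Mfun gam α t n k) ^ m := by
      funext k; rw [div_eq_mul_inv]; ring
    rw [hrw]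
    exact CM.smul (by positivity) ((CM_Mfun hgam ht n).pow m)
  · intro k
    have h := (NormedSpace.expSeries_div_hasSum_exp (Mfun gam α t n k)).tendsto_sum_nat
    rw [Real.exp_eq_exp_ℝ]
    exact h

end Trunc

section Main

variable {gam α : ℝ}

lemma trunc_decomp (hgam : 0 < gam) {t : ℝ} (ht : 0 ≤ t) (n k : ℕ) :
    Real.exp (-(2 * t) * ∫ r in Set.Ioc (1:ℝ) (n:ℝ), gInt gam α k r)
      = Real.exp (-(∫ r in Set.Ioc (1:ℝ) (n:ℝ), 2 * t * r)) * Real.exp (Mfun gam α t n k) := by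
  have h1 : IntegrableOn (fun r : ℝ => 2 * t * r) (Set.Ioc 1 (n:ℝ)) := by
    have h := qk_integrableOn (α := α) hgam ht 0 n
    simpa using h
  have h2 := qk_integrableOn (α := α) hgam ht k n
  have key : Mfun gam α t n k - (∫ r in Set.Ioc (1:ℝ) (n:ℝ), 2 * t * r)
      = -(2 * t) * ∫ r in Set.Ioc (1:ℝ) (n:ℝ), gInt gam α k r := by
    rw [Mfun, ← integral_sub h2 h1, ← integral_const_mul]
    refine setIntegral_congr_fun measurableSet_Ioc fun r _ => ?_
    show (((1 + gam / r ^ α) ^ k)⁻¹ * (2 * t * r)) - 2 * t * r = -(2*t) * gInt gam α k r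
    rw [gInt]; ring
  rw [← key, Real.exp_sub, Real.exp_neg, div_eq_mul_inv, mul_comm]

lemma CM_E (hgam : 0 < gam) (hα : 2 < α) (H : ℕ → ℝ)
    (hH : ∀ k, H k = ∫ r in Set.Ioi (1:ℝ), gInt gam α k r)
    {t : ℝ} (ht : 0 ≤ t) : CM (fun k => Real.exp (-(2*t) * H k)) := by
  apply CM.of_tendsto
    (F := fun n k => Real.exp (-(2*t) * ∫ r in Set.Ioc (1:ℝ) (n:ℝ), gInt gam α k r))
  · intro n
    have hrw : (fun k => Real.exp (-(2*t) * ∫ r in Set.Ioc (1:ℝ) (n:ℝ), gInt gam α k r))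
        = fun k => Real.exp (-(∫ r in Set.Ioc (1:ℝ) (n:ℝ), 2 * t * r)) *
            Real.exp (Mfun gam α t n k) := funext fun k => trunc_decomp hgam ht n k
    rw [hrw]
    exact CM.smul (Real.exp_pos _).le (CM_exp_Mfun hgam ht n)
  · intro k
    have hmono : Monotone (fun n : ℕ => Set.Ioc (1:ℝ) (n:ℝ)) := fun a b hab =>
      Set.Ioc_subset_Ioc_right (Nat.cast_le.2 hab)
    have hint : IntegrableOn (gInt gam α k) (⋃ n : ℕ, Set.Ioc (1:ℝ) (n:ℝ)) := by
      rw [iUnion_Ioc_eq]; exact gInt_integrableOn hgam hα k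
    have h := tendsto_setIntegral_of_monotone (fun n => measurableSet_Ioc) hmono hint
    rw [iUnion_Ioc_eq] at h
    have h2 := h.const_mul (-(2*t))
    rw [← hH k] at h2
    exact (Real.continuous_exp.tendsto _).comp h2

lemma H_nonneg (hgam : 0 < gam) (H : ℕ → ℝ)
    (hH : ∀ k, H k = ∫ r in Set.Ioi (1:ℝ), gInt gam α k r) (k : ℕ) : 0 ≤ H k := by
  rw [hH]
  exact setIntegral_nonneg measurableSet_Ioi fun r hr =>
    gInt_nonneg hgam k (lt_trans zero_lt_one hr)

lemma inv_eq_integral {b : ℝ} (hb : 0 < b) :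
    b⁻¹ = ∫ s in Set.Ioi (0:ℝ), Real.exp (-(b * s)) := by
  have h := integral_comp_mul_left_Ioi (fun x => Real.exp (-x)) 0 hb
  rw [mul_zero] at h
  rw [h, integral_exp_neg_Ioi_zero, smul_eq_mul, mul_one]

lemma CM_a (hgam : 0 < gam) (hα : 2 < α) (H : ℕ → ℝ)
    (hH : ∀ k, H k = ∫ r in Set.Ioi (1:ℝ), gInt gam α k r) :
    CM (fun k => (1 + 2 * H k)⁻¹) := by
  have hb : ∀ m, 0 < 1 + 2 * H m := fun m => by
    have := H_nonneg hgam H hH m; linarith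
  intro j k
  rw [dd_iter_sum]
  have hterm : ∀ i ∈ range (j + 1),
      (-1:ℝ) ^ i * ((j.choose i : ℝ)) * (fun m => (1 + 2 * H m)⁻¹) (k + i)
      = ∫ s in Set.Ioi (0:ℝ),
          (-1:ℝ) ^ i * ((j.choose i : ℝ)) * Real.exp (-((1 + 2 * H (k + i)) * s)) := by
    intro i _
    show (-1:ℝ) ^ i * ((j.choose i : ℝ)) * (1 + 2 * H (k + i))⁻¹ = _
    rw [inv_eq_integral (hb (k + i)), ← integral_const_mul]
  rw [Finset.sum_congr rfl hterm, ← integral_finset_sum]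
  · refine setIntegral_nonneg measurableSet_Ioi fun s hs => ?_
    have hs0 : (0:ℝ) < s := hs
    have hcm := CM_E hgam hα H hH hs0.le j k
    rw [dd_iter_sum] at hcm
    have hexp : ∑ i ∈ range (j + 1),
        (-1:ℝ) ^ i * ((j.choose i : ℝ)) * Real.exp (-((1 + 2 * H (k + i)) * s))
        = Real.exp (-s) * ∑ i ∈ range (j + 1),
            (-1:ℝ) ^ i * ((j.choose i : ℝ)) * Real.exp (-(2*s) * H (k + i)) := by
      rw [Finset.mul_sum]
      refine Finset.sum_congr rfl fun i _ => ?_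
      have harg : -((1 + 2 * H (k + i)) * s) = (-s) + (-(2*s) * H (k + i)) := by ring
      rw [harg, Real.exp_add]; ring
    rw [hexp]
    exact mul_nonneg (Real.exp_pos _).le hcm
  · intro i _
    have h := (exp_neg_integrableOn_Ioi 0 (hb (k + i))).const_mul
      ((-1:ℝ) ^ i * ((j.choose i : ℝ)))
    have heq : (fun s : ℝ => (-1:ℝ) ^ i * ((j.choose i : ℝ)) *
        Real.exp (-(1 + 2 * H (k + i)) * s))
        = fun s : ℝ => (-1:ℝ) ^ i * ((j.choose i : ℝ)) *
            Real.exp (-((1 + 2 * H (k + i)) * s)) := by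
      funext s; rw [neg_mul]
    rw [← heq]
    exact h

lemma CM.le_head {f : ℕ → ℝ} (hf : CM f) (j : ℕ) : dd^[j] f 0 ≤ f 0 := by
  induction j with
  | zero => simp
  | succ n ih =>
      rw [dd_iter_succ_outer]
      have := hf n 1
      linarith

end Main

end Stmt11Aux

open Stmt11Aux in
/-- For `Γ > 0` and `α > 2`, the alternating sum
`A_j = ∑_{k=0}^j (-1)^k C(j,k)/(1 + 2H(k))` lies in `[0,1]` for every `j ≥ 0`. -/
theorem stmt11 (gam α : ℝ) (hgam : 0 < gam) (hα : 2 < α)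
    (H : ℕ → ℝ)
    (hH : ∀ k : ℕ, H k = ∫ r in Set.Ioi (1:ℝ), (1 - ((1 + gam / r ^ α) ^ k)⁻¹) * r)
    (j : ℕ) :
    0 ≤ ∑ k ∈ Finset.range (j + 1), (-1 : ℝ) ^ k * (j.choose k) / (1 + 2 * H k) ∧
      ∑ k ∈ Finset.range (j + 1), (-1 : ℝ) ^ k * (j.choose k) / (1 + 2 * H k) ≤ 1 := by
  have hH' : ∀ k, H k = ∫ r in Set.Ioi (1:ℝ), gInt gam α k r := by
    intro k; rw [hH k]; rfl
  have hcm : CM (fun k => (1 + 2 * H k)⁻¹) := CM_a hgam hα H hH'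
  have key : (∑ k ∈ Finset.range (j + 1), (-1 : ℝ) ^ k * (j.choose k) / (1 + 2 * H k))
      = dd^[j] (fun k => (1 + 2 * H k)⁻¹) 0 := by
    rw [dd_iter_sum]
    refine Finset.sum_congr rfl fun i _ => ?_
    rw [zero_add, div_eq_mul_inv]
  have hH0 : H 0 = 0 := by
    rw [hH 0]
    simp
  have ha0 : (fun k => (1 + 2 * H k)⁻¹) 0 = 1 := by
    simp [hH0]
  constructor
  · rw [key]; exact hcm j 0
  · rw [key]
    exact (hcm.le_head j).trans_eq ha0
end

section
/- Let Γ > 0 and α > 2 + 2Γ, set H(k) = ∫_{1}^{∞} (1 − (1 + Γ/r^α)^{−k}) r dr and A_j = ∑_{k=0}^{j} (−1)^k binom(j,k)/(1 + 2 H(k)) for integers j, k ≥ 0. Then for every positive integer M, the series ∑_{j=0}^{∞} A_j^M converges to a finite value. -/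
open MeasureTheory

namespace Stmt15Aux

/-- The backward difference operator `f k - f (k+1)`. -/
def DD (f : ℕ → ℝ) : ℕ → ℝ := fun k => f k - f (k + 1)

/-- Complete monotonicity of a sequence. -/
def CM (f : ℕ → ℝ) : Prop := ∀ j k, 0 ≤ DD^[j] f k

lemma DD_apply (f : ℕ → ℝ) (k : ℕ) : DD f k = f k - f (k + 1) := rfl

lemma DD_congr {f g : ℕ → ℝ} (h : ∀ k, f k = g k) : DD f = DD g := by
  have : f = g := funext h
  rw [this]

lemma DD_add (f g : ℕ → ℝ) : DD (fun k => f k + g k) = fun k => DD f k + DD g k := by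
  funext k; simp only [DD]; ring

lemma DD_const_mul (c : ℝ) (f : ℕ → ℝ) :
    DD (fun k => c * f k) = fun k => c * DD f k := by
  funext k; simp only [DD]; ring

lemma DD_iter_add (f g : ℕ → ℝ) (j : ℕ) :
    DD^[j] (fun k => f k + g k) = fun k => DD^[j] f k + DD^[j] g k := by
  induction j generalizing f g with
  | zero => simp
  | succ j ih =>
      rw [Function.iterate_succ_apply, Function.iterate_succ_apply,
        Function.iterate_succ_apply, DD_add, ih]

lemma DD_iter_const_mul (c : ℝ) (f : ℕ → ℝ) (j : ℕ) :
    DD^[j] (fun k => c * f k) = fun k => c * DD^[j] f k := by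
  induction j generalizing f with
  | zero => simp
  | succ j ih =>
      rw [Function.iterate_succ_apply, Function.iterate_succ_apply, DD_const_mul, ih]

lemma DD_iter_zero (j : ℕ) : DD^[j] (fun _ => (0:ℝ)) = fun _ => 0 := by
  induction j with
  | zero => simp
  | succ j ih =>
      rw [Function.iterate_succ_apply]
      have : DD (fun _ => (0:ℝ)) = fun _ => (0:ℝ) := by funext m; simp [DD]
      rw [this, ih]

lemma DD_iter_const (c : ℝ) (j : ℕ) (k : ℕ) :
    DD^[j] (fun _ => c) k = if j = 0 then c else 0 := by
  cases j with
  | zero => simp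
  | succ j =>
      rw [Function.iterate_succ_apply]
      have : DD (fun _ => c) = fun _ => (0:ℝ) := by funext m; simp [DD]
      rw [this, DD_iter_zero]
      simp

lemma DD_shift (f : ℕ → ℝ) : DD (fun k => f (k + 1)) = fun k => DD f (k + 1) := rfl

lemma DD_iter_shift (f : ℕ → ℝ) (j : ℕ) :
    DD^[j] (fun k => f (k + 1)) = fun k => DD^[j] f (k + 1) := by
  induction j generalizing f with
  | zero => simp
  | succ j ih =>
      rw [Function.iterate_succ_apply, Function.iterate_succ_apply, DD_shift, ih]


lemma cm_const {c : ℝ} (hc : 0 ≤ c) : CM (fun _ => c) := by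
  intro j k
  rw [DD_iter_const]
  split <;> simp [hc]

lemma cm_add {f g : ℕ → ℝ} (hf : CM f) (hg : CM g) : CM (fun k => f k + g k) := by
  intro j k
  rw [DD_iter_add]
  exact add_nonneg (hf j k) (hg j k)

lemma cm_const_mul {c : ℝ} (hc : 0 ≤ c) {f : ℕ → ℝ} (hf : CM f) :
    CM (fun k => c * f k) := by
  intro j k
  rw [DD_iter_const_mul]
  exact mul_nonneg hc (hf j k)

lemma cm_shift {f : ℕ → ℝ} (hf : CM f) : CM (fun k => f (k + 1)) := by
  intro j k
  rw [DD_iter_shift]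
  exact hf j (k + 1)

lemma cm_DD {f : ℕ → ℝ} (hf : CM f) : CM (DD f) := by
  intro j k
  rw [← Function.iterate_succ_apply]
  exact hf (j + 1) k

/-- Discrete Leibniz rule. -/
lemma DD_mul (f g : ℕ → ℝ) :
    DD (fun k => f k * g k) = fun k => f k * DD g k + DD f k * g (k + 1) := by
  funext k; simp only [DD]; ring

/-- Product of completely monotone sequences is completely monotone. -/
lemma cm_mul {f g : ℕ → ℝ} (hf : CM f) (hg : CM g) : CM (fun k => f k * g k) := by
  have key : ∀ j, ∀ f g : ℕ → ℝ, CM f → CM g → ∀ k, 0 ≤ DD^[j] (fun k => f k * g k) k := by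
    intro j
    induction j with
    | zero => intro f g hf hg k; exact mul_nonneg (hf 0 k) (hg 0 k)
    | succ j ih =>
        intro f g hf hg k
        rw [Function.iterate_succ_apply, DD_mul, DD_iter_add]
        exact add_nonneg (ih f (DD g) hf (cm_DD hg) k)
          (ih (DD f) (fun k => g (k + 1)) (cm_DD hf) (cm_shift hg) k)
  exact fun j k => key j f g hf hg k

lemma cm_pow {f : ℕ → ℝ} (hf : CM f) (n : ℕ) : CM (fun k => f k ^ n) := by
  induction n with
  | zero =>
      simpa using cm_const (by norm_num : (0:ℝ) ≤ 1)
  | succ n ih =>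
      have : (fun k => f k ^ (n + 1)) = fun k => f k ^ n * f k := by
        funext k; ring
      rw [this]
      exact cm_mul ih hf

lemma DD_iter_geom (x : ℝ) (j : ℕ) :
    DD^[j] (fun k => x ^ k) = fun k => x ^ k * (1 - x) ^ j := by
  induction j with
  | zero => simp
  | succ j ih =>
      rw [Function.iterate_succ_apply]
      have : DD (fun k => x ^ k) = fun k => (1 - x) * x ^ k := by
        funext k; simp only [DD]; ring
      rw [this, DD_iter_const_mul, ih]
      funext k; ring

/-- Pointwise limits of (eventually) completely monotone families are completely monotone. -/
lemma DD_iter_tendsto {ι : Type*} {l : Filter ι} {F : ι → ℕ → ℝ} {f : ℕ → ℝ}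
    (h : ∀ k, Filter.Tendsto (fun i => F i k) l (nhds (f k))) (j : ℕ) :
    ∀ k, Filter.Tendsto (fun i => DD^[j] (F i) k) l (nhds (DD^[j] f k)) := by
  induction j with
  | zero => simpa using h
  | succ j ih =>
      intro k
      rw [Function.iterate_succ_apply']
      have : ∀ i, DD^[j+1] (F i) k = DD^[j] (F i) k - DD^[j] (F i) (k + 1) := by
        intro i; rw [Function.iterate_succ_apply']; rfl
      simp only [this, DD_apply]
      exact (ih k).sub (ih (k + 1))

lemma cm_of_tendsto {ι : Type*} {l : Filter ι} [l.NeBot] {F : ι → ℕ → ℝ} {f : ℕ → ℝ}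
    (hF : ∀ᶠ i in l, CM (F i))
    (h : ∀ k, Filter.Tendsto (fun i => F i k) l (nhds (f k))) : CM f := by
  intro j k
  refine ge_of_tendsto (DD_iter_tendsto h j k) ?_
  filter_upwards [hF] with i hi using hi j k


lemma DD_iter_tsum (a : ℕ → ℕ → ℝ) (h : ∀ k, Summable fun n => a n k) (j : ℕ) :
    (∀ k, Summable fun n => DD^[j] (a n) k) ∧
      ∀ k, DD^[j] (fun m => ∑' n, a n m) k = ∑' n, DD^[j] (a n) k := by
  induction j generalizing a with
  | zero => exact ⟨h, fun k => rfl⟩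
  | succ j ih =>
      have hfun : DD (fun m => ∑' n, a n m) = fun m => ∑' n, DD (a n) m := by
        funext m
        exact (Summable.tsum_sub (h m) (h (m + 1))).symm
      have h' : ∀ k, Summable fun n => DD (a n) k := fun k => (h k).sub (h (k + 1))
      obtain ⟨s1, s2⟩ := ih (fun n => DD (a n)) h'
      constructor
      · intro k
        simpa only [Function.iterate_succ_apply] using s1 k
      · intro k
        rw [Function.iterate_succ_apply, hfun]
        simpa only [Function.iterate_succ_apply] using s2 k

lemma cm_exp_mul {m : ℕ → ℝ} (hm : CM m) {τ : ℝ} (hτ : 0 ≤ τ) :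
    CM (fun k => Real.exp (τ * m k)) := by
  have hrw : (fun k => Real.exp (τ * m k)) = fun k => ∑' n : ℕ, (τ ^ n / (n.factorial : ℝ)) * m k ^ n := by
    funext k
    rw [Real.exp_eq_exp_ℝ, NormedSpace.exp_eq_tsum_div]
    show ∑' n : ℕ, (τ * m k) ^ n / (n.factorial : ℝ) = _
    congr 1
    funext n
    rw [mul_pow]
    ring
  have hsum : ∀ k, Summable fun n : ℕ => (τ ^ n / (n.factorial : ℝ)) * m k ^ n := by
    intro k
    refine (Real.summable_pow_div_factorial (τ * m k)).congr fun n => ?_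
    rw [mul_pow]
    ring
  rw [hrw]
  intro j k
  rw [(DD_iter_tsum (fun n m' => (τ ^ n / (n.factorial : ℝ)) * m m' ^ n) hsum j).2 k]
  refine tsum_nonneg fun n => ?_
  rw [DD_iter_const_mul]
  exact mul_nonneg (div_nonneg (pow_nonneg hτ n) (Nat.cast_nonneg _)) (cm_pow hm n j k)

open fwdDiff in
lemma DD_iter_eq_pow_smul (f : ℕ → ℝ) (j : ℕ) :
    DD^[j] f = fun y => (-1 : ℝ) ^ j * ((Δ_[1])^[j] f y) := by
  induction j generalizing f with
  | zero => simp
  | succ j ih =>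
      funext y
      rw [Function.iterate_succ_apply, ih]
      have hDD : DD f = (-1 : ℝ) • (Δ_[1] f) := by
        funext k
        simp only [DD, fwdDiff, Pi.smul_apply, smul_eq_mul]
        ring
      rw [hDD, fwdDiff_iter_const_smul, ← Function.iterate_succ_apply]
      simp only [Pi.smul_apply, smul_eq_mul]
      ring

open fwdDiff in
lemma DD_iter_eq_sum (f : ℕ → ℝ) (j : ℕ) (y : ℕ) :
    DD^[j] f y = ∑ k ∈ Finset.range (j + 1), (-1 : ℝ) ^ k * (j.choose k) * f (y + k) := by
  simp only [DD_iter_eq_pow_smul]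
  rw [fwdDiff_iter_eq_sum_shift, Finset.mul_sum]
  refine Finset.sum_congr rfl fun k hk => ?_
  have hk' : k ≤ j := Nat.lt_succ_iff.mp (Finset.mem_range.mp hk)
  have hy : y + k • (1 : ℕ) = y + k := by simp
  rw [hy, zsmul_eq_mul]
  push_cast
  have hsign : (-1 : ℝ) ^ j * (-1 : ℝ) ^ (j - k) = (-1 : ℝ) ^ k := by
    have h1 : (-1 : ℝ) ^ j = (-1 : ℝ) ^ (j - k) * (-1 : ℝ) ^ k := by
      rw [← pow_add, Nat.sub_add_cancel hk']
    have h2 : (-1 : ℝ) ^ (j - k) * (-1 : ℝ) ^ (j - k) = 1 := by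
      rw [← pow_add]
      exact Even.neg_one_pow ⟨j - k, rfl⟩
    calc (-1 : ℝ) ^ j * (-1 : ℝ) ^ (j - k)
        = ((-1 : ℝ) ^ (j - k) * (-1 : ℝ) ^ (j - k)) * (-1 : ℝ) ^ k := by rw [h1]; ring
      _ = (-1 : ℝ) ^ k := by rw [h2, one_mul]
  calc (-1 : ℝ) ^ j * ((-1 : ℝ) ^ (j - k) * (j.choose k : ℝ) * f (y + k))
      = ((-1 : ℝ) ^ j * (-1 : ℝ) ^ (j - k)) * (j.choose k : ℝ) * f (y + k) := by ring
    _ = (-1 : ℝ) ^ k * (j.choose k : ℝ) * f (y + k) := by rw [hsign]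

lemma DD_iter_succ_point (f : ℕ → ℝ) (j k : ℕ) :
    DD^[j + 1] f k = DD^[j] f k - DD^[j] f (k + 1) := by
  rw [Function.iterate_succ_apply']
  rfl

lemma sum_DD_iter (f : ℕ → ℝ) (N : ℕ) :
    ∑ j ∈ Finset.range N, DD^[j] f 1 = f 0 - DD^[N] f 0 := by
  induction N with
  | zero => simp
  | succ N ih =>
      rw [Finset.sum_range_succ, ih, DD_iter_succ_point]
      ring

lemma DD_iter_le_head {f : ℕ → ℝ} (hf : CM f) (j : ℕ) : DD^[j] f 1 ≤ f 1 := by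
  induction j with
  | zero => exact le_refl _
  | succ j ih =>
      rw [DD_iter_succ_point]
      have := hf j 2
      linarith


/-! ## Analytic part -/

open Set Filter Real

noncomputable def GG (gam α r : ℝ) : ℝ := 1 + gam / r ^ α

noncomputable def bI (gam α : ℝ) (k : ℕ) : ℝ :=
  ∫ r in Set.Ioi (1:ℝ), (GG gam α r * r) * (1 - ((GG gam α r)⁻¹) ^ k)

noncomputable def mR (gam α R : ℝ) (k : ℕ) : ℝ :=
  ∫ r in (1:ℝ)..R, (GG gam α r * r) * ((GG gam α r)⁻¹) ^ k

section analytic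

variable {gam α : ℝ} (hgam : 0 < gam) (hα2 : 2 < α)

lemma one_sub_pow_le {x : ℝ} (h0 : 0 ≤ x) (h1 : x ≤ 1) (k : ℕ) :
    1 - x ^ k ≤ k * (1 - x) := by
  induction k with
  | zero => simp
  | succ k ih =>
      have hxk : x ^ k ≤ 1 := pow_le_one₀ h0 h1
      have h2 : x * (1 - x ^ k) ≤ 1 - x ^ k :=
        mul_le_of_le_one_left (by linarith) h1
      have : 1 - x ^ (k + 1) = (1 - x) + x * (1 - x ^ k) := by ring
      rw [this]
      push_cast
      nlinarith

section ptwise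
variable {r : ℝ} (hr : 1 ≤ r)

include hr hgam in
lemma GG_pos : 0 < GG gam α r := by
  have hr0 : (0:ℝ) < r := lt_of_lt_of_le one_pos hr
  have : 0 < r ^ α := Real.rpow_pos_of_pos hr0 α
  have : 0 < gam / r ^ α := div_pos hgam this
  unfold GG; linarith

include hr hgam in
lemma GG_one_lt : 1 < GG gam α r := by
  have hr0 : (0:ℝ) < r := lt_of_lt_of_le one_pos hr
  have : 0 < r ^ α := Real.rpow_pos_of_pos hr0 α
  have : 0 < gam / r ^ α := div_pos hgam this
  unfold GG; linarith

include hr hgam in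
lemma GG_inv_mem : 0 < (GG gam α r)⁻¹ ∧ (GG gam α r)⁻¹ ≤ 1 := by
  have h1 := GG_one_lt hgam (α := α) hr
  constructor
  · exact inv_pos.mpr (by linarith)
  · exact inv_le_one_of_one_le₀ h1.le

include hr hgam in
lemma GG_mul_one_sub_inv : GG gam α r * (1 - (GG gam α r)⁻¹) = gam / r ^ α := by
  have h0 := GG_pos hgam (α := α) hr
  have : GG gam α r * (1 - (GG gam α r)⁻¹) = GG gam α r - 1 := by
    field_simp
  rw [this]; unfold GG; ring

include hr hgam in
lemma b_integrand_bound (k : ℕ) :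
    (GG gam α r * r) * (1 - ((GG gam α r)⁻¹) ^ k) ≤ gam * k * r ^ (1 - α) := by
  have hr0 : (0:ℝ) < r := lt_of_lt_of_le one_pos hr
  have hG := GG_pos hgam (α := α) hr
  obtain ⟨hx0, hx1⟩ := GG_inv_mem hgam (α := α) hr
  have h1 : 1 - ((GG gam α r)⁻¹) ^ k ≤ k * (1 - (GG gam α r)⁻¹) :=
    one_sub_pow_le hx0.le hx1 k
  have h2 : (GG gam α r * r) * (1 - ((GG gam α r)⁻¹) ^ k)
      ≤ (GG gam α r * r) * (k * (1 - (GG gam α r)⁻¹)) := by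
    have : 0 ≤ GG gam α r * r := mul_nonneg hG.le hr0.le
    exact mul_le_mul_of_nonneg_left h1 this
  have h3 : (GG gam α r * r) * (k * (1 - (GG gam α r)⁻¹))
      = (k : ℝ) * (gam / r ^ α) * r := by
    rw [show (GG gam α r * r) * (k * (1 - (GG gam α r)⁻¹))
        = (k:ℝ) * (GG gam α r * (1 - (GG gam α r)⁻¹)) * r by ring,
      GG_mul_one_sub_inv hgam hr]
  have h4 : (k : ℝ) * (gam / r ^ α) * r = gam * k * (r ^ (1-α)) := by
    rw [Real.rpow_sub hr0, Real.rpow_one]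
    ring
  linarith [h2, h3.le, h4.le]

include hr hgam in
lemma b_integrand_nonneg (k : ℕ) :
    0 ≤ (GG gam α r * r) * (1 - ((GG gam α r)⁻¹) ^ k) := by
  have hr0 : (0:ℝ) < r := lt_of_lt_of_le one_pos hr
  have hG := GG_pos hgam (α := α) hr
  obtain ⟨hx0, hx1⟩ := GG_inv_mem hgam (α := α) hr
  have : ((GG gam α r)⁻¹) ^ k ≤ 1 := pow_le_one₀ hx0.le hx1
  have h2 : 0 ≤ 1 - ((GG gam α r)⁻¹) ^ k := by linarith
  exact mul_nonneg (mul_nonneg hG.le hr0.le) h2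

end ptwise

include hgam in
lemma GG_contOn : ContinuousOn (GG gam α) (Set.Ici 1) := by
  apply continuousOn_const.add
  apply continuousOn_const.div
  · intro r hr
    have hr0 : r ≠ 0 := by
      have : (1:ℝ) ≤ r := hr
      positivity
    exact (Real.continuousAt_rpow_const r α (Or.inl hr0)).continuousWithinAt
  · intro r hr
    have hr0 : (0:ℝ) < r := lt_of_lt_of_le one_pos hr
    exact (Real.rpow_pos_of_pos hr0 α).ne'

include hgam hα2 in
lemma integrableOn_rpow_bound :
    IntegrableOn (fun r : ℝ => r ^ (1 - α)) (Set.Ioi 1) := by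
  exact integrableOn_Ioi_rpow_of_lt (by linarith) one_pos

include hgam hα2 in
/-- Generic integrability criterion on `Ioi 1` from the `r ^ (1-α)` bound. -/
lemma integrableOn_of_bound (f : ℝ → ℝ) (c : ℝ)
    (hcont : ContinuousOn f (Set.Ici 1))
    (hbound : ∀ r ∈ Set.Ioi (1:ℝ), ‖f r‖ ≤ c * r ^ (1 - α)) :
    IntegrableOn f (Set.Ioi (1:ℝ)) := by
  have hi : IntegrableOn (fun r : ℝ => c * r ^ (1 - α)) (Set.Ioi 1) :=
    (integrableOn_rpow_bound hgam hα2).const_mul c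
  refine Integrable.mono' hi ?_ ?_
  · exact (hcont.mono Set.Ioi_subset_Ici_self).aestronglyMeasurable measurableSet_Ioi
  · filter_upwards [ae_restrict_mem measurableSet_Ioi] with r hr using hbound r hr

end analytic


section interchange

lemma DD_iter_intervalIntegral (F : ℕ → ℝ → ℝ) (a b : ℝ)
    (hF : ∀ k, IntervalIntegrable (F k) volume a b) (j : ℕ) :
    ∀ k, DD^[j] (fun m => ∫ r in a..b, F m r) k
      = ∫ r in a..b, DD^[j] (fun m => F m r) k := by
  induction j generalizing F with
  | zero => intro k; rfl
  | succ j ih =>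
      intro k
      have hfun : DD (fun m => ∫ r in a..b, F m r)
          = fun m => ∫ r in a..b, (F m r - F (m + 1) r) := by
        funext m
        rw [DD_apply, intervalIntegral.integral_sub (hF m) (hF (m + 1))]
      have hF' : ∀ k, IntervalIntegrable (fun r => F k r - F (k + 1) r) volume a b :=
        fun k => (hF k).sub (hF (k + 1))
      rw [Function.iterate_succ_apply, hfun]
      have := ih (fun m r => F m r - F (m + 1) r) hF' k
      exact this

lemma DD_iter_integral (F : ℕ → ℝ → ℝ) (μ : Measure ℝ)
    (hF : ∀ k, Integrable (F k) μ) (j : ℕ) :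
    ∀ k, DD^[j] (fun m => ∫ r, F m r ∂μ) k = ∫ r, DD^[j] (fun m => F m r) k ∂μ := by
  induction j generalizing F with
  | zero => intro k; rfl
  | succ j ih =>
      intro k
      have hfun : DD (fun m => ∫ r, F m r ∂μ)
          = fun m => ∫ r, (F m r - F (m + 1) r) ∂μ := by
        funext m
        rw [DD_apply, integral_sub (hF m) (hF (m + 1))]
      have hF' : ∀ k, Integrable (fun r => F k r - F (k + 1) r) μ :=
        fun k => (hF k).sub (hF (k + 1))
      rw [Function.iterate_succ_apply, hfun]
      have := ih (fun m r => F m r - F (m + 1) r) hF' k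
      exact this

end interchange

section analytic2

variable {gam α : ℝ} (hgam : 0 < gam) (hα2 : 2 < α)

include hgam in
lemma b_integrand_contOn (k : ℕ) :
    ContinuousOn (fun r => (GG gam α r * r) * (1 - ((GG gam α r)⁻¹) ^ k)) (Set.Ici 1) := by
  have hG := GG_contOn (gam := gam) (α := α) hgam
  have hGne : ∀ r ∈ Set.Ici (1:ℝ), GG gam α r ≠ 0 :=
    fun r hr => (GG_pos hgam hr).ne'
  exact ((hG.mul continuousOn_id).mul
    (continuousOn_const.sub ((hG.inv₀ hGne).pow k)))

include hgam hα2 in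
lemma bI_integrable (k : ℕ) :
    IntegrableOn (fun r => (GG gam α r * r) * (1 - ((GG gam α r)⁻¹) ^ k))
      (Set.Ioi (1:ℝ)) := by
  refine integrableOn_of_bound hgam hα2 _ (gam * k) (b_integrand_contOn hgam k) ?_
  intro r hr
  have hr1 : (1:ℝ) ≤ r := le_of_lt hr
  rw [Real.norm_eq_abs, abs_of_nonneg (b_integrand_nonneg hgam hr1 k)]
  exact b_integrand_bound hgam hr1 k

include hgam in
lemma bI_nonneg (k : ℕ) : 0 ≤ bI gam α k := by
  refine setIntegral_nonneg measurableSet_Ioi fun r hr => ?_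
  exact b_integrand_nonneg hgam (le_of_lt hr) k

lemma bI_zero : bI gam α 0 = 0 := by
  unfold bI
  simp

include hgam hα2 in
lemma integral_rpow_tail : ∫ r in Set.Ioi (1:ℝ), gam * r ^ (1 - α) = gam / (α - 2) := by
  rw [MeasureTheory.integral_const_mul, integral_Ioi_rpow_of_lt (by linarith : 1 - α < -1) one_pos]
  rw [Real.one_rpow]
  have h2 : α - 2 ≠ 0 := by intro h; linarith
  have h3 : 1 - α + 1 = -(α - 2) := by ring
  rw [h3, neg_div_neg_eq]
  ring

include hgam hα2 in
lemma H_integrand_integrable (n : ℕ) :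
    IntegrableOn (fun r => (1 - ((GG gam α r) ^ n)⁻¹) * r) (Set.Ioi (1:ℝ)) := by
  refine integrableOn_of_bound hgam hα2 _ (gam * n) ?_ ?_
  · have hG := GG_contOn (gam := gam) (α := α) hgam
    have hGne : ∀ r ∈ Set.Ici (1:ℝ), GG gam α r ^ n ≠ 0 :=
      fun r hr => (pow_pos (GG_pos hgam hr) n).ne'
    exact (continuousOn_const.sub ((hG.pow n).inv₀ hGne)).mul continuousOn_id
  · intro r hr
    have hr1 : (1:ℝ) ≤ r := le_of_lt hr
    have hr0 : (0:ℝ) < r := lt_of_lt_of_le one_pos hr1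
    have hG := GG_pos hgam (α := α) hr1
    have hGone := GG_one_lt hgam (α := α) hr1
    obtain ⟨hx0, hx1⟩ := GG_inv_mem hgam (α := α) hr1
    have hinv : ((GG gam α r) ^ n)⁻¹ = ((GG gam α r)⁻¹) ^ n := by
      rw [inv_pow]
    have h1 : 1 - ((GG gam α r)⁻¹) ^ n ≤ n * (1 - (GG gam α r)⁻¹) :=
      one_sub_pow_le hx0.le hx1 n
    have hxn : ((GG gam α r)⁻¹) ^ n ≤ 1 := pow_le_one₀ hx0.le hx1
    have hnn : 0 ≤ (1 - ((GG gam α r)⁻¹) ^ n) * r := by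
      apply mul_nonneg _ hr0.le; linarith
    rw [Real.norm_eq_abs, hinv, abs_of_nonneg hnn]
    have h5 : 1 - (GG gam α r)⁻¹ ≤ gam / r ^ α := by
      have := GG_mul_one_sub_inv hgam (α := α) hr1
      nlinarith [GG_inv_mem hgam (α := α) hr1]
    have h6 : (1 - ((GG gam α r)⁻¹) ^ n) * r ≤ (n * (gam / r ^ α)) * r := by
      have : 1 - ((GG gam α r)⁻¹) ^ n ≤ n * (gam / r ^ α) := by
        calc 1 - ((GG gam α r)⁻¹) ^ n ≤ n * (1 - (GG gam α r)⁻¹) := h1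
          _ ≤ n * (gam / r ^ α) := by
              apply mul_le_mul_of_nonneg_left h5 (Nat.cast_nonneg n)
      exact mul_le_mul_of_nonneg_right this hr0.le
    have h7 : (n * (gam / r ^ α)) * r = gam * n * r ^ (1 - α) := by
      rw [Real.rpow_sub hr0, Real.rpow_one]
      ring
    linarith

include hgam hα2 in
lemma bI_succ (H : ℕ → ℝ)
    (hH : ∀ k : ℕ, H k = ∫ r in Set.Ioi (1:ℝ), (1 - ((1 + gam / r ^ α) ^ k)⁻¹) * r)
    (n : ℕ) : bI gam α (n + 1) = H n + gam / (α - 2) := by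
  have key : ∀ r ∈ Set.Ioi (1:ℝ),
      (GG gam α r * r) * (1 - ((GG gam α r)⁻¹) ^ (n + 1))
        = (1 - ((GG gam α r) ^ n)⁻¹) * r + gam * r ^ (1 - α) := by
    intro r hr
    have hr1 : (1:ℝ) ≤ r := le_of_lt hr
    have hr0 : (0:ℝ) < r := lt_of_lt_of_le one_pos hr1
    have hG := GG_pos hgam (α := α) hr1
    have hGn : GG gam α r ≠ 0 := hG.ne'
    have h1 : GG gam α r * ((GG gam α r)⁻¹) ^ (n + 1) = ((GG gam α r)⁻¹) ^ n := by
      rw [pow_succ]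
      field_simp
    have h2 : ((GG gam α r) ^ n)⁻¹ = ((GG gam α r)⁻¹) ^ n := by rw [inv_pow]
    have h3 : gam * r ^ (1 - α) = (gam / r ^ α) * r := by
      rw [Real.rpow_sub hr0, Real.rpow_one]; ring
    have h4 : GG gam α r = 1 + gam / r ^ α := rfl
    rw [h2, h3]
    calc (GG gam α r * r) * (1 - ((GG gam α r)⁻¹) ^ (n + 1))
        = (GG gam α r - GG gam α r * ((GG gam α r)⁻¹) ^ (n + 1)) * r := by ring
      _ = (GG gam α r - ((GG gam α r)⁻¹) ^ n) * r := by rw [h1]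
      _ = (1 - ((GG gam α r)⁻¹) ^ n) * r + (gam / r ^ α) * r := by rw [h4]; ring
  unfold bI
  rw [setIntegral_congr_fun measurableSet_Ioi key]
  rw [integral_add (H_integrand_integrable hgam hα2 n)
    ((integrableOn_rpow_bound hgam hα2).const_mul gam)]
  rw [integral_rpow_tail hgam hα2, hH n]
  rfl

end analytic2


section analytic3

variable {gam α : ℝ} (hgam : 0 < gam) (hα2 : 2 < α)

include hgam in
lemma mR_intervalIntegrable {R : ℝ} (hR : 1 ≤ R) (k : ℕ) :
    IntervalIntegrable (fun r => (GG gam α r * r) * ((GG gam α r)⁻¹) ^ k) volume 1 R := by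
  apply ContinuousOn.intervalIntegrable
  have hsub : Set.uIcc (1:ℝ) R ⊆ Set.Ici 1 := by
    rw [Set.uIcc_of_le hR]
    exact fun x hx => hx.1
  refine ContinuousOn.mono ?_ hsub
  have hG := GG_contOn (gam := gam) (α := α) hgam
  have hGne : ∀ r ∈ Set.Ici (1:ℝ), GG gam α r ≠ 0 := fun r hr => (GG_pos hgam hr).ne'
  exact (hG.mul continuousOn_id).mul ((hG.inv₀ hGne).pow k)

include hgam in
lemma cm_mR {R : ℝ} (hR : 1 ≤ R) : CM (mR gam α R) := by
  intro j k
  unfold mR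
  rw [DD_iter_intervalIntegral _ _ _ (mR_intervalIntegrable hgam hR) j k]
  apply intervalIntegral.integral_nonneg hR
  intro u hu
  have hu1 : (1:ℝ) ≤ u := hu.1
  have hG := GG_pos hgam (α := α) hu1
  obtain ⟨hx0, hx1⟩ := GG_inv_mem hgam (α := α) hu1
  have h1 := congrFun
    (DD_iter_const_mul (GG gam α u * u) (fun m => ((GG gam α u)⁻¹) ^ m) j) k
  have h2 := congrFun (DD_iter_geom ((GG gam α u)⁻¹) j) k
  rw [h1, h2]
  have hu0 : (0:ℝ) ≤ u := by linarith
  refine mul_nonneg (mul_nonneg hG.le hu0) (mul_nonneg (pow_nonneg hx0.le k) ?_)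
  exact pow_nonneg (by linarith) j

include hgam in
lemma mR_sub {R : ℝ} (hR : 1 ≤ R) (k : ℕ) :
    mR gam α R 0 - mR gam α R k
      = ∫ r in (1:ℝ)..R, (GG gam α r * r) * (1 - ((GG gam α r)⁻¹) ^ k) := by
  unfold mR
  rw [← intervalIntegral.integral_sub (mR_intervalIntegrable hgam hR 0)
    (mR_intervalIntegrable hgam hR k)]
  apply intervalIntegral.integral_congr
  intro u _
  simp only [pow_zero]
  ring

include hgam hα2 in
lemma tendsto_mR_sub (k : ℕ) :
    Filter.Tendsto (fun R => mR gam α R 0 - mR gam α R k) Filter.atTop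
      (nhds (bI gam α k)) := by
  have h0 : Filter.Tendsto
      (fun R => ∫ r in (1:ℝ)..R, (GG gam α r * r) * (1 - ((GG gam α r)⁻¹) ^ k))
      Filter.atTop (nhds (bI gam α k)) :=
    intervalIntegral_tendsto_integral_Ioi 1 (bI_integrable hgam hα2 k) Filter.tendsto_id
  apply h0.congr'
  filter_upwards [Filter.eventually_ge_atTop (1:ℝ)] with R hR
  exact (mR_sub hgam hR k).symm

include hgam hα2 in
lemma cm_exp_bI {t : ℝ} (ht : 0 ≤ t) :
    CM (fun k => Real.exp (-(2 * t * bI gam α k))) := by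
  apply cm_of_tendsto (l := (Filter.atTop : Filter ℝ))
    (F := fun R k => Real.exp (-(2 * t * (mR gam α R 0 - mR gam α R k))))
  · filter_upwards [Filter.eventually_ge_atTop (1:ℝ)] with R hR
    have hrw : (fun k => Real.exp (-(2 * t * (mR gam α R 0 - mR gam α R k))))
        = fun k => Real.exp (-(2 * t * mR gam α R 0)) *
            Real.exp ((2 * t) * mR gam α R k) := by
      funext k
      rw [← Real.exp_add]
      ring_nf
    rw [hrw]
    exact cm_const_mul (Real.exp_nonneg _)
      (cm_exp_mul (cm_mR hgam hR) (by linarith))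
  · intro k
    have h1 := tendsto_mR_sub hgam hα2 k
    have h2 : Filter.Tendsto (fun R => -(2 * t * (mR gam α R 0 - mR gam α R k)))
        Filter.atTop (nhds (-(2 * t * bI gam α k))) := (h1.const_mul (2 * t)).neg
    exact (Real.continuous_exp.tendsto _).comp h2

end analytic3


noncomputable def FFp (gam α : ℝ) : ℕ → ℝ :=
  fun k => (1 - 2 * gam / (α - 2) + 2 * bI gam α k)⁻¹

lemma integral_exp_neg_mul_Ioi_zero {c : ℝ} (hc : 0 < c) :
    ∫ t in Set.Ioi (0:ℝ), Real.exp (-(c * t)) = c⁻¹ := by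
  have h := integral_comp_mul_left_Ioi (fun x => Real.exp (-x)) 0 hc
  simp only [mul_zero] at h
  rw [h, integral_exp_neg_Ioi, neg_zero, Real.exp_zero, smul_eq_mul, mul_one]

section analytic4

variable {gam α : ℝ} (hgam : 0 < gam) (hα : 2 + 2 * gam < α)

include hgam hα in
lemma hα2' : 2 < α := by linarith

include hgam hα in
lemma FFp_den_pos (k : ℕ) : 0 < 1 - 2 * gam / (α - 2) + 2 * bI gam α k := by
  have h1 : 2 * gam / (α - 2) < 1 := by
    rw [div_lt_one (by linarith : (0:ℝ) < α - 2)]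
    linarith
  have h2 : 0 ≤ bI gam α k := bI_nonneg hgam k
  linarith

include hgam hα in
lemma exp_integrand_integrable (m : ℕ) :
    Integrable (fun t => Real.exp (-((1 - 2 * gam / (α - 2) + 2 * bI gam α m) * t)))
      (volume.restrict (Set.Ioi (0:ℝ))) := by
  have h := exp_neg_integrableOn_Ioi 0 (FFp_den_pos hgam hα m)
  refine h.congr_fun ?_ measurableSet_Ioi
  intro t _
  simp only [neg_mul]

include hgam hα in
lemma cm_FFp : CM (FFp gam α) := by
  have hrep : FFp gam α = fun k =>
      ∫ t in Set.Ioi (0:ℝ),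
        Real.exp (-((1 - 2 * gam / (α - 2) + 2 * bI gam α k) * t)) := by
    funext k
    rw [integral_exp_neg_mul_Ioi_zero (FFp_den_pos hgam hα k)]
    rfl
  intro j k
  rw [hrep]
  rw [DD_iter_integral
    (fun m t => Real.exp (-((1 - 2 * gam / (α - 2) + 2 * bI gam α m) * t)))
    (volume.restrict (Set.Ioi 0)) (exp_integrand_integrable hgam hα) j k]
  refine integral_nonneg_of_ae ?_
  filter_upwards [ae_restrict_mem measurableSet_Ioi] with t ht
  have ht0 : (0:ℝ) ≤ t := le_of_lt ht
  have hrw : (fun m => Real.exp (-((1 - 2 * gam / (α - 2) + 2 * bI gam α m) * t)))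
      = fun m => Real.exp (-((1 - 2 * gam / (α - 2)) * t)) *
          Real.exp (-(2 * t * bI gam α m)) := by
    funext m
    rw [← Real.exp_add]
    ring_nf
  rw [hrw]
  exact cm_const_mul (Real.exp_nonneg _)
    (cm_exp_bI hgam (hα2' hgam hα) ht0) j k

end analytic4

end Stmt15Aux

/-- First bullet of Theorem 5: if `α > 2 + 2Γ`, then `∑_j A_j^M` converges for every number
of BS beams `M ≥ 1`. -/
theorem stmt15 (gam α : ℝ) (hgam : 0 < gam) (hα : 2 + 2 * gam < α)
    (H : ℕ → ℝ)
    (hH : ∀ k : ℕ, H k = ∫ r in Set.Ioi (1:ℝ), (1 - ((1 + gam / r ^ α) ^ k)⁻¹) * r)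
    (A : ℕ → ℝ)
    (hA : ∀ j : ℕ,
      A j = ∑ k ∈ Finset.range (j + 1), (-1 : ℝ) ^ k * (j.choose k) / (1 + 2 * H k))
    (M : ℕ) (hM : 0 < M) :
    Summable (fun j : ℕ => A j ^ M) := by

  have hα2 : (2:ℝ) < α := by linarith
  set F := Stmt15Aux.FFp gam α with hFdef
  have hcm : Stmt15Aux.CM F := Stmt15Aux.cm_FFp hgam hα
  have hF_succ : ∀ n : ℕ, F (n + 1) = (1 + 2 * H n)⁻¹ := by
    intro n
    have hb := Stmt15Aux.bI_succ hgam hα2 H hH n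
    have hden : 1 - 2 * gam / (α - 2) + 2 * Stmt15Aux.bI gam α (n + 1) = 1 + 2 * H n := by
      rw [hb]
      have hne : (α - 2) ≠ 0 := by intro h; linarith
      field_simp
      ring
    show (1 - 2 * gam / (α - 2) + 2 * Stmt15Aux.bI gam α (n + 1))⁻¹ = _
    rw [hden]
  have hH0 : H 0 = 0 := by
    rw [hH 0]
    simp
  have hF1 : F 1 = 1 := by
    rw [show (1:ℕ) = 0 + 1 from rfl, hF_succ 0, hH0]
    norm_num
  have hAeq : ∀ j, A j = Stmt15Aux.DD^[j] F 1 := by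
    intro j
    have h1 : Stmt15Aux.DD^[j] (fun k => F (k + 1)) 0 = Stmt15Aux.DD^[j] F 1 := by
      have := congrFun (Stmt15Aux.DD_iter_shift F j) 0
      simpa using this
    rw [hA j, ← h1, Stmt15Aux.DD_iter_eq_sum]
    apply Finset.sum_congr rfl
    intro k _
    rw [zero_add, hF_succ k, div_eq_mul_inv]
  have hnn : ∀ j, 0 ≤ A j := fun j => (hAeq j) ▸ hcm j 1
  have hle1 : ∀ j, A j ≤ 1 := by
    intro j
    rw [hAeq j, ← hF1]
    exact Stmt15Aux.DD_iter_le_head hcm j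
  have hsumA : Summable A := by
    apply summable_of_sum_range_le hnn (c := F 0)
    intro n
    have h1 : ∑ j ∈ Finset.range n, A j = F 0 - Stmt15Aux.DD^[n] F 0 := by
      rw [← Stmt15Aux.sum_DD_iter F n]
      exact Finset.sum_congr rfl fun j _ => hAeq j
    rw [h1]
    have := hcm n 0
    linarith
  refine Summable.of_nonneg_of_le (fun j => pow_nonneg (hnn j) M) (fun j => ?_) hsumA
  calc A j ^ M ≤ A j ^ 1 := pow_le_pow_of_le_one (hnn j) (hle1 j) hM
    _ = A j := pow_one _
end

section
/- Let (Ω, 𝒜, μ) be a probability space, let M ≥ 1 be an integer, and let R_1, …, R_M : Ω → [0,∞) be i.i.d. random variables whose common distribution is atomless, with complementary cumulative distribution function G(r) = μ(R_1 > r). Let F : [0,∞)^M → [0,∞) be a bounded measurable function that is symmetric (invariant under every permutation of its M arguments). Define h : [0,∞) → [0,∞) by h(r) = E[ F(r, R_2, …, R_M) · ∏_{j=2}^{M} 1_{R_j > r} ] / G(r)^{M−1} when G(r) > 0, and h(r) = 0 otherwise. Then h(min(R_1, …, R_M)) is a version of the conditional expectation of F(R_1, …, R_M) given the σ-algebra generated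 by min(R_1, …, R_M); that is, E[ F(R_1,…,R_M) ∣ σ(min_i R_i) ] = h(min_i R_i) almost surely. -/
open MeasureTheory ProbabilityTheory
open scoped ENNReal

namespace Stmt17Aux
variable {n : ℕ}

lemma pi_comp_perm (p : Measure ℝ) [IsProbabilityMeasure p] (σ : Equiv.Perm (Fin n)) :
    MeasurePreserving (fun x : Fin n → ℝ => x ∘ σ)
      (Measure.pi fun _ => p) (Measure.pi fun _ => p) := by
  have hmeas : Measurable (fun x : Fin n → ℝ => x ∘ σ) :=
    measurable_pi_lambda _ fun i => measurable_pi_apply _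
  refine ⟨hmeas, ?_⟩
  refine (Measure.pi_eq fun s hs => ?_).symm
  rw [Measure.map_apply hmeas (MeasurableSet.univ_pi hs)]
  have hpre : (fun x : Fin n → ℝ => x ∘ σ) ⁻¹' Set.univ.pi s
      = Set.univ.pi (fun j => s (σ.symm j)) := by
    ext x
    simp only [Set.mem_preimage, Set.mem_pi, Set.mem_univ, true_implies, Function.comp]
    constructor
    · intro hx j
      have := hx (σ.symm j)
      simpa using this
    · intro hx i
      have := hx (σ i)
      simpa using this
  rw [hpre, Measure.pi_pi]
  exact Equiv.prod_comp σ.symm (fun i => p (s i))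

lemma prod_diag_null (p : Measure ℝ) [SFinite p] (hp : ∀ x : ℝ, p {x} = 0) :
    (p.prod p) {q : ℝ × ℝ | q.1 = q.2} = 0 := by
  have hD : MeasurableSet {q : ℝ × ℝ | q.1 = q.2} :=
    measurableSet_eq_fun measurable_fst measurable_snd
  rw [Measure.prod_apply hD]
  have hfib : ∀ x : ℝ, (Prod.mk x ⁻¹' {q : ℝ × ℝ | q.1 = q.2}) = {x} := by
    intro x; ext y; simp [eq_comm]
  simp [hfib, hp]

lemma pi_coord_eq_null (p : Measure ℝ) [IsProbabilityMeasure p] (hp : ∀ x : ℝ, p {x} = 0)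
    {i j : Fin n} (hij : i ≠ j) :
    (Measure.pi fun _ : Fin n => p) {x | x i = x j} = 0 := by
  have hmeas : Measurable (fun x : Fin n → ℝ => (x i, x j)) :=
    (measurable_pi_apply i).prodMk (measurable_pi_apply j)
  have hD : MeasurableSet {q : ℝ × ℝ | q.1 = q.2} :=
    measurableSet_eq_fun measurable_fst measurable_snd
  have hmap : (Measure.pi fun _ : Fin n => p).map (fun x => (x i, x j)) = p.prod p := by
    refine (Measure.prod_eq fun s t hs ht => ?_).symm
    rw [Measure.map_apply hmeas (hs.prod ht)]
    classical
    have hpre : (fun x : Fin n → ℝ => (x i, x j)) ⁻¹' (s ×ˢ t)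
        = Set.univ.pi (fun k => if k = i then s else if k = j then t else Set.univ) := by
      ext x
      simp only [Set.mem_preimage, Set.mem_prod, Set.mem_pi, Set.mem_univ, true_implies]
      constructor
      · intro hx k
        by_cases hki : k = i
        · subst hki; simp [hx.1, if_neg]
        · by_cases hkj : k = j
          · subst hkj; simp [hki, hx.2]
          · simp [hki, hkj]
      · intro hx
        refine ⟨?_, ?_⟩
        · have := hx i; simpa using this
        · have := hx j; simpa [Ne.symm hij] using this
    rw [hpre, Measure.pi_pi]
    rw [Finset.prod_eq_mul i j hij
      (fun k _ hk => by simp [hk.1, hk.2])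
      (fun hi => absurd (Finset.mem_univ i) hi)
      (fun hj => absurd (Finset.mem_univ j) hj)]
    simp [Ne.symm hij]
  have hset : {x : Fin n → ℝ | x i = x j}
      = (fun x : Fin n → ℝ => (x i, x j)) ⁻¹' {q | q.1 = q.2} := rfl
  rw [hset, ← Measure.map_apply hmeas hD, hmap, prod_diag_null p hp]

lemma ae_tail_pos (p : Measure ℝ) [IsProbabilityMeasure p] (hp : ∀ x : ℝ, p {x} = 0) :
    ∀ᵐ r ∂p, 0 < p (Set.Ioi r) := by
  rw [ae_iff]
  have hset : {r : ℝ | ¬ 0 < p (Set.Ioi r)} = {r : ℝ | p (Set.Ioi r) = 0} := by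
    ext r; simp [pos_iff_ne_zero]
  rw [hset]
  set E := {r : ℝ | p (Set.Ioi r) = 0} with hE
  rcases Set.eq_empty_or_nonempty E with he | hne
  · simp [he]
  by_cases hbd : BddBelow E
  · set t := sInf E with ht
    have hup : ∀ r, t < r → r ∈ E := by
      intro r hr
      obtain ⟨e, heE, helt⟩ := exists_lt_of_csInf_lt hne hr
      exact measure_mono_null (Set.Ioi_subset_Ioi helt.le) heE
    have h2 : p (Set.Ioi t) = 0 := by
      have hU : Set.Ioi t = ⋃ k : ℕ, Set.Ioi (t + 1 / (k + 1)) := by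
        ext r
        simp only [Set.mem_Ioi, Set.mem_iUnion]
        constructor
        · intro hr
          obtain ⟨k, hk⟩ := exists_nat_one_div_lt (sub_pos.mpr hr)
          exact ⟨k, by linarith⟩
        · rintro ⟨k, hk⟩
          have : (0:ℝ) < 1 / (k + 1) := by positivity
          linarith
      rw [hU]
      refine measure_iUnion_null fun k => ?_
      refine hup _ ?_
      have : (0:ℝ) < 1 / (k + 1 : ℝ) := by positivity
      linarith
    have h3 : p (Set.Ici t) = 0 := by
      rw [← Set.Ioi_insert, Set.insert_eq]
      exact measure_union_null (hp t) h2
    exact measure_mono_null (fun r hr => csInf_le hbd hr) h3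
  · exfalso
    have hall : ∀ r : ℝ, p (Set.Ioi r) = 0 := by
      intro r
      obtain ⟨e, heE, he⟩ := not_bddBelow_iff.mp hbd r
      exact measure_mono_null (Set.Ioi_subset_Ioi he.le) heE
    have huniv : p (Set.univ : Set ℝ) = 0 := by
      have hU : (Set.univ : Set ℝ) = ⋃ k : ℕ, Set.Ioi (-(k:ℝ)) := by
        ext r
        simp only [Set.mem_univ, Set.mem_iUnion, Set.mem_Ioi, true_iff]
        obtain ⟨k, hk⟩ := exists_nat_gt (-r)
        exact ⟨k, by linarith⟩
      rw [hU]
      exact measure_iUnion_null fun k => hall _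
    simp [measure_univ] at huniv

lemma erase_zero_eq_image :
    (Finset.univ.erase (0 : Fin (n+1))) = Finset.univ.image Fin.succ := by
  ext k
  simp only [Finset.mem_erase, Finset.mem_univ, and_true, Finset.mem_image, true_and]
  constructor
  · intro hk; exact ⟨k.pred hk, Fin.succ_pred k hk⟩
  · rintro ⟨j, -, rfl⟩; exact Fin.succ_ne_zero j

lemma prod_erase_zero (g : Fin (n+1) → ℝ≥0∞) :
    ∏ j ∈ Finset.univ.erase (0 : Fin (n+1)), g j = ∏ j : Fin n, g j.succ := by
  rw [erase_zero_eq_image, Finset.prod_image (fun a _ b _ h => Fin.succ_injective n h)]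

lemma sum_chi (x : Fin (n+1) → ℝ) (hx : ∀ i j, i ≠ j → x i ≠ x j) :
    ∑ i : Fin (n+1), ∏ j ∈ Finset.univ.erase i, (if x i < x j then (1:ℝ≥0∞) else 0) = 1 := by
  obtain ⟨i₀, -, hi₀⟩ := Finset.exists_min_image Finset.univ x ⟨0, Finset.mem_univ 0⟩
  have hmain : ∏ j ∈ Finset.univ.erase i₀, (if x i₀ < x j then (1:ℝ≥0∞) else 0) = 1 := by
    refine Finset.prod_eq_one fun j hj => ?_
    have hji : j ≠ i₀ := (Finset.mem_erase.mp hj).1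
    have : x i₀ < x j := lt_of_le_of_ne (hi₀ j (Finset.mem_univ j)) (hx i₀ j (Ne.symm hji))
    simp [this]
  rw [Finset.sum_eq_single i₀ ?h0 (fun h => absurd (Finset.mem_univ i₀) h), hmain]
  intro i _ hi
  refine Finset.prod_eq_zero (Finset.mem_erase.mpr ⟨Ne.symm hi, Finset.mem_univ i₀⟩) ?_
  simp [not_lt.mpr (hi₀ i (Finset.mem_univ i))]

lemma insertNth_zero_succ (r : ℝ) (y : Fin n → ℝ) (j : Fin n) :
    Fin.insertNth (α := fun _ : Fin (n+1) => ℝ) 0 r y j.succ = y j := by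
  have h := Fin.insertNth_apply_succAbove (α := fun _ : Fin (n+1) => ℝ) 0 r y j
  rwa [Fin.succAbove_zero] at h

lemma lintegral_pi_succ (p : Measure ℝ) [IsProbabilityMeasure p]
    (k : (Fin (n+1) → ℝ) → ℝ≥0∞) (hk : Measurable k) :
    ∫⁻ x, k x ∂(Measure.pi fun _ : Fin (n+1) => p)
      = ∫⁻ r, ∫⁻ y, k (Fin.insertNth 0 r y) ∂(Measure.pi fun _ : Fin n => p) ∂p := by
  have hmp := measurePreserving_piFinSuccAbove (fun _ : Fin (n+1) => p) 0
  have hk2 : Measurable fun q : ℝ × (Fin n → ℝ) => k (Fin.insertNth 0 q.1 q.2) :=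
    hk.comp ((MeasurableEquiv.piFinSuccAbove (fun _ : Fin (n+1) => ℝ) 0).symm.measurable)
  calc ∫⁻ x, k x ∂(Measure.pi fun _ : Fin (n+1) => p)
      = ∫⁻ q, k (Fin.insertNth 0 q.1 q.2) ∂(p.prod (Measure.pi fun _ : Fin n => p)) := by
        rw [← hmp.lintegral_comp hk2]
        refine lintegral_congr fun x => ?_
        congr 1
        exact (Fin.insertNth_self_removeNth 0 x).symm
    _ = _ := lintegral_prod _ hk2.aemeasurable

end Stmt17Aux

/-- Corollary 1: for i.i.d. nonnegative random variables `R 0, …, R (M-1)` with atomless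
common distribution and CCDF `G`, and a bounded measurable symmetric function `F`, the
conditional expectation of `F(R)` given `min_i R i` is `h(min_i R i)`, where
`h(r) = E[F(r, R_1, …, R_{M-1}) ∏_{j≠0} 1_{R j > r}]/G(r)^{M-1}` when `G(r) > 0`. -/
theorem stmt17 {Ω : Type*} [MeasurableSpace Ω] (μ : Measure Ω) [IsProbabilityMeasure μ]
    (M : ℕ) [NeZero M] (hM : 1 ≤ M) (R : Fin M → Ω → ℝ)
    (hRmeas : ∀ i, Measurable (R i))
    (hRnonneg : ∀ i ω, 0 ≤ R i ω)
    (hindep : iIndepFun R μ)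
    (hident : ∀ i, IdentDistrib (R i) (R 0) μ μ)
    (hatomless : ∀ x : ℝ, μ {ω | R 0 ω = x} = 0)
    (F : (Fin M → ℝ) → ℝ) (hFmeas : Measurable F)
    (hFnonneg : ∀ x, 0 ≤ F x) (hFbdd : ∃ C : ℝ, ∀ x, F x ≤ C)
    (hFsymm : ∀ (σ : Equiv.Perm (Fin M)) (x : Fin M → ℝ), F (x ∘ σ) = F x)
    (G : ℝ → ℝ) (hG : ∀ r, G r = (μ {ω | r < R 0 ω}).toReal)
    (h : ℝ → ℝ)
    (hh : ∀ r : ℝ, h r =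
      if 0 < G r then
        (∫ ω, F (fun i => if i = 0 then r else R i ω) *
            ∏ j ∈ Finset.univ.erase (0 : Fin M),
              (if r < R j ω then (1:ℝ) else 0) ∂μ) / G r ^ (M - 1)
      else 0) :
    μ[(fun ω => F (fun i => R i ω)) |
        MeasurableSpace.comap (fun ω => ⨅ i, R i ω) (inferInstance : MeasurableSpace ℝ)]
      =ᵐ[μ] fun ω => h (⨅ i, R i ω) := by
  classical
  obtain ⟨C, hC⟩ := hFbdd
  have hCnonneg : 0 ≤ C := le_trans (hFnonneg (fun _ => 0)) (hC _)
  obtain ⟨n, rfl⟩ : ∃ n, M = n + 1 := ⟨M - 1, (Nat.sub_add_cancel hM).symm⟩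
  clear hM
  -- basic measures and maps
  set p : Measure ℝ := μ.map (R 0) with hpdef
  haveI : IsProbabilityMeasure p := Measure.isProbabilityMeasure_map (hRmeas 0).aemeasurable
  have hatom : ∀ x : ℝ, p {x} = 0 := by
    intro x
    rw [hpdef, Measure.map_apply (hRmeas 0) (measurableSet_singleton x)]
    exact hatomless x
  set ν : Measure (Fin (n+1) → ℝ) := Measure.pi (fun _ => p) with hνdef
  set π : Measure (Fin n → ℝ) := Measure.pi (fun _ => p) with hπdef
  set T : Ω → (Fin (n+1) → ℝ) := fun ω i => R i ω with hTdef
  have hT : Measurable T := measurable_pi_lambda _ hRmeas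
  have hTlaw : μ.map T = ν := by
    refine (Measure.pi_eq fun s hs => ?_).symm
    rw [Measure.map_apply hT (MeasurableSet.univ_pi hs)]
    have hpre : T ⁻¹' Set.univ.pi s
        = ⋂ i ∈ (Finset.univ : Finset (Fin (n+1))), R i ⁻¹' s i := by
      ext ω; simp [hTdef, Set.mem_pi]
    rw [hpre, hindep.measure_inter_preimage_eq_mul Finset.univ (fun i _ => hs i)]
    refine Finset.prod_congr rfl fun i _ => ?_
    rw [← Measure.map_apply (hRmeas i) (hs i), (hident i).map_eq]
  -- facts about G
  have hGr : ∀ r : ℝ, p (Set.Ioi r) = μ {ω | r < R 0 ω} := by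
    intro r; rw [hpdef, Measure.map_apply (hRmeas 0) measurableSet_Ioi]; rfl
  have hfin : ∀ r : ℝ, p (Set.Ioi r) ≠ ∞ := fun r => measure_ne_top p _
  have hGdef : ∀ r, G r = (p (Set.Ioi r)).toReal := fun r => by rw [hG, hGr]
  have hofReal : ∀ r, ENNReal.ofReal (G r) = p (Set.Ioi r) := fun r => by
    rw [hGdef]; exact ENNReal.ofReal_toReal (hfin r)
  have hGnonneg : ∀ r, 0 ≤ G r := fun r => by rw [hGdef]; exact ENNReal.toReal_nonneg
  have hGmeas : Measurable G := by
    have : Antitone G := by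
      intro a b hab
      rw [hGdef, hGdef]
      exact ENNReal.toReal_mono (hfin a) (measure_mono (Set.Ioi_subset_Ioi hab))
    exact this.measurable
  -- psi
  set ψ : ℝ → ℝ := fun r => ∫ ω, F (fun i => if i = 0 then r else R i ω) *
      ∏ j ∈ Finset.univ.erase (0 : Fin (n+1)), (if r < R j ω then (1:ℝ) else 0) ∂μ with hψdef
  have hψr : ∀ r : ℝ, ψ r = ∫ ω, F (fun i => if i = 0 then r else R i ω) *
      ∏ j ∈ Finset.univ.erase (0 : Fin (n+1)), (if r < R j ω then (1:ℝ) else 0) ∂μ :=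
    fun r => rfl
  have hker : Measurable (fun q : ℝ × Ω => F (fun i => if i = 0 then q.1 else R i q.2) *
      ∏ j ∈ Finset.univ.erase (0 : Fin (n+1)), (if q.1 < R j q.2 then (1:ℝ) else 0)) := by
    apply Measurable.mul
    · refine hFmeas.comp (measurable_pi_lambda _ fun i => ?_)
      by_cases hi : i = 0
      · simp only [hi, if_true]; exact measurable_fst
      · simp only [hi, if_false]; exact (hRmeas i).comp measurable_snd
    · refine Finset.measurable_prod _ fun j _ => ?_
      exact Measurable.ite (measurableSet_lt measurable_fst ((hRmeas j).comp measurable_snd))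
        measurable_const measurable_const
  have hψmeas : Measurable ψ := (hker.stronglyMeasurable.integral_prod_right').measurable
  have hψnonneg : ∀ r, 0 ≤ ψ r := by
    intro r
    refine integral_nonneg fun ω => mul_nonneg (hFnonneg _) (Finset.prod_nonneg fun j _ => ?_)
    split <;> norm_num
  have hhr' : ∀ r : ℝ, h r = if 0 < G r then ψ r / G r ^ n else 0 := by
    intro r; rw [hh r, hψr r, Nat.add_sub_cancel]
  have hhmeas : Measurable h := by
    have hfun : h = fun r => if 0 < G r then ψ r / G r ^ n else 0 := funext hhr'
    rw [hfun]
    exact Measurable.ite (measurableSet_lt measurable_const hGmeas)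
      (hψmeas.div (hGmeas.pow_const n)) measurable_const
  have hhnonneg : ∀ r, 0 ≤ h r := by
    intro r; rw [hhr' r]
    split
    · exact div_nonneg (hψnonneg r) (pow_nonneg (hGnonneg r) _)
    · exact le_rfl
  -- ENNReal versions
  set F' : (Fin (n+1) → ℝ) → ℝ≥0∞ := fun x => ENNReal.ofReal (F x) with hF'def
  have hF'meas : Measurable F' := hFmeas.ennreal_ofReal
  set chi : Fin (n+1) → (Fin (n+1) → ℝ) → ℝ≥0∞ :=
    fun i x => ∏ j ∈ Finset.univ.erase i, (if x i < x j then (1:ℝ≥0∞) else 0) with hchidef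
  have hchir : ∀ i x, chi i x
      = ∏ j ∈ Finset.univ.erase i, (if x i < x j then (1:ℝ≥0∞) else 0) := fun i x => rfl
  have hchimeas : ∀ i, Measurable (chi i) := by
    intro i
    refine Finset.measurable_prod _ fun j _ => ?_
    exact Measurable.ite (measurableSet_lt (measurable_pi_apply i) (measurable_pi_apply j))
      measurable_const measurable_const
  have hinsmeas : Measurable fun q : ℝ × (Fin n → ℝ) =>
      Fin.insertNth (α := fun _ : Fin (n+1) => ℝ) 0 q.1 q.2 :=
    (MeasurableEquiv.piFinSuccAbove (fun _ : Fin (n+1) => ℝ) 0).symm.measurable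
  -- box computation
  have hWbox : ∀ r : ℝ, ∫⁻ y, ∏ j : Fin n, (if r < y j then (1:ℝ≥0∞) else 0) ∂π
      = p (Set.Ioi r) ^ n := by
    intro r
    have hind : (fun y : Fin n → ℝ => ∏ j, (if r < y j then (1:ℝ≥0∞) else 0))
        = (Set.univ.pi fun _ : Fin n => Set.Ioi r).indicator (fun _ => 1) := by
      funext y
      by_cases hy : ∀ j, r < y j
      · rw [Set.indicator_of_mem (by simpa [Set.mem_pi] using hy)]
        exact Finset.prod_eq_one fun j _ => if_pos (hy j)
      · rw [Set.indicator_of_notMem (by simpa [Set.mem_pi] using hy)]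
        push_neg at hy
        obtain ⟨j, hj⟩ := hy
        exact Finset.prod_eq_zero (Finset.mem_univ j) (if_neg (not_lt.mpr hj))
    rw [hind, lintegral_indicator (MeasurableSet.univ_pi fun _ => measurableSet_Ioi)]
    simp [hπdef, Measure.pi_pi]
  -- substitution
  have hsubst : ∀ (r r' : ℝ) (y : Fin n → ℝ),
      (fun i => if i = 0 then r else Fin.insertNth (α := fun _ : Fin (n+1) => ℝ) 0 r' y i)
        = Fin.insertNth (α := fun _ : Fin (n+1) => ℝ) 0 r y := by
    intro r r' y
    funext i
    rcases Fin.eq_zero_or_eq_succ i with rfl | ⟨j, rfl⟩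
    · simp
    · simp [Fin.succ_ne_zero, Stmt17Aux.insertNth_zero_succ]
  have hchi_insert : ∀ (r : ℝ) (y : Fin n → ℝ),
      chi 0 (Fin.insertNth 0 r y) = ∏ j : Fin n, (if r < y j then (1:ℝ≥0∞) else 0) := by
    intro r y
    rw [hchir, Stmt17Aux.prod_erase_zero]
    refine Finset.prod_congr rfl fun j _ => ?_
    rw [Fin.insertNth_apply_same, Stmt17Aux.insertNth_zero_succ]
  -- pointwise identity for psi
  have hpsi' : ∀ r : ℝ, ENNReal.ofReal (ψ r)
      = ∫⁻ y, F' (Fin.insertNth 0 r y) * ∏ j : Fin n, (if r < y j then (1:ℝ≥0∞) else 0) ∂π := by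
    intro r
    have hmeas1 : Measurable fun ω => F (fun i => if i = 0 then r else R i ω) *
        ∏ j ∈ Finset.univ.erase (0 : Fin (n+1)), (if r < R j ω then (1:ℝ) else 0) :=
      hker.comp measurable_prodMk_left
    have hnn : ∀ ω, 0 ≤ F (fun i => if i = 0 then r else R i ω) *
        ∏ j ∈ Finset.univ.erase (0 : Fin (n+1)), (if r < R j ω then (1:ℝ) else 0) := by
      intro ω
      refine mul_nonneg (hFnonneg _) (Finset.prod_nonneg fun j _ => ?_)
      split <;> norm_num
    have hint : Integrable (fun ω => F (fun i => if i = 0 then r else R i ω) *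
        ∏ j ∈ Finset.univ.erase (0 : Fin (n+1)), (if r < R j ω then (1:ℝ) else 0)) μ := by
      refine Integrable.mono' (integrable_const C) hmeas1.aestronglyMeasurable
        (Filter.Eventually.of_forall fun ω => ?_)
      rw [Real.norm_of_nonneg (hnn ω)]
      have h1 : ∏ j ∈ Finset.univ.erase (0 : Fin (n+1)), (if r < R j ω then (1:ℝ) else 0) ≤ 1 :=
        Finset.prod_le_one (fun j _ => by split <;> norm_num) (fun j _ => by split <;> norm_num)
      calc F (fun i => if i = 0 then r else R i ω) *
            ∏ j ∈ Finset.univ.erase (0 : Fin (n+1)), (if r < R j ω then (1:ℝ) else 0)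
          ≤ C * 1 := by
            refine mul_le_mul (hC _) h1 (Finset.prod_nonneg fun j _ => by split <;> norm_num)
              hCnonneg
        _ = C := mul_one C
    rw [hψr r, MeasureTheory.ofReal_integral_eq_lintegral_ofReal hint
      (Filter.Eventually.of_forall hnn)]
    have hpt : ∀ ω, ENNReal.ofReal (F (fun i => if i = 0 then r else R i ω) *
        ∏ j ∈ Finset.univ.erase (0 : Fin (n+1)), (if r < R j ω then (1:ℝ) else 0))
        = ENNReal.ofReal (F (fun i => if i = 0 then r else R i ω)) *
          ∏ j ∈ Finset.univ.erase (0 : Fin (n+1)), (if r < R j ω then (1:ℝ≥0∞) else 0) := by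
      intro ω
      rw [ENNReal.ofReal_mul (hFnonneg _),
        ENNReal.ofReal_prod_of_nonneg (fun j _ => by split <;> norm_num)]
      congr 1
      exact Finset.prod_congr rfl fun j _ => by split <;> simp
    simp_rw [hpt]
    have hg : Measurable fun x : Fin (n+1) → ℝ =>
        ENNReal.ofReal (F (fun i => if i = 0 then r else x i)) *
          ∏ j ∈ Finset.univ.erase (0 : Fin (n+1)), (if r < x j then (1:ℝ≥0∞) else 0) := by
      refine Measurable.mul ?_ ?_
      · refine Measurable.ennreal_ofReal (hFmeas.comp (measurable_pi_lambda _ fun i => ?_))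
        by_cases hi : i = 0
        · simp only [hi, if_true]; exact measurable_const
        · simp only [hi, if_false]; exact measurable_pi_apply i
      · refine Finset.measurable_prod _ fun j _ => ?_
        exact Measurable.ite (measurableSet_lt measurable_const (measurable_pi_apply j))
          measurable_const measurable_const
    have hstep : ∫⁻ ω, ENNReal.ofReal (F (fun i => if i = 0 then r else R i ω)) *
          ∏ j ∈ Finset.univ.erase (0 : Fin (n+1)), (if r < R j ω then (1:ℝ≥0∞) else 0) ∂μ
        = ∫⁻ x, ENNReal.ofReal (F (fun i => if i = 0 then r else x i)) *
          ∏ j ∈ Finset.univ.erase (0 : Fin (n+1)), (if r < x j then (1:ℝ≥0∞) else 0) ∂ν := by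
      rw [← hTlaw, lintegral_map hg hT]
    rw [hstep, Stmt17Aux.lintegral_pi_succ p _ hg]
    have hinner : ∀ r' : ℝ, (∫⁻ y, ENNReal.ofReal
            (F (fun i => if i = 0 then r else Fin.insertNth (α := fun _ : Fin (n+1) => ℝ) 0 r' y i)) *
          ∏ j ∈ Finset.univ.erase (0 : Fin (n+1)),
            (if r < Fin.insertNth (α := fun _ : Fin (n+1) => ℝ) 0 r' y j then (1:ℝ≥0∞) else 0) ∂π)
        = ∫⁻ y, F' (Fin.insertNth 0 r y) * ∏ j : Fin n, (if r < y j then (1:ℝ≥0∞) else 0) ∂π := by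
      intro r'
      refine lintegral_congr fun y => ?_
      rw [hsubst r r' y, Stmt17Aux.prod_erase_zero]
      first
      | rfl
      | (congr 1; exact Finset.prod_congr rfl fun j _ => by rw [Stmt17Aux.insertNth_zero_succ])
    rw [lintegral_congr hinner, lintegral_const, measure_univ, mul_one]
  -- symmetry of the min
  have hinf_comp : ∀ (σ : Equiv.Perm (Fin (n+1))) (x : Fin (n+1) → ℝ),
      (⨅ i, (x ∘ σ) i) = ⨅ i, x i := by
    intro σ x
    rw [iInf, iInf]
    congr 1
    exact Function.Surjective.range_comp σ.surjective x
  have hmin0 : ∀ x : Fin (n+1) → ℝ, chi 0 x ≠ 0 → (⨅ i, x i) = x 0 := by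
    intro x hx
    have hlt : ∀ j, j ≠ 0 → x 0 < x j := by
      intro j hj
      by_contra hcon
      exact hx (Finset.prod_eq_zero (Finset.mem_erase.mpr ⟨hj, Finset.mem_univ j⟩) (if_neg hcon))
    refine le_antisymm (ciInf_le (Set.Finite.bddBelow (Set.finite_range x)) 0) (le_ciInf fun i => ?_)
    by_cases hi : i = 0
    · subst hi; exact le_rfl
    · exact (hlt i hi).le
  have haeinj : ∀ᵐ x ∂ν, ∀ i j, i ≠ j → x i ≠ x j := by
    rw [MeasureTheory.ae_all_iff]
    intro i
    rw [MeasureTheory.ae_all_iff]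
    intro j
    by_cases hij : i = j
    · subst hij; filter_upwards with x hx using absurd rfl hx
    · rw [MeasureTheory.ae_iff]
      have hsub : {x : Fin (n+1) → ℝ | ¬ (i ≠ j → x i ≠ x j)} ⊆ {x | x i = x j} := by
        intro x hx
        by_contra hcon
        exact hx (fun _ => hcon)
      exact measure_mono_null hsub (Stmt17Aux.pi_coord_eq_null p hatom hij)
  -- exchangeability
  have hexch : ∀ (Φ : (Fin (n+1) → ℝ) → ℝ≥0∞), Measurable Φ →
      (∀ (σ : Equiv.Perm (Fin (n+1))) (x), Φ (x ∘ σ) = Φ x) →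
      ∫⁻ x, Φ x ∂ν = (n+1 : ℕ) * ∫⁻ x, Φ x * chi 0 x ∂ν := by
    intro Φ hΦm hΦs
    have h1 : ∫⁻ x, Φ x ∂ν = ∫⁻ x, ∑ i : Fin (n+1), Φ x * chi i x ∂ν := by
      refine lintegral_congr_ae ?_
      filter_upwards [haeinj] with x hx
      rw [← Finset.mul_sum]
      have hsum : ∑ i : Fin (n+1), chi i x = 1 := Stmt17Aux.sum_chi x hx
      rw [hsum, mul_one]
    rw [h1, lintegral_finset_sum _ (f := fun i x => Φ x * chi i x) (fun i _ => (hΦm.mul (hchimeas i)))]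
    have hterm : ∀ i : Fin (n+1), ∫⁻ x, Φ x * chi i x ∂ν = ∫⁻ x, Φ x * chi 0 x ∂ν := by
      intro i
      have hmp := Stmt17Aux.pi_comp_perm p (Equiv.swap (0 : Fin (n+1)) i)
      rw [← hmp.lintegral_comp (show Measurable (fun x => Φ x * chi i x) from hΦm.mul (hchimeas i))]
      refine lintegral_congr fun x => ?_
      rw [hΦs]
      congr 1
      -- chi i (x ∘ swap 0 i) = chi 0 x
      rw [hchir, hchir]
      have himg : (Finset.univ.erase (0 : Fin (n+1)))
          = (Finset.univ.erase i).image (Equiv.swap (0 : Fin (n+1)) i) := by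
        rw [Finset.image_erase (Equiv.injective _) Finset.univ i,
          Finset.image_univ_equiv, Equiv.swap_apply_right]
      rw [himg, Finset.prod_image (fun a _ b _ hab => (Equiv.injective _) hab)]
      refine Finset.prod_congr rfl fun j _ => ?_
      simp only [Function.comp_apply, Equiv.swap_apply_right]
    rw [Finset.sum_congr rfl (fun i _ => hterm i), Finset.sum_const, Finset.card_univ,
      Fintype.card_fin, nsmul_eq_mul]
  have hindmeas : ∀ t : Set ℝ, MeasurableSet t →
      Measurable (t.indicator (fun _ => (1:ℝ≥0∞))) :=
    fun t ht => measurable_const.indicator ht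
  have hminmeas : Measurable fun x : Fin (n+1) → ℝ => ⨅ i, x i :=
    Measurable.iInf fun i => measurable_pi_apply i
  -- F side
  have hF_side : ∀ t : Set ℝ, MeasurableSet t →
      ∫⁻ x, F' x * t.indicator (fun _ => (1:ℝ≥0∞)) (⨅ i, x i) ∂ν
        = (n+1 : ℕ) * ∫⁻ r, t.indicator (fun _ => (1:ℝ≥0∞)) r * ENNReal.ofReal (ψ r) ∂p := by
    intro t ht
    have hΦm : Measurable fun x : Fin (n+1) → ℝ =>
        F' x * t.indicator (fun _ => (1:ℝ≥0∞)) (⨅ i, x i) :=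
      hF'meas.mul ((hindmeas t ht).comp hminmeas)
    rw [hexch _ hΦm (fun σ x => by
      show ENNReal.ofReal (F (x ∘ σ)) * _ = _
      rw [hFsymm σ x, hinf_comp σ x])]
    congr 1
    have hrepl : ∀ x : Fin (n+1) → ℝ,
        (F' x * t.indicator (fun _ => (1:ℝ≥0∞)) (⨅ i, x i)) * chi 0 x
          = (F' x * t.indicator (fun _ => (1:ℝ≥0∞)) (x 0)) * chi 0 x := by
      intro x
      by_cases hx : chi 0 x = 0
      · rw [hx, mul_zero, mul_zero]
      · rw [hmin0 x hx]
    rw [lintegral_congr hrepl]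
    have hgm : Measurable fun x : Fin (n+1) → ℝ =>
        (F' x * t.indicator (fun _ => (1:ℝ≥0∞)) (x 0)) * chi 0 x :=
      (hF'meas.mul ((hindmeas t ht).comp (measurable_pi_apply 0))).mul (hchimeas 0)
    rw [Stmt17Aux.lintegral_pi_succ p _ hgm]
    refine lintegral_congr fun r => ?_
    have hpt : ∀ y : Fin n → ℝ,
        (F' (Fin.insertNth 0 r y) *
            t.indicator (fun _ => (1:ℝ≥0∞)) (Fin.insertNth (α := fun _ : Fin (n+1) => ℝ) 0 r y 0)) * chi 0 (Fin.insertNth 0 r y)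
        = t.indicator (fun _ => (1:ℝ≥0∞)) r *
            (F' (Fin.insertNth 0 r y) * ∏ j : Fin n, (if r < y j then (1:ℝ≥0∞) else 0)) := by
      intro y
      rw [Fin.insertNth_apply_same, hchi_insert]
      ring
    have hfm : Measurable fun y : Fin n → ℝ =>
        F' (Fin.insertNth 0 r y) * ∏ j : Fin n, (if r < y j then (1:ℝ≥0∞) else 0) :=
      ((hF'meas.comp hinsmeas).comp measurable_prodMk_left).mul
        (Finset.measurable_prod _ fun j _ => Measurable.ite
          (measurableSet_lt measurable_const (measurable_pi_apply j))
          measurable_const measurable_const)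
    rw [lintegral_congr hpt, lintegral_const_mul _ hfm, ← hpsi' r]
  -- h side
  have hh_side : ∀ t : Set ℝ, MeasurableSet t →
      ∫⁻ x, ENNReal.ofReal (h (⨅ i, x i)) * t.indicator (fun _ => (1:ℝ≥0∞)) (⨅ i, x i) ∂ν
        = (n+1 : ℕ) * ∫⁻ r, t.indicator (fun _ => (1:ℝ≥0∞)) r *
            (ENNReal.ofReal (h r) * p (Set.Ioi r) ^ n) ∂p := by
    intro t ht
    have hΦm : Measurable fun x : Fin (n+1) → ℝ =>
        ENNReal.ofReal (h (⨅ i, x i)) * t.indicator (fun _ => (1:ℝ≥0∞)) (⨅ i, x i) :=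
      ((hhmeas.comp hminmeas).ennreal_ofReal).mul ((hindmeas t ht).comp hminmeas)
    rw [hexch _ hΦm (fun σ x => by rw [hinf_comp σ x])]
    congr 1
    have hrepl : ∀ x : Fin (n+1) → ℝ,
        (ENNReal.ofReal (h (⨅ i, x i)) * t.indicator (fun _ => (1:ℝ≥0∞)) (⨅ i, x i)) * chi 0 x
          = (ENNReal.ofReal (h (x 0)) * t.indicator (fun _ => (1:ℝ≥0∞)) (x 0)) * chi 0 x := by
      intro x
      by_cases hx : chi 0 x = 0
      · rw [hx, mul_zero, mul_zero]
      · rw [hmin0 x hx]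
    rw [lintegral_congr hrepl]
    have hgm : Measurable fun x : Fin (n+1) → ℝ =>
        (ENNReal.ofReal (h (x 0)) * t.indicator (fun _ => (1:ℝ≥0∞)) (x 0)) * chi 0 x :=
      (((hhmeas.comp (measurable_pi_apply 0)).ennreal_ofReal).mul
        ((hindmeas t ht).comp (measurable_pi_apply 0))).mul (hchimeas 0)
    rw [Stmt17Aux.lintegral_pi_succ p _ hgm]
    refine lintegral_congr fun r => ?_
    have hpt : ∀ y : Fin n → ℝ,
        (ENNReal.ofReal (h (Fin.insertNth (α := fun _ : Fin (n+1) => ℝ) 0 r y 0)) *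
            t.indicator (fun _ => (1:ℝ≥0∞)) (Fin.insertNth (α := fun _ : Fin (n+1) => ℝ) 0 r y 0)) * chi 0 (Fin.insertNth 0 r y)
        = (t.indicator (fun _ => (1:ℝ≥0∞)) r * ENNReal.ofReal (h r)) *
            ∏ j : Fin n, (if r < y j then (1:ℝ≥0∞) else 0) := by
      intro y
      rw [Fin.insertNth_apply_same, hchi_insert]
      ring
    have hfm : Measurable fun y : Fin n → ℝ =>
        ∏ j : Fin n, (if r < y j then (1:ℝ≥0∞) else 0) :=
      Finset.measurable_prod _ fun j _ => Measurable.ite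
        (measurableSet_lt measurable_const (measurable_pi_apply j))
        measurable_const measurable_const
    rw [lintegral_congr hpt, lintegral_const_mul _ hfm, hWbox r, mul_assoc]
  -- a.e. positivity and the identity h' * G'^n = ofReal psi
  have hae_G : ∀ᵐ r ∂p, 0 < G r := by
    filter_upwards [Stmt17Aux.ae_tail_pos p hatom] with r hr
    rw [hGdef]
    exact ENNReal.toReal_pos hr.ne' (hfin r)
  have hae_hG : ∀ᵐ r ∂p,
      ENNReal.ofReal (h r) * p (Set.Ioi r) ^ n = ENNReal.ofReal (ψ r) := by
    filter_upwards [hae_G] with r hr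
    have hhrq : h r = ψ r / G r ^ n := by rw [hhr' r, if_pos hr]
    rw [hhrq, ← hofReal r, ← ENNReal.ofReal_pow (hGnonneg r),
      ← ENNReal.ofReal_mul (div_nonneg (hψnonneg r) (pow_nonneg (hGnonneg r) n)),
      div_mul_cancel₀ _ (pow_ne_zero n hr.ne')]
  -- key identity
  have hkey : ∀ t : Set ℝ, MeasurableSet t →
      ∫⁻ x, ENNReal.ofReal (h (⨅ i, x i)) * t.indicator (fun _ => (1:ℝ≥0∞)) (⨅ i, x i) ∂ν
        = ∫⁻ x, F' x * t.indicator (fun _ => (1:ℝ≥0∞)) (⨅ i, x i) ∂ν := by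
    intro t ht
    rw [hh_side t ht, hF_side t ht]
    congr 1
    refine lintegral_congr_ae ?_
    filter_upwards [hae_hG] with r hr
    rw [hr]
  -- bounds on psi and h
  have hψle : ∀ r, ψ r ≤ C * G r ^ n := by
    intro r
    have h1 : ENNReal.ofReal (ψ r) ≤ ENNReal.ofReal C * p (Set.Ioi r) ^ n := by
      rw [hpsi' r]
      have hfm : Measurable fun y : Fin n → ℝ =>
          ∏ j : Fin n, (if r < y j then (1:ℝ≥0∞) else 0) :=
        Finset.measurable_prod _ fun j _ => Measurable.ite
          (measurableSet_lt measurable_const (measurable_pi_apply j))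
          measurable_const measurable_const
      calc ∫⁻ y, F' (Fin.insertNth 0 r y) * ∏ j : Fin n, (if r < y j then (1:ℝ≥0∞) else 0) ∂π
          ≤ ∫⁻ y, ENNReal.ofReal C * ∏ j : Fin n, (if r < y j then (1:ℝ≥0∞) else 0) ∂π := by
            refine lintegral_mono fun y => ?_
            exact mul_le_mul_left (ENNReal.ofReal_le_ofReal (hC _)) _
        _ = ENNReal.ofReal C * p (Set.Ioi r) ^ n := by
            rw [lintegral_const_mul _ hfm, hWbox r]
    have hfin2 : ENNReal.ofReal C * p (Set.Ioi r) ^ n ≠ ∞ :=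
      ENNReal.mul_ne_top ENNReal.ofReal_ne_top (ENNReal.pow_ne_top (hfin r))
    have h2 := ENNReal.toReal_mono hfin2 h1
    rw [ENNReal.toReal_ofReal (hψnonneg r), ENNReal.toReal_mul, ENNReal.toReal_pow,
      ENNReal.toReal_ofReal hCnonneg, ← hGdef r] at h2
    exact h2
  have hhle : ∀ r, h r ≤ C := by
    intro r
    rw [hhr' r]
    split
    · rename_i hr
      rw [div_le_iff₀ (pow_pos hr n)]
      exact hψle r
    · exact hCnonneg
  -- conditional expectation machinery
  set minT : Ω → ℝ := fun ω => ⨅ i, R i ω with hminTdef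
  have hminTmeas : Measurable minT := Measurable.iInf fun i => hRmeas i
  have hle : MeasurableSpace.comap minT (inferInstance : MeasurableSpace ℝ)
      ≤ (inferInstance : MeasurableSpace Ω) := hminTmeas.comap_le
  haveI : SigmaFinite (μ.trim hle) := by
    have hfin' : IsFiniteMeasure (μ.trim hle) := by
      constructor
      rw [trim_measurableSet_eq hle MeasurableSet.univ]
      exact measure_lt_top μ _
    infer_instance
  have hfint : Integrable (fun ω => F (fun i => R i ω)) μ := by
    refine Integrable.mono' (integrable_const C) ((hFmeas.comp hT).aestronglyMeasurable) ?_
    exact Filter.Eventually.of_forall fun ω => by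
      rw [Real.norm_of_nonneg (hFnonneg _)]; exact hC _
  have hgint : Integrable (fun ω => h (minT ω)) μ := by
    refine Integrable.mono' (integrable_const C)
      ((hhmeas.comp hminTmeas).aestronglyMeasurable) ?_
    exact Filter.Eventually.of_forall fun ω => by
      rw [Real.norm_of_nonneg (hhnonneg _)]; exact hhle _
  refine (ae_eq_condExp_of_forall_setIntegral_eq hle hfint
    (fun s _ _ => hgint.integrableOn) ?_ ?_).symm
  · -- the set integral equality
    rintro s ⟨t, ht, rfl⟩ -
    have h1 : ∫ x in minT ⁻¹' t, h (minT x) ∂μ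
        = (∫⁻ x in minT ⁻¹' t, ENNReal.ofReal (h (minT x)) ∂μ).toReal := by
      rw [integral_eq_lintegral_of_nonneg_ae (Filter.Eventually.of_forall fun ω => hhnonneg _)
        ((hhmeas.comp hminTmeas).aestronglyMeasurable.restrict)]
    have h2 : ∫ x in minT ⁻¹' t, F (fun i => R i x) ∂μ
        = (∫⁻ x in minT ⁻¹' t, ENNReal.ofReal (F (fun i => R i x)) ∂μ).toReal := by
      rw [integral_eq_lintegral_of_nonneg_ae (Filter.Eventually.of_forall fun ω => hFnonneg _)
        ((hFmeas.comp hT).aestronglyMeasurable.restrict)]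
    rw [h1, h2]
    congr 1
    -- move to the product space
    have hk_h : Measurable fun x : Fin (n+1) → ℝ => ENNReal.ofReal (h (⨅ i, x i)) :=
      (hhmeas.comp hminmeas).ennreal_ofReal
    have e1 : ∫⁻ x in minT ⁻¹' t, ENNReal.ofReal (h (minT x)) ∂μ
        = ∫⁻ x in (fun x : Fin (n+1) → ℝ => ⨅ i, x i) ⁻¹' t,
            ENNReal.ofReal (h (⨅ i, x i)) ∂ν := by
      rw [← hTlaw, setLIntegral_map (hminmeas ht) hk_h hT]
      rfl
    have e2 : ∫⁻ x in minT ⁻¹' t, ENNReal.ofReal (F (fun i => R i x)) ∂μ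
        = ∫⁻ x in (fun x : Fin (n+1) → ℝ => ⨅ i, x i) ⁻¹' t, F' x ∂ν := by
      rw [← hTlaw, setLIntegral_map (hminmeas ht) hF'meas hT]
      rfl
    have e3 : ∀ (k : (Fin (n+1) → ℝ) → ℝ≥0∞), Measurable k →
        ∫⁻ x in (fun x : Fin (n+1) → ℝ => ⨅ i, x i) ⁻¹' t, k x ∂ν
          = ∫⁻ x, k x * t.indicator (fun _ => (1:ℝ≥0∞)) (⨅ i, x i) ∂ν := by
      intro k hk
      rw [← lintegral_indicator (hminmeas ht)]
      refine lintegral_congr fun x => ?_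
      by_cases hx : (⨅ i, x i) ∈ t
      · rw [Set.indicator_of_mem (by exact hx), Set.indicator_of_mem hx, mul_one]
      · rw [Set.indicator_of_notMem (by exact hx), Set.indicator_of_notMem hx, mul_zero]
    rw [e1, e2, e3 _ hk_h, e3 _ hF'meas]
    exact hkey t ht
  · -- strong measurability w.r.t. the comap σ-algebra
    refine StronglyMeasurable.aestronglyMeasurable ?_
    refine Measurable.stronglyMeasurable ?_
    exact hhmeas.comp (Measurable.of_comap_le le_rfl)
end

section
/- Let λ > 0, Γ > 0, α > 2, let M be a positive integer, and let R₀ ≥ 0. Set H(k) = ∫_{1}^{∞} (1 − (1 + Γ/r^α)^{−k}) r dr for integers k ≥ 0 and f_j(r) = ∑_{k=0}^{j} (−1)^k binom(j,k) · exp(−2πλ r² H(k)/M) for integers j ≥ 0 and r ≥ 0. Then for every integer j ≥ 0: (i) ∫_{R₀}^{∞} f_j(r) · (2λπ r/M) · exp(−λπ r²/M) dr = ∑_{k=0}^{j} (−1)^k binom(j,k) · exp(−(λπ/M)(1 + 2H(k)) R₀²) / (1 + 2H(k)); and consequently (ii) f_j(R₀) · ( ∫_{R₀}^{∞} f_j(r)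 (2λπ r/M) exp(−λπ r²/M) dr )^{M−1} · exp(λπ(M−1)R₀²/M) = [ ∑_{k=0}^{j} (−1)^k binom(j,k) exp(−2πλ R₀² H(k)/M) ] · [ ∑_{k=0}^{j} (−1)^k binom(j,k) exp(−2πλ R₀² H(k)/M) / (1 + 2H(k)) ]^{M−1}. -/
open MeasureTheory
open scoped Real

lemma aux_key_s18 (c R : ℝ) (hc : 0 < c) (hR : 0 ≤ R) :
    IntegrableOn (fun r : ℝ => r * Real.exp (-(c * r ^ 2))) (Set.Ioi R) ∧
    ∫ r in Set.Ioi R, r * Real.exp (-(c * r ^ 2)) = Real.exp (-(c * R ^ 2)) / (2 * c) := by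
  have hderiv : ∀ x : ℝ, HasDerivAt (fun r => -(Real.exp (-(c * r ^ 2)) / (2 * c)))
      (x * Real.exp (-(c * x ^ 2))) x := by
    intro x
    have h1 : HasDerivAt (fun r : ℝ => -(c * r ^ 2)) (-(c * (2 * x))) x := by
      have := ((hasDerivAt_pow 2 x).const_mul c).fun_neg
      simpa [mul_comm, mul_assoc] using this
    have h2 := (h1.exp.div_const (2 * c)).fun_neg
    refine h2.congr_deriv ?_
    have hc0 : c ≠ 0 := ne_of_gt hc
    field_simp
  have hpos : ∀ x ∈ Set.Ioi R, 0 ≤ x * Real.exp (-(c * x ^ 2)) := by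
    intro x hx
    have : 0 ≤ x := le_trans hR (le_of_lt hx)
    positivity
  have hcont : ContinuousOn (fun r => -(Real.exp (-(c * r ^ 2)) / (2 * c))) (Set.Ici R) := by
    fun_prop
  have htend : Filter.Tendsto (fun r => -(Real.exp (-(c * r ^ 2)) / (2 * c)))
      Filter.atTop (nhds 0) := by
    have h1 : Filter.Tendsto (fun r : ℝ => c * r ^ 2) Filter.atTop Filter.atTop :=
      (Filter.tendsto_pow_atTop (by norm_num)).const_mul_atTop hc
    have h2 : Filter.Tendsto (fun r : ℝ => -(c * r ^ 2)) Filter.atTop Filter.atBot :=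
      Filter.tendsto_neg_atTop_atBot.comp h1
    have h3 := (Real.tendsto_exp_atBot.comp h2).div_const (2 * c)
    simpa using h3.neg
  constructor
  · exact integrableOn_Ioi_deriv_of_nonneg (hcont R Set.self_mem_Ici)
      (fun x _ => hderiv x) hpos htend
  · have := integral_Ioi_of_hasDerivAt_of_nonneg (hcont R Set.self_mem_Ici)
      (fun x _ => hderiv x) hpos htend
    rw [this]; ring

/-- Corollary 3: the explicit form of the conditional mean number of IA cycles given the
nearest-BS distance `R₀` in the interference-limited network: (i) the sector integral of
`f_j` against the nearest-BS density, and consequently (ii) the summand of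
`L_cs(R₀, M, λ)`. -/
theorem stmt18 (lam gam α : ℝ) (M : ℕ) (R₀ : ℝ)
    (hlam : 0 < lam) (hgam : 0 < gam) (hα : 2 < α) (hM : 0 < M) (hR₀ : 0 ≤ R₀)
    (H : ℕ → ℝ)
    (hH : ∀ k : ℕ, H k = ∫ r in Set.Ioi (1:ℝ), (1 - ((1 + gam / r ^ α) ^ k)⁻¹) * r)
    (f : ℕ → ℝ → ℝ)
    (hf : ∀ (j : ℕ) (r : ℝ), f j r =
      ∑ k ∈ Finset.range (j + 1), (-1 : ℝ) ^ k * (j.choose k) *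
        Real.exp (-(2 * π * lam * r ^ 2 * H k / M))) :
    ∀ j : ℕ,
      (∫ r in Set.Ioi R₀, f j r * (2 * lam * π * r / M) * Real.exp (-(lam * π * r ^ 2 / M))
          = ∑ k ∈ Finset.range (j + 1), (-1 : ℝ) ^ k * (j.choose k) *
              Real.exp (-(lam * π / M) * (1 + 2 * H k) * R₀ ^ 2) / (1 + 2 * H k)) ∧
      (f j R₀ *
          (∫ r in Set.Ioi R₀,
            f j r * (2 * lam * π * r / M) * Real.exp (-(lam * π * r ^ 2 / M))) ^ (M - 1) *
          Real.exp (lam * π * (M - 1) * R₀ ^ 2 / M)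
        = (∑ k ∈ Finset.range (j + 1), (-1 : ℝ) ^ k * (j.choose k) *
            Real.exp (-(2 * π * lam * R₀ ^ 2 * H k / M))) *
          (∑ k ∈ Finset.range (j + 1), (-1 : ℝ) ^ k * (j.choose k) *
            Real.exp (-(2 * π * lam * R₀ ^ 2 * H k / M)) / (1 + 2 * H k)) ^ (M - 1)) := by
  have hM0 : (0:ℝ) < M := by exact_mod_cast hM
  have hMne : (M:ℝ) ≠ 0 := ne_of_gt hM0
  have hHnn : ∀ k : ℕ, 0 ≤ H k := by
    intro k
    rw [hH k]
    apply setIntegral_nonneg measurableSet_Ioi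
    intro r hr
    have hr1 : (1:ℝ) < r := hr
    have hrp : (0:ℝ) < r ^ α := Real.rpow_pos_of_pos (by linarith) α
    have hb : (1:ℝ) ≤ 1 + gam / r ^ α := by
      have : 0 ≤ gam / r ^ α := by positivity
      linarith
    have h1 : (1:ℝ) ≤ (1 + gam / r ^ α) ^ k := one_le_pow₀ hb
    have h2 : ((1 + gam / r ^ α) ^ k)⁻¹ ≤ 1 := inv_le_one_of_one_le₀ h1
    have : 0 ≤ r := by linarith
    nlinarith
  have hck : ∀ k : ℕ, 0 < lam * π * (1 + 2 * H k) / M := by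
    intro k
    have h1 : (0:ℝ) < 1 + 2 * H k := by linarith [hHnn k]
    have := Real.pi_pos
    positivity
  have part1 : ∀ j : ℕ,
      ∫ r in Set.Ioi R₀, f j r * (2 * lam * π * r / M) * Real.exp (-(lam * π * r ^ 2 / M))
        = ∑ k ∈ Finset.range (j + 1), (-1 : ℝ) ^ k * (j.choose k) *
            Real.exp (-(lam * π / M) * (1 + 2 * H k) * R₀ ^ 2) / (1 + 2 * H k) := by
    intro j
    have hfun : ∀ r : ℝ, f j r * (2 * lam * π * r / M) * Real.exp (-(lam * π * r ^ 2 / M))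
        = ∑ k ∈ Finset.range (j + 1), ((-1 : ℝ) ^ k * (j.choose k) * (2 * lam * π / M)) *
            (r * Real.exp (-((lam * π * (1 + 2 * H k) / M) * r ^ 2))) := by
      intro r
      rw [hf, Finset.sum_mul, Finset.sum_mul]
      refine Finset.sum_congr rfl fun k _ => ?_
      have he : Real.exp (-(2 * π * lam * r ^ 2 * H k / M)) * Real.exp (-(lam * π * r ^ 2 / M))
          = Real.exp (-((lam * π * (1 + 2 * H k) / M) * r ^ 2)) := by
        rw [← Real.exp_add]; congr 1; ring
      calc (-1 : ℝ) ^ k * (j.choose k) * Real.exp (-(2 * π * lam * r ^ 2 * H k / M)) *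
            (2 * lam * π * r / M) * Real.exp (-(lam * π * r ^ 2 / M))
          = ((-1 : ℝ) ^ k * (j.choose k) * (2 * lam * π / M)) * r *
            (Real.exp (-(2 * π * lam * r ^ 2 * H k / M)) *
              Real.exp (-(lam * π * r ^ 2 / M))) := by ring
        _ = _ := by rw [he]; ring
    simp_rw [hfun]
    rw [MeasureTheory.integral_finset_sum _
      (fun k _ => ((aux_key_s18 _ _ (hck k) hR₀).1.const_mul _))]
    refine Finset.sum_congr rfl fun k _ => ?_
    rw [MeasureTheory.integral_const_mul, (aux_key_s18 _ _ (hck k) hR₀).2]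
    have h1 : (0:ℝ) < 1 + 2 * H k := by linarith [hHnn k]
    have harg : -(lam * π * (1 + 2 * H k) / M * R₀ ^ 2)
        = -(lam * π / M) * (1 + 2 * H k) * R₀ ^ 2 := by ring
    rw [harg]
    have hpi := Real.pi_ne_zero
    field_simp
  intro j
  refine ⟨part1 j, ?_⟩
  rw [part1 j, hf]
  have hMcast : ((M - 1 : ℕ) : ℝ) = (M : ℝ) - 1 := by
    rw [Nat.cast_sub hM]; simp
  have harg : lam * π * ((M:ℝ) - 1) * R₀ ^ 2 / M
      = ((M - 1 : ℕ) : ℝ) * (lam * π * R₀ ^ 2 / M) := by rw [hMcast]; ring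
  rw [harg, Real.exp_nat_mul, mul_assoc, ← mul_pow]
  congr 2
  rw [Finset.sum_mul]
  refine Finset.sum_congr rfl fun k _ => ?_
  have he : Real.exp (-(lam * π / M) * (1 + 2 * H k) * R₀ ^ 2) *
      Real.exp (lam * π * R₀ ^ 2 / M)
      = Real.exp (-(2 * π * lam * R₀ ^ 2 * H k / M)) := by
    rw [← Real.exp_add]; congr 1; ring
  calc (-1 : ℝ) ^ k * (j.choose k) *
        Real.exp (-(lam * π / M) * (1 + 2 * H k) * R₀ ^ 2) / (1 + 2 * H k) *
        Real.exp (lam * π * R₀ ^ 2 / M)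
      = (-1 : ℝ) ^ k * (j.choose k) *
        (Real.exp (-(lam * π / M) * (1 + 2 * H k) * R₀ ^ 2) *
          Real.exp (lam * π * R₀ ^ 2 / M)) / (1 + 2 * H k) := by ring
    _ = _ := by rw [he]
end
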